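/- arXiv:2512.14199 — 6 statements merged into one kernel-verified Lean document; each statement's English description precedes it below -/
import Mathlib

section
/- The parking function polytope PF(u) equals the convex hull of the finite set X(u) of u-extreme points; in particular, PF(u) (defined as the convex hull of the infinite set of all u-parking functions) is a polytope. -/
noncomputable section

/-- `a` is a `u`-parking function: all coordinates are nonnegative and some
nondecreasing rearrangement `b` of `a` satisfies `b i ≤ u i` for all `i`. -/
def IsParkingFunction (n : ℕ) (u a : Fin n → ℝ) : Prop :=
  (∀ i, 0 ≤ a i) ∧
    ∃ σ : Equiv.Perm (Fin n), Monotone (fun i => a (σ i)) ∧ ∀ i, a (σ i) ≤ u i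

/-- The parking function polytope: the convex hull of all `u`-parking functions. -/
def PF (n : ℕ) (u : Fin n → ℝ) : Set (Fin n → ℝ) :=
  convexHull ℝ {a | IsParkingFunction n u a}

/-- `v` is `u`-extreme: it is a coordinate permutation of
`(0, …, 0, u (k+1), …, u n)` for some `0 ≤ k ≤ n`. -/
def IsUExtreme (n : ℕ) (u v : Fin n → ℝ) : Prop :=
  ∃ k ≤ n, ∃ σ : Equiv.Perm (Fin n),
    ∀ i, v i = if (σ i : ℕ) < k then 0 else u (σ i)

/-- The set of all `u`-extreme points. -/
def Xext (n : ℕ) (u : Fin n → ℝ) : Set (Fin n → ℝ) := {v | IsUExtreme n u v}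

namespace ParkingAux

open Finset

variable {n : ℕ} {u : Fin n → ℝ}

/-- The counting function: number of coordinates of `a` strictly above `t`. -/
def cnt (u : Fin n → ℝ) (t : ℝ) : ℕ := (Finset.univ.filter fun l => t < u l).card

/-- number of coordinates of `a` strictly above `u j`. -/
def cntA (u a : Fin n → ℝ) (j : Fin n) : ℕ := (Finset.univ.filter fun m => u j < a m).card

lemma counts_of_park (hmono : Monotone u) {a : Fin n → ℝ}
    (h : IsParkingFunction n u a) : ∀ j : Fin n, cntA u a j + (j : ℕ) < n := by
  obtain ⟨h0, σ, hbm, hble⟩ := h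
  intro j
  set F := Finset.univ.filter fun m => u j < a m with hF
  set T := (Finset.Iic j).image σ with hT
  have hdisj : Disjoint F T := by
    rw [Finset.disjoint_left]
    intro m hmF hmT
    rw [hT, Finset.mem_image] at hmT
    obtain ⟨l, hl, rfl⟩ := hmT
    rw [Finset.mem_Iic] at hl
    have : a (σ l) ≤ u j := (hble l).trans (hmono hl)
    rw [hF, Finset.mem_filter] at hmF
    exact absurd hmF.2 (not_lt.2 this)
  have hcardT : T.card = (j : ℕ) + 1 := by
    rw [hT, Finset.card_image_of_injective _ σ.injective, Fin.card_Iic]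
  have hle : F.card + T.card ≤ Fintype.card (Fin n) :=
    Finset.card_union_of_disjoint hdisj ▸ Finset.card_le_univ (F ∪ T)
  rw [Fintype.card_fin] at hle
  rw [cntA, ← hF]
  omega

lemma park_of_counts {a : Fin n → ℝ} (h0 : ∀ i, 0 ≤ a i)
    (hc : ∀ j : Fin n, cntA u a j + (j : ℕ) < n) : IsParkingFunction n u a := by
  refine ⟨h0, Tuple.sort a, Tuple.monotone_sort a, ?_⟩
  intro j
  by_contra hlt
  push_neg at hlt
  have hmono := Tuple.monotone_sort a
  set F := Finset.univ.filter fun m => u j < a m with hF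
  have hsub : (Finset.Ici j).image (Tuple.sort a) ⊆ F := by
    intro m hm
    rw [Finset.mem_image] at hm
    obtain ⟨l, hl, rfl⟩ := hm
    rw [Finset.mem_Ici] at hl
    have : a (Tuple.sort a j) ≤ a (Tuple.sort a l) := hmono hl
    rw [hF, Finset.mem_filter]
    exact ⟨Finset.mem_univ _, lt_of_lt_of_le hlt this⟩
  have hcard : n - (j : ℕ) ≤ F.card := by
    calc n - (j : ℕ) = (Finset.Ici j).card := (Fin.card_Ici j).symm
    _ = ((Finset.Ici j).image (Tuple.sort a)).card :=
        (Finset.card_image_of_injective _ (Tuple.sort a).injective).symm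
    _ ≤ F.card := Finset.card_le_card hsub
  have hcj := hc j
  rw [cntA, ← hF] at hcj
  have hj : (j : ℕ) < n := j.2
  omega

lemma xext_subset_park (hmono : Monotone u) (hnonneg : ∀ i, 0 ≤ u i) :
    Xext n u ⊆ {a | IsParkingFunction n u a} := by
  rintro v ⟨k, hk, σ, hv⟩
  constructor
  · intro i
    rw [hv i]
    split
    · exact le_rfl
    · exact hnonneg _
  · refine ⟨σ.symm, ?_, ?_⟩
    · intro j₁ j₂ hj
      simp only [hv, Equiv.apply_symm_apply]
      split <;> split
      · exact le_refl 0
      · exact hnonneg _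
      · rename_i h1 h2
        exfalso
        have : (j₁ : ℕ) ≤ (j₂ : ℕ) := hj
        omega
      · exact hmono hj
    · intro i
      rw [hv, Equiv.apply_symm_apply]
      split
      · exact hnonneg _
      · exact le_refl _

lemma xext_finite (u : Fin n → ℝ) : (Xext n u).Finite := by
  have hsub : Xext n u ⊆ Set.range (fun p : Fin (n + 1) × Equiv.Perm (Fin n) =>
      fun i => if ((p.2 i : ℕ) < (p.1 : ℕ)) then (0 : ℝ) else u (p.2 i)) := by
    rintro v ⟨k, hk, σ, hv⟩
    exact ⟨(⟨k, by omega⟩, σ), by funext i; exact (hv i).symm⟩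
  exact (Set.finite_range _).subset hsub

/-- The measure for the strong induction. -/
def meas (u a : Fin n → ℝ) : ℕ :=
  (Finset.univ.filter fun j => a j ≠ 0).card * (n * n + 1) + ∑ j, cnt u (a j)

lemma sum_cnt_le (u f : Fin n → ℝ) : (∑ j, cnt u (f j)) ≤ n * n := by
  calc (∑ j, cnt u (f j)) ≤ ∑ _j : Fin n, n := by
        refine Finset.sum_le_sum fun j _ => ?_
        calc cnt u (f j) ≤ Finset.univ.card := Finset.card_filter_le _ _
        _ = n := by rw [Finset.card_univ, Fintype.card_fin]
  _ = n * n := by simp [Finset.sum_const, Finset.card_univ]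

lemma park_mem_convexHull (hmono : Monotone u) (hnonneg : ∀ i, 0 ≤ u i) :
    ∀ (a : Fin n → ℝ), IsParkingFunction n u a → a ∈ convexHull ℝ (Xext n u) := by
  suffices H : ∀ (N : ℕ) (a : Fin n → ℝ), meas u a < N →
      IsParkingFunction n u a → a ∈ convexHull ℝ (Xext n u) by
    intro a ha
    exact H (meas u a + 1) a (Nat.lt_succ_self _) ha
  intro N
  induction N with
  | zero => intro a h; omega
  | succ N ih =>
    intro a hameas ha
    obtain ⟨h0, σ, hbm, hble⟩ := ha
    set b : Fin n → ℝ := fun j => a (σ j) with hbdef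
    have hb0 : ∀ j, 0 ≤ b j := fun j => h0 (σ j)
    by_cases hcase : ∀ j, b j = 0 ∨ b j = u j
    · -- a is itself u-extreme
      apply subset_convexHull
      set k := (Finset.univ.filter fun j => b j = 0).card with hkdef
      have hjk : ∀ j : Fin n, ((j : ℕ) < k ↔ b j = 0) := by
        intro j
        constructor
        · intro hj
          by_contra hbj
          have hsub : (Finset.univ.filter fun l => b l = 0) ⊆ Finset.Iio j := by
            intro l hl
            rw [Finset.mem_filter] at hl
            rw [Finset.mem_Iio]
            by_contra hlj
            have : j ≤ l := le_of_not_gt hlj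
            have : b j ≤ b l := hbm this
            exact hbj (le_antisymm (hl.2 ▸ this) (hb0 j))
          have := Finset.card_le_card hsub
          rw [Fin.card_Iio] at this
          omega
        · intro hbj
          have hsub : Finset.Iic j ⊆ (Finset.univ.filter fun l => b l = 0) := by
            intro l hl
            rw [Finset.mem_Iic] at hl
            rw [Finset.mem_filter]
            exact ⟨Finset.mem_univ _, le_antisymm (hbj ▸ hbm hl) (hb0 l)⟩
          have := Finset.card_le_card hsub
          rw [Fin.card_Iic] at this
          omega
      refine ⟨k, ?_, σ.symm, ?_⟩
      · calc k ≤ Finset.univ.card := Finset.card_filter_le _ _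
        _ = n := by rw [Finset.card_univ, Fintype.card_fin]
      · intro i
        have hai : a i = b (σ.symm i) := by
          rw [hbdef]; simp
        rw [hai]
        split
        · exact (hjk _).1 ‹_›
        · rcases hcase (σ.symm i) with h | h
          · exact absurd ((hjk _).2 h) ‹_›
          · exact h
    · -- there is an interior coordinate; perturb it
      push_neg at hcase
      obtain ⟨i, hbi0, hbiu⟩ := hcase
      set v := b i with hvdef
      have hv0 : 0 < v := lt_of_le_of_ne (hb0 i) (Ne.symm hbi0)
      have hvu : v < u i := lt_of_le_of_ne (hble i) hbiu
      have hQne : (Finset.univ.filter fun j => b j = v).Nonempty := ⟨i, by simp [hvdef]⟩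
      set q := (Finset.univ.filter fun j => b j = v).max' hQne with hqdef
      have hbq : b q = v :=
        (Finset.mem_filter.1 (Finset.max'_mem _ hQne)).2
      have hiq : i ≤ q := Finset.le_max' _ i (by simp [hvdef])
      have hvq : v < u q := hvu.trans_le (hmono hiq)
      have hu0 : 0 < u q := hv0.trans hvq
      have haσq : a (σ q) = v := hbq
      set x := Function.update a (σ q) (u q) with hxdef
      set y := Function.update a (σ q) (0 : ℝ) with hydef
      -- x is a parking function
      have hx0 : ∀ m, 0 ≤ x m := by
        intro m
        by_cases hm : m = σ q
        · rw [hxdef, hm, Function.update_self]; exact hnonneg q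
        · rw [hxdef, Function.update_of_ne hm]; exact h0 m
      have hy0 : ∀ m, 0 ≤ y m := by
        intro m
        by_cases hm : m = σ q
        · rw [hydef, hm, Function.update_self]
        · rw [hydef, Function.update_of_ne hm]; exact h0 m
      have hcnta : ∀ j : Fin n, cntA u a j + (j : ℕ) < n :=
        counts_of_park hmono ⟨h0, σ, hbm, hble⟩
      have hxpark : IsParkingFunction n u x := by
        refine park_of_counts hx0 ?_
        intro j
        by_cases hlt : u j < v
        · -- σ q was already counted
          have hsub : (Finset.univ.filter fun m => u j < x m) ⊆
              (Finset.univ.filter fun m => u j < a m) := by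
            intro m hm
            rw [Finset.mem_filter] at hm ⊢
            by_cases hmq : m = σ q
            · exact ⟨Finset.mem_univ _, hmq ▸ (haσq ▸ hlt : u j < a (σ q))⟩
            · rw [hxdef, Function.update_of_ne hmq] at hm
              exact ⟨Finset.mem_univ _, hm.2⟩
          have := Finset.card_le_card hsub
          have := hcnta j
          rw [cntA] at *
          omega
        · push_neg at hlt
          by_cases hjq : u q ≤ u j
          · have hsub : (Finset.univ.filter fun m => u j < x m) ⊆
                (Finset.univ.filter fun m => u j < a m) := by
              intro m hm
              rw [Finset.mem_filter] at hm ⊢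
              by_cases hmq : m = σ q
              · rw [hxdef, hmq, Function.update_self] at hm
                exact absurd hm.2 (not_lt.2 hjq)
              · rw [hxdef, Function.update_of_ne hmq] at hm
                exact ⟨Finset.mem_univ _, hm.2⟩
            have := Finset.card_le_card hsub
            have := hcnta j
            rw [cntA] at *
            omega
          · push_neg at hjq
            have hjq' : j < q := by
              by_contra hqj
              exact absurd (hmono (le_of_not_gt hqj)) (not_le.2 hjq)
            -- strong bound on the count for a
            set Fa := Finset.univ.filter fun m => u j < a m with hFa
            set T := (insert q (Finset.Iic j)).image σ with hT
            have hqIic : q ∉ Finset.Iic j := by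
              rw [Finset.mem_Iic]
              exact not_le.2 hjq'
            have hcardT : T.card = (j : ℕ) + 2 := by
              rw [hT, Finset.card_image_of_injective _ σ.injective,
                Finset.card_insert_of_notMem hqIic, Fin.card_Iic]
            have hdisj : Disjoint Fa T := by
              rw [Finset.disjoint_left]
              intro m hmF hmT
              rw [hT, Finset.mem_image] at hmT
              obtain ⟨l, hl, rfl⟩ := hmT
              rw [hFa, Finset.mem_filter] at hmF
              rcases Finset.mem_insert.1 hl with rfl | hl
              · rw [haσq] at hmF
                exact absurd hmF.2 (not_lt.2 hlt)
              · rw [Finset.mem_Iic] at hl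
                exact absurd hmF.2 (not_lt.2 ((hble l).trans (hmono hl)))
            have hbound : Fa.card + ((j : ℕ) + 2) ≤ n := by
              have := Finset.card_union_of_disjoint hdisj ▸ Finset.card_le_univ (Fa ∪ T)
              rw [Fintype.card_fin] at this
              omega
            have hsub : (Finset.univ.filter fun m => u j < x m) ⊆ insert (σ q) Fa := by
              intro m hm
              rw [Finset.mem_filter] at hm
              by_cases hmq : m = σ q
              · exact Finset.mem_insert.2 (Or.inl hmq)
              · rw [hxdef, Function.update_of_ne hmq] at hm
                refine Finset.mem_insert.2 (Or.inr ?_)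
                rw [hFa, Finset.mem_filter]
                exact ⟨Finset.mem_univ _, hm.2⟩
            have := (Finset.card_le_card hsub).trans (Finset.card_insert_le _ _)
            rw [cntA]
            omega
      have hypark : IsParkingFunction n u y := by
        refine park_of_counts hy0 ?_
        intro j
        have hsub : (Finset.univ.filter fun m => u j < y m) ⊆
            (Finset.univ.filter fun m => u j < a m) := by
          intro m hm
          rw [Finset.mem_filter] at hm ⊢
          by_cases hmq : m = σ q
          · rw [hydef, hmq, Function.update_self] at hm
            exact absurd hm.2 (not_lt.2 (hnonneg j))
          · rw [hydef, Function.update_of_ne hmq] at hm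
            exact ⟨Finset.mem_univ _, hm.2⟩
        have := Finset.card_le_card hsub
        have := hcnta j
        rw [cntA] at *
        omega
      -- measure decrease for x
      have hxmeas : meas u x < meas u a := by
        have hA1 : (Finset.univ.filter fun m => x m ≠ 0) =
            (Finset.univ.filter fun m => a m ≠ 0) := by
          ext m
          rw [Finset.mem_filter, Finset.mem_filter]
          by_cases hmq : m = σ q
          · subst hmq
            rw [hxdef, Function.update_self, haσq]
            constructor
            · intro _; exact ⟨Finset.mem_univ _, ne_of_gt hv0⟩
            · intro _; exact ⟨Finset.mem_univ _, ne_of_gt hu0⟩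
          · rw [hxdef, Function.update_of_ne hmq]
        have hsum : (∑ j, cnt u (x j)) < ∑ j, cnt u (a j) := by
          refine Finset.sum_lt_sum (fun m _ => ?_) ⟨σ q, Finset.mem_univ _, ?_⟩
          · by_cases hmq : m = σ q
            · subst hmq
              rw [hxdef, Function.update_self, haσq]
              refine Finset.card_le_card ?_
              intro l hl
              rw [Finset.mem_filter] at hl ⊢
              exact ⟨Finset.mem_univ _, hvq.trans hl.2⟩
            · rw [hxdef, Function.update_of_ne hmq]
          · rw [hxdef, Function.update_self, haσq]
            refine Finset.card_lt_card ?_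
            rw [Finset.ssubset_iff_of_subset ?_]
            · exact ⟨q, Finset.mem_filter.2 ⟨Finset.mem_univ _, hvq⟩,
                fun hc => absurd (Finset.mem_filter.1 hc).2 (lt_irrefl _)⟩
            · intro l hl
              rw [Finset.mem_filter] at hl ⊢
              exact ⟨Finset.mem_univ _, hvq.trans hl.2⟩
        rw [meas, meas, hA1]
        omega
      -- measure decrease for y
      have hymeas : meas u y < meas u a := by
        have hA1 : (Finset.univ.filter fun m => y m ≠ 0).card <
            (Finset.univ.filter fun m => a m ≠ 0).card := by
          refine Finset.card_lt_card ?_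
          rw [Finset.ssubset_iff_of_subset ?_]
          · refine ⟨σ q, Finset.mem_filter.2 ⟨Finset.mem_univ _, haσq ▸ ne_of_gt hv0⟩, ?_⟩
            intro hc
            rw [Finset.mem_filter, hydef, Function.update_self] at hc
            exact hc.2 rfl
          · intro m hm
            rw [Finset.mem_filter] at hm ⊢
            by_cases hmq : m = σ q
            · rw [hydef, hmq, Function.update_self] at hm
              exact absurd rfl hm.2
            · rw [hydef, Function.update_of_ne hmq] at hm
              exact ⟨Finset.mem_univ _, hm.2⟩
        rw [meas, meas]
        set A1y := (Finset.univ.filter fun m => y m ≠ 0).card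
        set A1a := (Finset.univ.filter fun m => a m ≠ 0).card
        have h2 : (∑ j, cnt u (y j)) ≤ n * n := sum_cnt_le u y
        calc A1y * (n * n + 1) + ∑ j, cnt u (y j)
            < (A1y + 1) * (n * n + 1) := by
              have : (∑ j, cnt u (y j)) < n * n + 1 := Nat.lt_succ_of_le h2
              nlinarith
        _ ≤ A1a * (n * n + 1) := Nat.mul_le_mul hA1 (le_refl _)
        _ ≤ A1a * (n * n + 1) + ∑ j, cnt u (a j) := Nat.le_add_right _ _
      -- a is a convex combination of x and y
      have hxmem : x ∈ convexHull ℝ (Xext n u) := ih x (by omega) hxpark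
      have hymem : y ∈ convexHull ℝ (Xext n u) := ih y (by omega) hypark
      have hlam0 : (0 : ℝ) ≤ v / u q := le_of_lt (div_pos hv0 hu0)
      have hlam1 : (0 : ℝ) ≤ 1 - v / u q := by
        have : v / u q < 1 := (div_lt_one hu0).2 hvq
        linarith
      have hcombo : a = (v / u q) • x + (1 - v / u q) • y := by
        funext m
        simp only [Pi.add_apply, Pi.smul_apply, smul_eq_mul]
        by_cases hmq : m = σ q
        · subst hmq
          rw [hxdef, hydef, Function.update_self, Function.update_self, haσq]
          field_simp
          ring
        · rw [hxdef, hydef, Function.update_of_ne hmq, Function.update_of_ne hmq]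
          ring
      rw [hcombo]
      exact (convex_convexHull ℝ (Xext n u)) hxmem hymem hlam0 hlam1 (by ring)

end ParkingAux

/-- The parking function polytope `PF(u)` equals the convex hull of the finite set
of `u`-extreme points; in particular it is a polytope. -/
theorem parking_polytope_eq_convexHull_extreme
    (n : ℕ) (hn : 1 ≤ n) (u : Fin n → ℝ)
    (hmono : Monotone u) (hnonneg : ∀ i, 0 ≤ u i) (hne : u ≠ 0) :
    (Xext n u).Finite ∧ PF n u = convexHull ℝ (Xext n u) := by
  refine ⟨ParkingAux.xext_finite u, le_antisymm ?_ ?_⟩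
  · exact convexHull_min (fun a ha => ParkingAux.park_mem_convexHull hmono hnonneg a ha)
      (convex_convexHull ℝ _)
  · exact convexHull_mono (ParkingAux.xext_subset_park hmono hnonneg)
end
end

section
/- The set of extreme points (vertices) of PF(u) is exactly the set X(u) of u-extreme points. Moreover, for a u-extreme point v with zero set Z = {i ∈ [n] : v_i = 0} (necessarily |Z| ≥ m_0): if |Z| = m_0 then ncone(v, PF(u)) = {c ∈ ℝ^n : c_j ≥ 0 for all j ∉ Z, and c_i ≤ c_j whenever v_i < v_j}; and if |Z| > m_0 then ncone(v, PF(u)) = {c ∈ ℝ^n : c_i ≤ 0 for all i ∈ Z, c_j ≥ 0 for all j ∉ Z, and c_i ≤ c_j whenever v_i < v_j}. -/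
noncomputable section

/-- The normal cone of `P` at `v`: vectors `w` with `w·v ≥ w·y` for all `y ∈ P`. -/
def ncone (n : ℕ) (P : Set (Fin n → ℝ)) (v : Fin n → ℝ) : Set (Fin n → ℝ) :=
  {w | ∀ y ∈ P, ∑ i, w i * y i ≤ ∑ i, w i * v i}

namespace PFAux

open Finset

variable {n : ℕ}

/-- Unique monotone rearrangement. -/
lemma unique_mono {f : Fin n → ℝ} {σ τ : Equiv.Perm (Fin n)}
    (h1 : Monotone (f ∘ σ)) (h2 : Monotone (f ∘ τ)) : f ∘ σ = f ∘ τ := by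
  rw [Tuple.comp_sort_eq_comp_iff_monotone.2 h1, Tuple.comp_sort_eq_comp_iff_monotone.2 h2]

/-- Parking functions: no need for a monotone witness. -/
lemma park_iff {u : Fin n → ℝ} (hm : Monotone u) (a : Fin n → ℝ) :
    IsParkingFunction n u a ↔
      (∀ i, 0 ≤ a i) ∧ ∃ π : Equiv.Perm (Fin n), ∀ m, a (π m) ≤ u m := by
  constructor
  · rintro ⟨h0, σ, _, hle⟩; exact ⟨h0, σ, hle⟩
  · rintro ⟨h0, π, hle⟩
    refine ⟨h0, Tuple.sort a, Tuple.monotone_sort a, fun m => ?_⟩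
    by_contra hlt
    push_neg at hlt
    have hdisj : Disjoint ((Finset.Iic m).image π) ((Finset.Ici m).image (Tuple.sort a)) := by
      rw [Finset.disjoint_left]
      rintro x hx hx'
      simp only [Finset.mem_image, Finset.mem_Iic, Finset.mem_Ici] at hx hx'
      obtain ⟨l, hl, rfl⟩ := hx
      obtain ⟨l', hl', he⟩ := hx'
      have h1 : a (π l) ≤ u m := (hle l).trans (hm hl)
      have h2 : (a ∘ Tuple.sort a) m ≤ (a ∘ Tuple.sort a) l' := Tuple.monotone_sort a hl'
      simp only [Function.comp] at h2
      rw [he] at h2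
      exact absurd (h2.trans h1) (not_le.2 hlt)
    have hcard := Finset.card_le_card (Finset.subset_univ
      (((Finset.Iic m).image π) ∪ ((Finset.Ici m).image (Tuple.sort a))))
    rw [Finset.card_union_of_disjoint hdisj, Finset.card_image_of_injective _ π.injective,
      Finset.card_image_of_injective _ (Tuple.sort a).injective, Fin.card_Iic, Fin.card_Ici,
      Finset.card_univ, Fintype.card_fin] at hcard
    omega

/-- Zeros of a monotone nonneg vector form an initial segment of length the
number of zeros. -/
lemma zeros_card {z : Fin n → ℝ} (hm : Monotone z) (h0 : ∀ i, 0 ≤ z i) (m : Fin n) :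
    z m = 0 ↔ (m : ℕ) < Nat.card {i : Fin n // z i = 0} := by
  classical
  have hcard : Nat.card {i : Fin n // z i = 0}
      = (Finset.univ.filter fun i => z i = 0).card := by
    rw [Nat.card_eq_fintype_card, Fintype.card_subtype]
  constructor
  · intro hz
    have hsub : Finset.Iic m ⊆ Finset.univ.filter fun i => z i = 0 := by
      intro i hi
      simp only [Finset.mem_Iic] at hi
      simp only [Finset.mem_filter, Finset.mem_univ, true_and]
      exact le_antisymm (hz ▸ hm hi) (h0 i)
    have := Finset.card_le_card hsub
    rw [Fin.card_Iic] at this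
    omega
  · intro hlt
    by_contra hz
    have hpos : 0 < z m := lt_of_le_of_ne (h0 m) (Ne.symm hz)
    have hsub : (Finset.univ.filter fun i => z i = 0) ⊆ Finset.Iio m := by
      intro i hi
      simp only [Finset.mem_filter] at hi
      simp only [Finset.mem_Iio]
      by_contra hge
      push_neg at hge
      have : (0:ℝ) < z i := lt_of_lt_of_le hpos (hm hge)
      rw [hi.2] at this
      exact lt_irrefl _ this
    have := Finset.card_le_card hsub
    rw [Fin.card_Iio] at this
    omega

lemma card_val_lt {K : ℕ} (hK : K ≤ n) :
    Nat.card {m : Fin n // (m : ℕ) < K} = K := by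
  have e : {m : Fin n // (m : ℕ) < K} ≃ Fin K :=
    { toFun := fun m => ⟨m.1, m.2⟩
      invFun := fun j => ⟨⟨j.1, lt_of_lt_of_le j.2 hK⟩, j.2⟩
      left_inv := fun m => rfl
      right_inv := fun j => rfl }
  rw [Nat.card_congr e, Nat.card_eq_fintype_card, Fintype.card_fin]

lemma sum_mul_update (c v : Fin n → ℝ) (j : Fin n) (t : ℝ) :
    ∑ i, c i * Function.update v j t i = (∑ i, c i * v i) + c j * (t - v j) := by
  classical
  have h : (fun i => c i * Function.update v j t i)
      = Function.update (fun i => c i * v i) j (c j * t) := by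
    funext i
    by_cases hi : i = j
    · subst hi; simp
    · simp [Function.update_of_ne hi]
  rw [h, Finset.sum_update_of_mem (Finset.mem_univ j)]
  rw [← Finset.sum_erase_add Finset.univ _ (Finset.mem_univ j)]
  have : Finset.univ \ {j} = Finset.univ.erase j := by
    ext x; simp [Finset.mem_erase, and_comm]
  rw [this]; ring

lemma sum_mul_swap (c v : Fin n → ℝ) {a b : Fin n} (hab : a ≠ b) :
    ∑ i, c i * v (Equiv.swap a b i) = (∑ i, c i * v i) + (c a - c b) * (v b - v a) := by
  classical
  have h : (fun i => v (Equiv.swap a b i))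
      = Function.update (Function.update v a (v b)) b (v a) := by
    funext i
    rcases eq_or_ne i a with rfl | hia
    · rw [Equiv.swap_apply_left, Function.update_of_ne hab, Function.update_self]
    · rcases eq_or_ne i b with rfl | hib
      · rw [Equiv.swap_apply_right, Function.update_self]
      · rw [Equiv.swap_apply_of_ne_of_ne hia hib, Function.update_of_ne hib,
          Function.update_of_ne hia]
  calc ∑ i, c i * v (Equiv.swap a b i)
      = ∑ i, c i * Function.update (Function.update v a (v b)) b (v a) i := by
        refine Finset.sum_congr rfl fun i _ => ?_
        rw [congrFun h i]
    _ = (∑ i, c i * v i) + (c a - c b) * (v b - v a) := ?_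
  rw [sum_mul_update, sum_mul_update]
  simp only [Function.update_of_ne (Ne.symm hab), Function.update_self]
  ring

/-! ### Abel summation machinery -/

lemma telescope (G : ℕ → ℝ) (m : ℕ) :
    ∑ j ∈ Finset.range (m+1), (G j - if j = 0 then 0 else G (j-1)) = G m := by
  induction m with
  | zero => simp
  | succ m ih =>
    rw [Finset.sum_range_succ, ih]
    simp only [Nat.succ_ne_zero, if_false, Nat.add_sub_cancel]
    ring

lemma sum_swap' (N : ℕ) (a : ℕ → ℕ → ℝ) :
    ∑ m ∈ Finset.range N, ∑ j ∈ Finset.range (m+1), a j m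
      = ∑ j ∈ Finset.range N, ∑ m ∈ Finset.Ico j N, a j m := by
  induction N with
  | zero => simp
  | succ N ih =>
    rw [Finset.sum_range_succ, ih]
    have h1 : ∑ j ∈ Finset.range (N+1), ∑ m ∈ Finset.Ico j (N+1), a j m
        = ∑ j ∈ Finset.range (N+1), ((∑ m ∈ Finset.Ico j N, a j m) + a j N) := by
      refine Finset.sum_congr rfl fun j hj => ?_
      rw [Finset.mem_range] at hj
      exact Finset.sum_Ico_succ_top (by omega) _
    rw [h1, Finset.sum_add_distrib,
      Finset.sum_range_succ (fun j => ∑ m ∈ Finset.Ico j N, a j m)]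
    simp [Finset.Ico_self]

lemma abel_identity (N : ℕ) (G X : ℕ → ℝ) :
    ∑ m ∈ Finset.range N, G m * X m
      = ∑ j ∈ Finset.range N,
          (G j - if j = 0 then 0 else G (j-1)) * ∑ m ∈ Finset.Ico j N, X m := by
  calc ∑ m ∈ Finset.range N, G m * X m
      = ∑ m ∈ Finset.range N, ∑ j ∈ Finset.range (m+1),
          (G j - if j = 0 then 0 else G (j-1)) * X m := by
        refine Finset.sum_congr rfl fun m _ => ?_
        rw [← Finset.sum_mul, telescope]
    _ = ∑ j ∈ Finset.range N, ∑ m ∈ Finset.Ico j N,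
          (G j - if j = 0 then 0 else G (j-1)) * X m := sum_swap' N _
    _ = _ := by
        refine Finset.sum_congr rfl fun j _ => ?_
        rw [Finset.mul_sum]

lemma abel_le {N K : ℕ} {G Z W : ℕ → ℝ}
    (hC0 : ∀ j, j < N → K ≤ j → 0 ≤ G j - (if j = 0 then 0 else G (j-1)))
    (hCK : ∀ j, j < K → G j - (if j = 0 then 0 else G (j-1)) = 0)
    (hT : ∀ j, K ≤ j → j < N → ∑ m ∈ Finset.Ico j N, Z m ≤ ∑ m ∈ Finset.Ico j N, W m) :
    ∑ m ∈ Finset.range N, G m * Z m ≤ ∑ m ∈ Finset.range N, G m * W m := by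
  rw [abel_identity N G Z, abel_identity N G W]
  refine Finset.sum_le_sum fun j hj => ?_
  rw [Finset.mem_range] at hj
  by_cases hjK : j < K
  · rw [hCK j hjK]; simp
  · push_neg at hjK
    exact mul_le_mul_of_nonneg_left (hT j hjK hj) (hC0 j hj hjK)

lemma abel_eq {N K : ℕ} {G Z W : ℕ → ℝ}
    (hC0 : ∀ j, j < N → K ≤ j → 0 < G j - (if j = 0 then 0 else G (j-1)))
    (hCK : ∀ j, j < K → G j - (if j = 0 then 0 else G (j-1)) = 0)
    (hT : ∀ j, K ≤ j → j < N → ∑ m ∈ Finset.Ico j N, Z m ≤ ∑ m ∈ Finset.Ico j N, W m)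
    (heq : ∑ m ∈ Finset.range N, G m * Z m = ∑ m ∈ Finset.range N, G m * W m) :
    ∀ m, K ≤ m → m < N → Z m = W m := by
  rw [abel_identity N G Z, abel_identity N G W] at heq
  have hle : ∀ j ∈ Finset.range N,
      (G j - if j = 0 then 0 else G (j-1)) * ∑ m ∈ Finset.Ico j N, Z m
        ≤ (G j - if j = 0 then 0 else G (j-1)) * ∑ m ∈ Finset.Ico j N, W m := by
    intro j hj
    rw [Finset.mem_range] at hj
    by_cases hjK : j < K
    · rw [hCK j hjK]; simp
    · push_neg at hjK
      exact mul_le_mul_of_nonneg_left (hT j hjK hj) (hC0 j hj hjK).le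
  have hall := (Finset.sum_eq_sum_iff_of_le hle).1 heq
  have hTeq : ∀ j, K ≤ j → j < N →
      ∑ m ∈ Finset.Ico j N, Z m = ∑ m ∈ Finset.Ico j N, W m := by
    intro j hjK hjN
    have := hall j (Finset.mem_range.2 hjN)
    exact mul_left_cancel₀ (hC0 j hjN hjK).ne' this
  intro m hmK hmN
  have h1 : ∑ x ∈ Finset.Ico m N, Z x = Z m + ∑ x ∈ Finset.Ico (m+1) N, Z x :=
    Finset.sum_eq_sum_Ico_succ_bot hmN _
  have h2 : ∑ x ∈ Finset.Ico m N, W x = W m + ∑ x ∈ Finset.Ico (m+1) N, W x :=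
    Finset.sum_eq_sum_Ico_succ_bot hmN _
  have h3 : ∑ x ∈ Finset.Ico (m+1) N, Z x = ∑ x ∈ Finset.Ico (m+1) N, W x := by
    by_cases hm1 : m + 1 < N
    · exact hTeq (m+1) (by omega) hm1
    · rw [Finset.Ico_eq_empty (by omega : ¬ m + 1 < N)]; simp
  have h0 := hTeq m hmK hmN
  rw [h1, h2, h3] at h0
  linarith

/-! ### Bridge from `Fin n` sums to `range n` sums -/

def ext (z : Fin n → ℝ) : ℕ → ℝ := fun m => if h : m < n then z ⟨m, h⟩ else 0

lemma sum_ext (g z : Fin n → ℝ) :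
    ∑ i, g i * z i = ∑ m ∈ Finset.range n, ext g m * ext z m := by
  rw [← Fin.sum_univ_eq_sum_range (fun m => ext g m * ext z m) n]
  refine Finset.sum_congr rfl fun i _ => ?_
  simp [ext, i.isLt]

/-- Abel summation bound specialized to parking data. -/
lemma abel_park {K : ℕ} (hKn : K ≤ n) (u g z : Fin n → ℝ)
    (hgmono : Monotone g) (hg0 : ∀ i, 0 ≤ g i) (hgK : ∀ m : Fin n, (m : ℕ) < K → g m = 0)
    (hzu : ∀ m, z m ≤ u m) :
    ∑ m, g m * z m ≤ ∑ m, g m * (fun m : Fin n => if (m : ℕ) < K then 0 else u m) m := by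
  set w : Fin n → ℝ := fun m => if (m : ℕ) < K then 0 else u m with hw
  rw [sum_ext g z, sum_ext g w]
  apply abel_le (K := K)
  · intro j hjN hjK
    by_cases hj0 : j = 0
    · subst hj0
      simp only [ext, dif_pos hjN, if_true, eq_self_iff_true, sub_zero]
      exact hg0 _
    · have hj1 : j - 1 < n := by omega
      simp only [ext, dif_pos hjN, dif_pos hj1, if_neg hj0, sub_nonneg]
      exact hgmono (show (⟨j-1, hj1⟩ : Fin n) ≤ ⟨j, hjN⟩ by
        simp only [Fin.mk_le_mk]; omega)
  · intro j hjK
    have hjN : j < n := lt_of_lt_of_le hjK hKn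
    by_cases hj0 : j = 0
    · subst hj0
      simp only [ext, dif_pos hjN, if_true, eq_self_iff_true, sub_zero]
      exact hgK ⟨0, hjN⟩ (by simpa using hjK)
    · have hj1 : j - 1 < n := by omega
      simp only [ext, dif_pos hjN, dif_pos hj1, if_neg hj0]
      rw [hgK ⟨j, hjN⟩ (by simpa using hjK), hgK ⟨j-1, hj1⟩ (by simp only [Fin.val_mk]; omega)]
      ring
  · intro j hjK hjN
    refine Finset.sum_le_sum fun m hm => ?_
    rw [Finset.mem_Ico] at hm
    have hmn : m < n := hm.2
    simp only [ext, dif_pos hmn, hw]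
    have hnK : ¬ ((⟨m, hmn⟩ : Fin n) : ℕ) < K := by simp only [Fin.val_mk]; omega
    rw [if_neg hnK]
    exact hzu _

lemma mono_w {u : Fin n → ℝ} (hu : Monotone u) (hun : ∀ i, 0 ≤ u i) (K : ℕ) :
    Monotone (fun m : Fin n => if (m : ℕ) < K then 0 else u m) := by
  intro a b hab
  dsimp only
  by_cases hb : (b : ℕ) < K
  · rw [if_pos hb, if_pos (lt_of_le_of_lt (by exact_mod_cast hab) hb)]
  · rw [if_neg hb]
    by_cases ha : (a : ℕ) < K
    · rw [if_pos ha]; exact hun b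
    · rw [if_neg ha]; exact hu hab

/-- The main inequality: a monovarying, nonnegative `c` vanishing on the zero
set of the `u`-extreme point `v` satisfies `c·y ≤ c·v` for all parking `y`. -/
lemma main_ineq {u : Fin n → ℝ} (hu : Monotone u) (hun : ∀ i, 0 ≤ u i)
    {K : ℕ} (hKn : K ≤ n) {ρ : Equiv.Perm (Fin n)} {v : Fin n → ℝ}
    (hv : ∀ i, v i = if ((ρ i : ℕ) < K) then 0 else u (ρ i))
    {c : Fin n → ℝ} (hc0 : ∀ i, v i = 0 → c i = 0) (hcpos : ∀ i, 0 ≤ c i)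
    (hcv : Monovary c v)
    {y : Fin n → ℝ} (hy : IsParkingFunction n u y) :
    ∑ i, c i * y i ≤ ∑ i, c i * v i := by
  classical
  set w : Fin n → ℝ := fun m => if (m : ℕ) < K then 0 else u m with hwdef
  have hvw : ∀ i, v i = w (ρ i) := hv
  have hwmono : Monotone w := mono_w hu hun K
  set f : Fin n → Lex (ℝ × ℝ) := fun i => toLex (v i, c i) with hfdef
  set θ : Equiv.Perm (Fin n) := Tuple.sort f with hθdef
  have hθ : Monotone (f ∘ θ) := Tuple.monotone_sort f
  have hvθ : Monotone (fun m => v (θ m)) := by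
    intro a b hab
    have := hθ hab
    rw [Function.comp_apply, Function.comp_apply, hfdef, Prod.Lex.le_iff] at this
    rcases this with h | h
    · exact h.le
    · exact h.1.le
  have hgθ : Monotone (fun m => c (θ m)) := by
    intro a b hab
    have := hθ hab
    rw [Function.comp_apply, Function.comp_apply, hfdef, Prod.Lex.le_iff] at this
    rcases this with h | h
    · exact hcv h
    · exact h.2
  have hwθ : ∀ m, v (θ m) = w m := by
    have h1 : Monotone (w ∘ (θ.trans ρ)) := by
      have : (w ∘ (θ.trans ρ)) = fun m => v (θ m) := by
        funext m
        simp [Equiv.trans_apply, hvw (θ m)]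
      rw [this]; exact hvθ
    have h2 : Monotone (w ∘ (Equiv.refl (Fin n))) := by simpa using hwmono
    have := unique_mono h1 h2
    intro m
    have := congrFun this m
    simpa [Equiv.trans_apply, ← hvw (θ m)] using this
  set g : Fin n → ℝ := fun m => c (θ m) with hgdef
  have hgK : ∀ m : Fin n, (m : ℕ) < K → g m = 0 := by
    intro m hm
    apply hc0
    rw [hwθ m, hwdef]
    simp [hm]
  have hsum_cv : ∑ i, c i * v i = ∑ m, g m * w m := by
    rw [← Equiv.sum_comp θ (fun i => c i * v i)]
    exact Finset.sum_congr rfl fun m _ => by rw [hwθ m]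
  obtain ⟨hy0, σy, hzmono, hzu⟩ := hy
  set z : Fin n → ℝ := fun m => y (σy m) with hzdef
  set π : Equiv.Perm (Fin n) := θ.trans σy.symm with hπdef
  have hzπ : ∀ m, z (π m) = y (θ m) := by
    intro m; simp [hzdef, hπdef, Equiv.trans_apply]
  have hsum_cy : ∑ i, c i * y i = ∑ m, g m * z (π m) := by
    rw [← Equiv.sum_comp θ (fun i => c i * y i)]
    exact Finset.sum_congr rfl fun m _ => by rw [hzπ m]
  have hmzg : Monovary g z := by
    intro i j hij
    exact hgθ (le_of_not_gt fun h => absurd (hzmono h.le) (not_le.2 hij))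
  have hre : ∑ m, g m * z (π m) ≤ ∑ m, g m * z m := by
    have := hmzg.sum_smul_comp_perm_le_sum_smul (σ := π)
    simpa [smul_eq_mul] using this
  have habel : ∑ m, g m * z m ≤ ∑ m, g m * w m :=
    abel_park hKn u g z hgθ (fun i => hcpos _) hgK hzu
  rw [hsum_cy, hsum_cv]
  exact hre.trans habel

/-- Equality case of the Abel bound, for strictly increasing profiles. -/
lemma abel_park_eq {K : ℕ} (hKn : K ≤ n) (u g z : Fin n → ℝ)
    (hg0 : ∀ i, 0 ≤ g i) (hgK : ∀ m : Fin n, (m : ℕ) < K → g m = 0)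
    (hzu : ∀ m, z m ≤ u m)
    (hs1 : ∀ j : Fin n, (j : ℕ) = K → 0 < g j)
    (hs2 : ∀ j j' : Fin n, K ≤ (j' : ℕ) → (j : ℕ) = (j' : ℕ) + 1 → g j' < g j)
    (heq : ∑ m, g m * z m
      = ∑ m, g m * (fun m : Fin n => if (m : ℕ) < K then 0 else u m) m) :
    ∀ m : Fin n, K ≤ (m : ℕ) → z m = (fun m : Fin n => if (m : ℕ) < K then 0 else u m) m := by
  set w : Fin n → ℝ := fun m => if (m : ℕ) < K then 0 else u m with hw
  rw [sum_ext g z, sum_ext g w] at heq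
  have key := abel_eq (N := n) (K := K) (G := ext g) (Z := ext z) (W := ext w)
    ?_ ?_ ?_ heq
  · intro m hm
    have := key (m : ℕ) hm m.isLt
    simpa [ext] using this
  · intro j hjN hjK
    by_cases hj0 : j = 0
    · subst hj0
      simp only [ext, dif_pos hjN, if_true, eq_self_iff_true, sub_zero]
      exact hs1 ⟨0, hjN⟩ (by simpa using (hjK.antisymm (Nat.zero_le K)).symm)
    · have hj1 : j - 1 < n := by omega
      simp only [ext, dif_pos hjN, dif_pos hj1, if_neg hj0, sub_pos]
      rcases Nat.lt_or_ge (j-1) K with h | h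
      · have hjK' : j = K := by omega
        rw [hgK ⟨j-1, hj1⟩ (by simpa using h)]
        exact hs1 ⟨j, hjN⟩ (by simpa using hjK')
      · exact hs2 ⟨j, hjN⟩ ⟨j-1, hj1⟩ (by simpa using h) (by simp only [Fin.val_mk]; omega)
  · intro j hjK
    have hjN : j < n := lt_of_lt_of_le hjK hKn
    by_cases hj0 : j = 0
    · subst hj0
      simp only [ext, dif_pos hjN, if_true, eq_self_iff_true, sub_zero]
      exact hgK ⟨0, hjN⟩ (by simpa using hjK)
    · have hj1 : j - 1 < n := by omega
      simp only [ext, dif_pos hjN, dif_pos hj1, if_neg hj0]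
      rw [hgK ⟨j, hjN⟩ (by simpa using hjK), hgK ⟨j-1, hj1⟩ (by simp only [Fin.val_mk]; omega)]
      ring
  · intro j hjK hjN
    refine Finset.sum_le_sum fun m hm => ?_
    rw [Finset.mem_Ico] at hm
    have hmn : m < n := hm.2
    simp only [ext, dif_pos hmn, hw]
    have hnK : ¬ ((⟨m, hmn⟩ : Fin n) : ℕ) < K := by simp only [Fin.val_mk]; omega
    rw [if_neg hnK]
    exact hzu _

/-- A strictly separating functional at a `u`-extreme point. -/
lemma uniq_max {u : Fin n → ℝ} (hu : Monotone u) (hun : ∀ i, 0 ≤ u i)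
    {K : ℕ} (hKn : K ≤ n) {ρ : Equiv.Perm (Fin n)} {v : Fin n → ℝ}
    (hv : ∀ i, v i = if ((ρ i : ℕ) < K) then 0 else u (ρ i)) :
    ∃ c : Fin n → ℝ, ∀ y, IsParkingFunction n u y →
      (∑ i, c i * y i ≤ ∑ i, c i * v i ∧
        (∑ i, c i * y i = ∑ i, c i * v i → y = v)) := by
  classical
  set g : Fin n → ℝ := fun m => (m : ℕ) - K + 2⁻¹ with hgdef
  have hgs : StrictMono g := by
    intro a b hab
    have : ((a : ℕ) : ℝ) < ((b : ℕ) : ℝ) := by exact_mod_cast hab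
    simp only [hgdef]
    linarith
  have hgneg : ∀ m : Fin n, (m : ℕ) < K → g m < 0 := by
    intro m hm
    have h1 : ((m : ℕ) : ℝ) + 1 ≤ (K : ℝ) := by exact_mod_cast hm
    simp only [hgdef]
    nlinarith
  have hgpos : ∀ m : Fin n, K ≤ (m : ℕ) → 0 < g m := by
    intro m hm
    have : (K : ℝ) ≤ ((m : ℕ) : ℝ) := by exact_mod_cast hm
    simp only [hgdef]; linarith
  set g' : Fin n → ℝ := fun m => if (m : ℕ) < K then 0 else g m with hg'def
  have hg'mono : Monotone g' := by
    intro a b hab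
    simp only [hg'def]
    by_cases hb : (b : ℕ) < K
    · rw [if_pos hb, if_pos (lt_of_le_of_lt (by exact_mod_cast hab) hb)]
    · rw [if_neg hb]
      by_cases ha : (a : ℕ) < K
      · rw [if_pos ha]; exact (hgpos b (by omega)).le
      · rw [if_neg ha]; exact (hgs.monotone hab)
  have hg'0 : ∀ i, 0 ≤ g' i := by
    intro i
    simp only [hg'def]
    by_cases hi : (i : ℕ) < K
    · rw [if_pos hi]
    · rw [if_neg hi]; exact (hgpos i (by omega)).le
  have hg'K : ∀ m : Fin n, (m : ℕ) < K → g' m = 0 := fun m hm => by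
    simp only [hg'def, if_pos hm]
  set w : Fin n → ℝ := fun m => if (m : ℕ) < K then 0 else u m with hwdef
  set c : Fin n → ℝ := fun i => g (ρ i) with hcdef
  refine ⟨c, fun y hy => ?_⟩
  obtain ⟨hy0, σy, hzmono, hzu⟩ := hy
  set z : Fin n → ℝ := fun m => y (σy m) with hzdef
  set π : Equiv.Perm (Fin n) := ρ.symm.trans σy.symm with hπdef
  have hzπ : ∀ m, z (π m) = y (ρ.symm m) := by
    intro m; simp [hzdef, hπdef, Equiv.trans_apply]
  have q1 : ∑ i, c i * y i = ∑ m, g m * z (π m) := by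
    rw [← Equiv.sum_comp ρ.symm (fun i => c i * y i)]
    refine Finset.sum_congr rfl fun m _ => ?_
    rw [hzπ m]
    simp [hcdef]
  have hz0 : ∀ m, 0 ≤ z m := fun m => hy0 _
  have hmgz : Monovary g z := by
    intro i j hij
    exact (hgs.monotone) (le_of_not_gt fun h => absurd (hzmono h.le) (not_le.2 hij))
  have q2 : ∑ m, g m * z (π m) ≤ ∑ m, g m * z m := by
    have := hmgz.sum_smul_comp_perm_le_sum_smul (σ := π)
    simpa [smul_eq_mul] using this
  have q3term : ∀ m : Fin n, g m * z m ≤ g' m * z m := by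
    intro m
    by_cases hm : (m : ℕ) < K
    · rw [hg'K m hm, zero_mul]
      exact mul_nonpos_of_nonpos_of_nonneg (hgneg m hm).le (hz0 m)
    · simp [hg'def, if_neg hm]
  have q3 : ∑ m, g m * z m ≤ ∑ m, g' m * z m :=
    Finset.sum_le_sum fun m _ => q3term m
  have q4 : ∑ m, g' m * z m ≤ ∑ m, g' m * w m :=
    abel_park hKn u g' z hg'mono hg'0 hg'K hzu
  have q5 : ∑ m, g' m * w m = ∑ m, g m * w m := by
    refine Finset.sum_congr rfl fun m _ => ?_
    by_cases hm : (m : ℕ) < K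
    · simp [hwdef, hg'def, if_pos hm]
    · simp [hg'def, if_neg hm]
  have hvw : ∀ m, v (ρ.symm m) = w m := by
    intro m
    rw [hv (ρ.symm m)]
    simp [hwdef]
  have q6 : ∑ i, c i * v i = ∑ m, g m * w m := by
    rw [← Equiv.sum_comp ρ.symm (fun i => c i * v i)]
    refine Finset.sum_congr rfl fun m _ => ?_
    rw [hvw m]
    simp [hcdef]
  constructor
  · rw [q1, q6]
    exact q2.trans (q3.trans (q4.trans q5.le))
  · intro heq
    rw [q1, q6] at heq
    have e2 : ∑ m, g m * z (π m) = ∑ m, g m * z m := by linarith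
    have e3 : ∑ m, g m * z m = ∑ m, g' m * z m := by linarith
    have e4 : ∑ m, g' m * z m = ∑ m, g' m * w m := by linarith
    -- z vanishes below K
    have hzK : ∀ m : Fin n, (m : ℕ) < K → z m = 0 := by
      have hall := (Finset.sum_eq_sum_iff_of_le (fun m _ => q3term m)).1 e3
      intro m hm
      have := hall m (Finset.mem_univ m)
      rw [hg'K m hm, zero_mul] at this
      rcases mul_eq_zero.1 this with h | h
      · exact absurd h (hgneg m hm).ne
      · exact h
    -- z equals w from K on
    have hzW : ∀ m : Fin n, K ≤ (m : ℕ) → z m = w m := by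
      have := abel_park_eq hKn u g' z hg'0 hg'K hzu ?_ ?_ e4
      · exact this
      · intro j hj
        simp only [hg'def, if_neg (by omega : ¬ (j : ℕ) < K)]
        exact hgpos j (by omega)
      · intro j j' hj' hjj
        simp only [hg'def, if_neg (by omega : ¬ (j : ℕ) < K),
          if_neg (by omega : ¬ (j' : ℕ) < K)]
        exact hgs (Fin.lt_def.2 (by omega))
    have hzw : z = w := by
      funext m
      by_cases hm : (m : ℕ) < K
      · rw [hzK m hm, hwdef]; simp [if_pos hm]
      · exact hzW m (by omega)
    -- rearrangement equality gives `w ∘ π = w`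
    rw [hzw] at e2
    have hmgw : Monovary g w := by
      intro i j hij
      exact (hgs.monotone) (le_of_not_gt fun h =>
        absurd ((mono_w hu hun K) h.le) (not_le.2 hij))
    have hmon : Monovary g (w ∘ π) := by
      have := (hmgw.sum_smul_comp_perm_eq_sum_smul_iff (σ := π)).1
      apply this
      simpa [smul_eq_mul] using e2
    have hwπmono : Monotone (w ∘ π) := by
      intro a b hab
      by_contra hcon
      push_neg at hcon
      have h1 : g b ≤ g a := hmon hcon
      rcases eq_or_lt_of_le hab with rfl | hlt
      · exact absurd hcon (lt_irrefl _)
      · exact absurd (hgs hlt) (not_lt.2 h1)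
    have hwπ : w ∘ π = w := by
      have h2 : Monotone (w ∘ (Equiv.refl (Fin n))) := by
        simpa using (mono_w hu hun K)
      have := unique_mono (f := w) (σ := π) (τ := Equiv.refl (Fin n)) hwπmono h2
      simpa using this
    funext i
    have hi := congrFun hwπ (ρ i)
    simp only [Function.comp_apply] at hi
    have hyz : y (ρ.symm (ρ i)) = z (π (ρ i)) := (hzπ (ρ i)).symm
    rw [Equiv.symm_apply_apply] at hyz
    rw [hyz, hzw, hi, ← hvw (ρ i)]
    rw [Equiv.symm_apply_apply]

/-! ### Convex hull lemmas -/

lemma dot_linear (c : Fin n → ℝ) :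
    IsLinearMap ℝ (fun x : Fin n → ℝ => ∑ i, c i * x i) := by
  constructor
  · intro x y
    simp only [Pi.add_apply, mul_add]
    rw [Finset.sum_add_distrib]
  · intro t x
    simp only [Pi.smul_apply, smul_eq_mul, Finset.mul_sum]
    exact Finset.sum_congr rfl fun i _ => by ring

lemma dot_bound_hull {S : Set (Fin n → ℝ)} {c : Fin n → ℝ} {M : ℝ}
    (hS : ∀ y ∈ S, ∑ i, c i * y i ≤ M) :
    ∀ x ∈ convexHull ℝ S, ∑ i, c i * x i ≤ M := fun x hx =>
  convexHull_min hS (convex_halfSpace_le (dot_linear c) M) hx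

lemma hull_uniq_max {S : Set (Fin n → ℝ)} {c v : Fin n → ℝ}
    (hmax : ∀ y ∈ S, ∑ i, c i * y i ≤ ∑ i, c i * v i)
    (huniq : ∀ y ∈ S, ∑ i, c i * y i = ∑ i, c i * v i → y = v) :
    ∀ x ∈ convexHull ℝ S, ∑ i, c i * x i = ∑ i, c i * v i → x = v := by
  intro x hx heq
  rw [_root_.convexHull_eq] at hx
  obtain ⟨ι, t, wt, zs, h0, h1, hz, hcm⟩ := hx
  have hxe : x = ∑ i ∈ t, wt i • zs i := by
    rw [← hcm, Finset.centerMass_eq_of_sum_1 _ _ h1]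
  have hfx : ∑ j, c j * x j = ∑ i ∈ t, wt i * ∑ j, c j * zs i j := by
    rw [hxe]
    calc ∑ j, c j * (∑ i ∈ t, wt i • zs i) j
        = ∑ j, ∑ i ∈ t, c j * (wt i * zs i j) := by
          refine Finset.sum_congr rfl fun j _ => ?_
          rw [Finset.sum_apply, Finset.mul_sum]
          exact Finset.sum_congr rfl fun i _ => by simp [smul_eq_mul]
      _ = ∑ i ∈ t, ∑ j, c j * (wt i * zs i j) := Finset.sum_comm
      _ = ∑ i ∈ t, wt i * ∑ j, c j * zs i j := by
          refine Finset.sum_congr rfl fun i _ => ?_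
          rw [Finset.mul_sum]
          exact Finset.sum_congr rfl fun j _ => by ring
  have hterm : ∀ i ∈ t, wt i * (∑ j, c j * zs i j) ≤ wt i * (∑ j, c j * v j) :=
    fun i hi => mul_le_mul_of_nonneg_left (hmax _ (hz i hi)) (h0 i hi)
  have hsum1 : ∑ i ∈ t, wt i * (∑ j, c j * v j) = ∑ j, c j * v j := by
    rw [← Finset.sum_mul, h1, one_mul]
  have hall : ∀ i ∈ t, wt i * (∑ j, c j * zs i j) = wt i * (∑ j, c j * v j) := by
    apply (Finset.sum_eq_sum_iff_of_le hterm).1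
    rw [hsum1, ← hfx, heq]
  have hvz : ∀ i ∈ t, wt i • zs i = wt i • v := by
    intro i hi
    rcases eq_or_lt_of_le (h0 i hi) with h | h
    · rw [← h, zero_smul, zero_smul]
    · have := mul_left_cancel₀ h.ne' (hall i hi)
      rw [huniq _ (hz i hi) this]
  rw [hxe, Finset.sum_congr rfl hvz, ← Finset.sum_smul, h1, one_smul]

lemma extreme_of_uniq {S : Set (Fin n → ℝ)} {c v : Fin n → ℝ} (hv : v ∈ S)
    (hmax : ∀ y ∈ S, ∑ i, c i * y i ≤ ∑ i, c i * v i)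
    (huniq : ∀ y ∈ S, ∑ i, c i * y i = ∑ i, c i * v i → y = v) :
    v ∈ Set.extremePoints ℝ (convexHull ℝ S) := by
  rw [mem_extremePoints]
  refine ⟨subset_convexHull ℝ S hv, fun x₁ hx₁ x₂ hx₂ hseg => ?_⟩
  obtain ⟨a, b, ha, hb, hab, hxy⟩ := hseg
  have h1 : ∑ i, c i * x₁ i ≤ ∑ i, c i * v i := dot_bound_hull hmax x₁ hx₁
  have h2 : ∑ i, c i * x₂ i ≤ ∑ i, c i * v i := dot_bound_hull hmax x₂ hx₂
  have hfv : ∑ i, c i * v i = a * (∑ i, c i * x₁ i) + b * (∑ i, c i * x₂ i) := by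
    conv_lhs => rw [← hxy]
    rw [Finset.mul_sum, Finset.mul_sum, ← Finset.sum_add_distrib]
    refine Finset.sum_congr rfl fun i _ => ?_
    simp only [Pi.add_apply, Pi.smul_apply, smul_eq_mul]
    ring
  have hsplit : a * (∑ i, c i * v i) + b * (∑ i, c i * v i) = ∑ i, c i * v i := by
    rw [← add_mul, hab, one_mul]
  have e1 : ∑ i, c i * x₁ i = ∑ i, c i * v i := by
    by_contra hne
    have hlt := mul_lt_mul_of_pos_left (lt_of_le_of_ne h1 hne) ha
    have h2' := mul_le_mul_of_nonneg_left h2 hb.le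
    linarith
  have e2 : ∑ i, c i * x₂ i = ∑ i, c i * v i := by
    by_contra hne
    have hlt := mul_lt_mul_of_pos_left (lt_of_le_of_ne h2 hne) hb
    have h1' := mul_le_mul_of_nonneg_left h1 ha.le
    linarith
  exact ⟨hull_uniq_max hmax huniq x₁ hx₁ e1, hull_uniq_max hmax huniq x₂ hx₂ e2⟩

/-! ### Normalisation of `u`-extreme points -/

lemma normalize {u : Fin n → ℝ} (hu : Monotone u) (hun : ∀ i, 0 ≤ u i)
    {v : Fin n → ℝ} (hv : IsUExtreme n u v) :
    ∃ K, K ≤ n ∧ ∃ ρ : Equiv.Perm (Fin n),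
      (∀ i, v i = if ((ρ i : ℕ) < K) then 0 else u (ρ i)) ∧
      (∀ m : Fin n, K ≤ (m : ℕ) → 0 < u m) ∧
      Nat.card {i : Fin n // v i = 0} = K ∧
      Nat.card {i : Fin n // u i = 0} ≤ K := by
  classical
  obtain ⟨k, hk, σ, hvk⟩ := hv
  set m₀ := Nat.card {i : Fin n // u i = 0} with hm₀
  have hu0 : ∀ m : Fin n, u m = 0 ↔ (m : ℕ) < m₀ := fun m => zeros_card hu hun m
  have hm₀n : m₀ ≤ n := by
    rw [hm₀, Nat.card_eq_fintype_card]
    exact le_trans (Fintype.card_subtype_le _) (le_of_eq (Fintype.card_fin n))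
  set K := max k m₀ with hK
  have hKn : K ≤ n := max_le hk hm₀n
  have hv' : ∀ i, v i = if ((σ i : ℕ) < K) then 0 else u (σ i) := by
    intro i
    rw [hvk i]
    by_cases h1 : (σ i : ℕ) < k
    · rw [if_pos h1, if_pos (lt_of_lt_of_le h1 (le_max_left _ _))]
    · rw [if_neg h1]
      by_cases h2 : (σ i : ℕ) < K
      · rw [if_pos h2]
        exact (hu0 (σ i)).2 (by omega)
      · rw [if_neg h2]
  have hupos : ∀ m : Fin n, K ≤ (m : ℕ) → 0 < u m := by
    intro m hm
    refine lt_of_le_of_ne (hun m) (Ne.symm fun h => ?_)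
    have := (hu0 m).1 h
    omega
  refine ⟨K, hKn, σ, hv', hupos, ?_, le_max_right _ _⟩
  have hviff : ∀ i, v i = 0 ↔ (σ i : ℕ) < K := by
    intro i
    rw [hv' i]
    by_cases h : (σ i : ℕ) < K
    · simp [h]
    · simp only [if_neg h]
      exact ⟨fun hz => absurd hz (hupos (σ i) (by omega)).ne', fun hz => absurd hz h⟩
  have e : {i : Fin n // v i = 0} ≃ {m : Fin n // (m : ℕ) < K} :=
    Equiv.subtypeEquiv σ hviff
  rw [Nat.card_congr e, card_val_lt hKn]

lemma park_nonneg_le {u : Fin n → ℝ} {K : ℕ} {ρ : Equiv.Perm (Fin n)} {v : Fin n → ℝ}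
    (hun : ∀ i, 0 ≤ u i)
    (hv : ∀ i, v i = if ((ρ i : ℕ) < K) then 0 else u (ρ i)) :
    (∀ i, 0 ≤ v i) ∧ ∀ m, v (ρ.symm m) ≤ u m := by
  constructor
  · intro i
    rw [hv i]
    split_ifs
    · exact le_refl 0
    · exact hun _
  · intro m
    rw [hv (ρ.symm m), Equiv.apply_symm_apply]
    split_ifs
    · exact hun m
    · exact le_refl _

/-- First conjunct: the extreme points of `PF u` are exactly the `u`-extreme points. -/
lemma extreme_eq_xext {u : Fin n → ℝ} (hu : Monotone u) (hun : ∀ i, 0 ≤ u i) :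
    Set.extremePoints ℝ (PF n u) = Xext n u := by
  classical
  apply Set.eq_of_subset_of_subset
  · intro y hy
    have hyS : y ∈ {a | IsParkingFunction n u a} := extremePoints_convexHull_subset
      (show y ∈ Set.extremePoints ℝ (convexHull ℝ {a | IsParkingFunction n u a}) from hy)
    obtain ⟨hy0, σy, hzm, hzu⟩ := hyS
    set z : Fin n → ℝ := fun m => y (σy m) with hzdef
    have claim : ∀ p : Fin n, z p = 0 ∨ z p = u p := by
      intro p
      by_contra hcon
      push_neg at hcon
      obtain ⟨h1, h2⟩ := hcon
      have hzp0 : 0 < z p := lt_of_le_of_ne (hy0 _) (Ne.symm h1)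
      have hzpu : z p < u p := lt_of_le_of_ne (hzu p) h2
      set ε := min (z p) (u p - z p) with hε
      have hεpos : 0 < ε := lt_min hzp0 (by linarith)
      have hεz : ε ≤ z p := min_le_left _ _
      have hεu : ε ≤ u p - z p := min_le_right _ _
      set i := σy p with hi
      set yp : Fin n → ℝ := Function.update y i (y i + ε) with hyp
      set ym : Fin n → ℝ := Function.update y i (y i - ε) with hym
      have hyi : y i = z p := rfl
      have hparkp : IsParkingFunction n u yp := by
        rw [park_iff hu]
        refine ⟨fun j => ?_, σy, fun m => ?_⟩
        · by_cases hj : j = i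
          · subst hj; rw [hyp, Function.update_self]; linarith [hy0 i]
          · rw [hyp, Function.update_of_ne hj]; exact hy0 j
        · by_cases hm : σy m = i
          · have hmp : m = p := σy.injective (by rw [hm])
            rw [hyp, hm, Function.update_self, hyi, hmp]
            linarith
          · rw [hyp, Function.update_of_ne hm]
            exact hzu m
      have hparkm : IsParkingFunction n u ym := by
        rw [park_iff hu]
        refine ⟨fun j => ?_, σy, fun m => ?_⟩
        · by_cases hj : j = i
          · subst hj; rw [hym, Function.update_self, hyi]; linarith
          · rw [hym, Function.update_of_ne hj]; exact hy0 j
        · by_cases hm : σy m = i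
          · have hmp : m = p := σy.injective (by rw [hm])
            rw [hym, hm, Function.update_self, hyi, hmp]
            linarith [hzu p]
          · rw [hym, Function.update_of_ne hm]
            exact hzu m
      have hseg : y ∈ openSegment ℝ ym yp := by
        refine ⟨1/2, 1/2, by norm_num, by norm_num, by norm_num, ?_⟩
        funext j
        by_cases hj : j = i
        · subst hj
          simp only [Pi.add_apply, Pi.smul_apply, smul_eq_mul, hym, hyp,
            Function.update_self]
          ring
        · simp only [Pi.add_apply, Pi.smul_apply, smul_eq_mul, hym, hyp,
            Function.update_of_ne hj]
          ring
      have := (hy.2 (subset_convexHull ℝ _ hparkm) (subset_convexHull ℝ _ hparkp) hseg)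
      have hcontra := congrFun this i
      rw [hym, Function.update_self] at hcontra
      linarith [hcontra]
    set k := Nat.card {m : Fin n // z m = 0} with hkdef
    have hziff : ∀ m : Fin n, z m = 0 ↔ (m : ℕ) < k := fun m =>
      zeros_card hzm (fun m => hy0 _) m
    have hkn : k ≤ n := by
      rw [hkdef, Nat.card_eq_fintype_card]
      exact le_trans (Fintype.card_subtype_le _) (le_of_eq (Fintype.card_fin n))
    refine ⟨k, hkn, σy.symm, fun i => ?_⟩
    have hyzi : y i = z (σy.symm i) := by rw [hzdef]; simp
    rw [hyzi]
    by_cases hm : ((σy.symm i : Fin n) : ℕ) < k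
    · rw [if_pos hm]
      exact (hziff _).2 hm
    · rw [if_neg hm]
      rcases claim (σy.symm i) with h | h
      · exact absurd ((hziff _).1 h) hm
      · exact h
  · intro v hv
    obtain ⟨K, hKn, ρ, hv', hupos, _, _⟩ := normalize hu hun hv
    obtain ⟨c, hc⟩ := uniq_max hu hun hKn hv'
    have hpk := park_nonneg_le hun hv'
    have hvpark : IsParkingFunction n u v := (park_iff hu v).2 ⟨hpk.1, ρ.symm, hpk.2⟩
    exact extreme_of_uniq hvpark (fun y hy => (hc y hy).1) (fun y hy => (hc y hy).2)

/-! ### Normal cone: membership criterion and test points -/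

lemma mem_ncone_iff {u v c : Fin n → ℝ} :
    c ∈ ncone n (PF n u) v ↔
      ∀ y, IsParkingFunction n u y → ∑ i, c i * y i ≤ ∑ i, c i * v i := by
  constructor
  · intro h y hy
    exact h y (subset_convexHull ℝ {a | IsParkingFunction n u a} hy)
  · intro h y hy
    exact dot_bound_hull (S := {a | IsParkingFunction n u a}) h y hy

lemma sum_park_le {u y : Fin n → ℝ} (hy : IsParkingFunction n u y) :
    ∑ i, y i ≤ ∑ i, u i := by
  obtain ⟨_, σ, _, hle⟩ := hy
  rw [← Equiv.sum_comp σ y]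
  exact Finset.sum_le_sum fun m _ => hle m

lemma tests {u : Fin n → ℝ} (hu : Monotone u) (hun : ∀ i, 0 ≤ u i)
    {K : ℕ} {ρ : Equiv.Perm (Fin n)} {v : Fin n → ℝ}
    (hv : ∀ i, v i = if ((ρ i : ℕ) < K) then 0 else u (ρ i))
    {c : Fin n → ℝ}
    (hc : ∀ y, IsParkingFunction n u y → ∑ i, c i * y i ≤ ∑ i, c i * v i) :
    (∀ j, v j ≠ 0 → 0 ≤ c j) ∧ (∀ i j, v i < v j → c i ≤ c j) := by
  classical
  have hpk := park_nonneg_le hun hv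
  constructor
  · intro j hj
    have hvj : 0 < v j := lt_of_le_of_ne (hpk.1 j) (Ne.symm hj)
    have hy : IsParkingFunction n u (Function.update v j 0) := by
      rw [park_iff hu]
      refine ⟨fun i => ?_, ρ.symm, fun m => ?_⟩
      · by_cases hij : i = j
        · subst hij; rw [Function.update_self]
        · rw [Function.update_of_ne hij]; exact hpk.1 i
      · by_cases hm : ρ.symm m = j
        · rw [hm, Function.update_self]; exact hun m
        · rw [Function.update_of_ne hm]; exact hpk.2 m
    have hle := hc _ hy
    rw [sum_mul_update] at hle
    by_contra hneg
    push_neg at hneg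
    nlinarith
  · intro i j hij
    have hne : i ≠ j := fun h => by subst h; exact lt_irrefl _ hij
    have hy : IsParkingFunction n u (fun m => v (Equiv.swap i j m)) := by
      rw [park_iff hu]
      refine ⟨fun m => hpk.1 _, ρ.symm.trans (Equiv.swap i j), fun m => ?_⟩
      simp only [Equiv.trans_apply, Equiv.swap_apply_self]
      exact hpk.2 m
    have hle := hc _ hy
    rw [sum_mul_swap c v hne] at hle
    by_contra hneg
    push_neg at hneg
    nlinarith

lemma test_zero {u : Fin n → ℝ} (hu : Monotone u) (hun : ∀ i, 0 ≤ u i)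
    {K : ℕ} (hKn : K ≤ n) {ρ : Equiv.Perm (Fin n)} {v : Fin n → ℝ}
    (hv : ∀ i, v i = if ((ρ i : ℕ) < K) then 0 else u (ρ i))
    (hupos : ∀ m : Fin n, K ≤ (m : ℕ) → 0 < u m)
    (hKm : Nat.card {i : Fin n // u i = 0} < K)
    {c : Fin n → ℝ}
    (hc : ∀ y, IsParkingFunction n u y → ∑ i, c i * y i ≤ ∑ i, c i * v i) :
    ∀ i, v i = 0 → c i ≤ 0 := by
  classical
  have hpk := park_nonneg_le hun hv
  set m₀ := Nat.card {i : Fin n // u i = 0} with hm₀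
  have hm₀n : m₀ < n := lt_of_lt_of_le hKm hKn
  set M : Fin n := ⟨m₀, hm₀n⟩ with hM
  have hεpos : 0 < u M := by
    refine lt_of_le_of_ne (hun M) (Ne.symm fun h => ?_)
    have := (zeros_card hu hun M).1 h
    simp only [hM, Fin.val_mk] at this
    omega
  intro i hvi
  have hρi : (ρ i : ℕ) < K := by
    by_contra h
    push_neg at h
    rw [hv i, if_neg (not_lt.2 h)] at hvi
    exact (hupos (ρ i) h).ne' hvi
  have hK1 : K - 1 < n := by omega
  set KK : Fin n := ⟨K - 1, hK1⟩ with hKK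
  set t : Equiv.Perm (Fin n) := Equiv.swap (ρ i) KK with ht
  have hy : IsParkingFunction n u (Function.update v i (u M)) := by
    rw [park_iff hu]
    refine ⟨fun j => ?_, t.trans ρ.symm, fun m => ?_⟩
    · by_cases hij : j = i
      · subst hij; rw [Function.update_self]; exact hεpos.le
      · rw [Function.update_of_ne hij]; exact hpk.1 j
    · simp only [Equiv.trans_apply]
      by_cases h1 : t m = ρ i
      · have hmKK : m = KK := by
          have : t (t m) = t (ρ i) := by rw [h1]
          rwa [ht, Equiv.swap_apply_self, Equiv.swap_apply_left] at this
        have : ρ.symm (t m) = i := by rw [h1, Equiv.symm_apply_apply]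
        rw [this, Function.update_self, hmKK]
        exact hu (by simp only [hM, hKK, Fin.mk_le_mk]; omega)
      · have hne : ρ.symm (t m) ≠ i := fun h => h1 (by rw [← h, Equiv.apply_symm_apply])
        rw [Function.update_of_ne hne, hv (ρ.symm (t m)), Equiv.apply_symm_apply]
        by_cases h2 : ((t m : Fin n) : ℕ) < K
        · rw [if_pos h2]; exact hun m
        · rw [if_neg h2]
          have hmne1 : m ≠ ρ i := fun h => by
            subst h
            rw [ht, Equiv.swap_apply_left] at h2
            simp only [hKK, Fin.val_mk] at h2
            omega
          have hmne2 : m ≠ KK := fun h => by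
            subst h
            rw [ht, Equiv.swap_apply_right] at h2
            exact h2 hρi
          rw [ht, Equiv.swap_apply_of_ne_of_ne hmne1 hmne2]
  have hle := hc _ hy
  rw [sum_mul_update, hvi] at hle
  by_contra hneg
  push_neg at hneg
  nlinarith

/-! ### Normal cone: the two sufficiency directions -/

lemma cone_ge_full {u : Fin n → ℝ} (hu : Monotone u) (hun : ∀ i, 0 ≤ u i)
    {K : ℕ} (hKn : K ≤ n) {ρ : Equiv.Perm (Fin n)} {v : Fin n → ℝ}
    (hv : ∀ i, v i = if ((ρ i : ℕ) < K) then 0 else u (ρ i))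
    {c : Fin n → ℝ}
    (h1 : ∀ i, v i = 0 → c i ≤ 0) (h2 : ∀ j, v j ≠ 0 → 0 ≤ c j)
    (h3 : ∀ i j, v i < v j → c i ≤ c j)
    {y : Fin n → ℝ} (hy : IsParkingFunction n u y) :
    ∑ i, c i * y i ≤ ∑ i, c i * v i := by
  classical
  have hpk := park_nonneg_le hun hv
  set c' : Fin n → ℝ := fun i => if v i = 0 then 0 else c i with hc'
  have hc'0 : ∀ i, v i = 0 → c' i = 0 := fun i hi => by simp [hc', if_pos hi]
  have hc'pos : ∀ i, 0 ≤ c' i := by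
    intro i
    simp only [hc']
    by_cases hi : v i = 0
    · rw [if_pos hi]
    · rw [if_neg hi]; exact h2 i hi
  have hc'mono : Monovary c' v := by
    intro i j hij
    have hvj : v j ≠ 0 := (lt_of_le_of_lt (hpk.1 i) hij).ne'
    simp only [hc', if_neg hvj]
    by_cases hi : v i = 0
    · rw [if_pos hi]; exact h2 j hvj
    · rw [if_neg hi]; exact h3 i j hij
  have hmil := main_ineq hu hun hKn hv hc'0 hc'pos hc'mono hy
  have hy0 : ∀ i, 0 ≤ y i := hy.1
  have hstep1 : ∑ i, c i * y i ≤ ∑ i, c' i * y i := by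
    refine Finset.sum_le_sum fun i _ => ?_
    simp only [hc']
    by_cases hi : v i = 0
    · rw [if_pos hi, zero_mul]
      exact mul_nonpos_of_nonpos_of_nonneg (h1 i hi) (hy0 i)
    · rw [if_neg hi]
  have hstep2 : ∑ i, c' i * v i = ∑ i, c i * v i := by
    refine Finset.sum_congr rfl fun i _ => ?_
    simp only [hc']
    by_cases hi : v i = 0
    · rw [if_pos hi, hi, mul_zero, mul_zero]
    · rw [if_neg hi]
  calc ∑ i, c i * y i ≤ ∑ i, c' i * y i := hstep1
    _ ≤ ∑ i, c' i * v i := hmil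
    _ = ∑ i, c i * v i := hstep2

lemma cone_ge_shift (hn : 1 ≤ n) {u : Fin n → ℝ} (hu : Monotone u) (hun : ∀ i, 0 ≤ u i)
    {K : ℕ} (hKn : K ≤ n) {ρ : Equiv.Perm (Fin n)} {v : Fin n → ℝ}
    (hv : ∀ i, v i = if ((ρ i : ℕ) < K) then 0 else u (ρ i))
    (hKm : ∀ m : Fin n, (m : ℕ) < K → u m = 0)
    {c : Fin n → ℝ}
    (h2 : ∀ j, v j ≠ 0 → 0 ≤ c j)
    (h3 : ∀ i j, v i < v j → c i ≤ c j)
    {y : Fin n → ℝ} (hy : IsParkingFunction n u y) :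
    ∑ i, c i * y i ≤ ∑ i, c i * v i := by
  classical
  have hNE : Nonempty (Fin n) := ⟨⟨0, hn⟩⟩
  have hpk := park_nonneg_le hun hv
  set t : ℝ := Finset.univ.sup' Finset.univ_nonempty
    (fun i => if v i = 0 then max (c i) 0 else 0) with htdef
  have ht0 : 0 ≤ t := by
    obtain ⟨i0⟩ := hNE
    refine le_trans ?_ (Finset.le_sup' _ (Finset.mem_univ i0))
    by_cases hi : v i0 = 0
    · rw [if_pos hi]; exact le_max_right _ _
    · rw [if_neg hi]
  have htge : ∀ i, v i = 0 → c i ≤ t := by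
    intro i hi
    refine le_trans ?_ (Finset.le_sup' _ (Finset.mem_univ i))
    rw [if_pos hi]
    exact le_max_left _ _
  have htle : ∀ j, v j ≠ 0 → t ≤ c j := by
    intro j hj
    refine Finset.sup'_le _ _ fun i _ => ?_
    by_cases hi : v i = 0
    · rw [if_pos hi]
      refine max_le (h3 i j ?_) (h2 j hj)
      rw [hi]
      exact lt_of_le_of_ne (hpk.1 j) (Ne.symm hj)
    · rw [if_neg hi]; exact h2 j hj
  have hsumv : ∑ i, v i = ∑ i, u i := by
    rw [← Equiv.sum_comp ρ.symm v]
    refine Finset.sum_congr rfl fun m _ => ?_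
    rw [hv (ρ.symm m), Equiv.apply_symm_apply]
    by_cases hm : (m : ℕ) < K
    · rw [if_pos hm, hKm m hm]
    · rw [if_neg hm]
  have hsumy : ∑ i, y i ≤ ∑ i, v i := by rw [hsumv]; exact sum_park_le hy
  set c3 : Fin n → ℝ := fun i => c i - t with hc3
  have hmain : ∑ i, c3 i * y i ≤ ∑ i, c3 i * v i :=
    cone_ge_full hu hun hKn hv
      (fun i hi => by simp only [hc3]; linarith [htge i hi])
      (fun j hj => by simp only [hc3]; linarith [htle j hj])
      (fun i j hij => by
        simp only [hc3]
        have hvj : v j ≠ 0 := (lt_of_le_of_lt (hpk.1 i) hij).ne'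
        linarith [h3 i j hij]) hy
  have hexp : ∀ x : Fin n → ℝ, ∑ i, c i * x i = (∑ i, c3 i * x i) + t * ∑ i, x i := by
    intro x
    rw [Finset.mul_sum, ← Finset.sum_add_distrib]
    refine Finset.sum_congr rfl fun i _ => ?_
    simp only [hc3]
    ring
  rw [hexp y, hexp v]
  have : t * ∑ i, y i ≤ t * ∑ i, v i := mul_le_mul_of_nonneg_left hsumy ht0
  linarith

end PFAux

/-- The extreme points of `PF(u)` are exactly the `u`-extreme points, every
`u`-extreme point `v` has at least `m₀` zero coordinates (where `m₀` is the
number of zero coordinates of `u`, and `Z = {i : v i = 0}`), and the normal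
cone of `PF(u)` at `v` is described explicitly, according to whether
`|Z| = m₀` or `|Z| > m₀`. -/
theorem extremePoints_eq_uExtreme_and_normal_cones
    (n : ℕ) (hn : 1 ≤ n) (u : Fin n → ℝ)
    (hmono : Monotone u) (hnonneg : ∀ i, 0 ≤ u i) (hne : u ≠ 0) :
    Set.extremePoints ℝ (PF n u) = Xext n u ∧
    ∀ v ∈ Xext n u,
      Nat.card {i : Fin n // u i = 0} ≤ Nat.card {i : Fin n // v i = 0} ∧
      (Nat.card {i : Fin n // v i = 0} = Nat.card {i : Fin n // u i = 0} →
        ncone n (PF n u) v =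
          {c : Fin n → ℝ | (∀ j, v j ≠ 0 → 0 ≤ c j) ∧
            ∀ i j, v i < v j → c i ≤ c j}) ∧
      (Nat.card {i : Fin n // u i = 0} < Nat.card {i : Fin n // v i = 0} →
        ncone n (PF n u) v =
          {c : Fin n → ℝ | (∀ i, v i = 0 → c i ≤ 0) ∧ (∀ j, v j ≠ 0 → 0 ≤ c j) ∧
            ∀ i j, v i < v j → c i ≤ c j}) := by
  classical
  constructor
  · exact PFAux.extreme_eq_xext hmono hnonneg
  · intro v hv
    obtain ⟨K, hKn, ρ, hv', hupos, hcardv, hcardu⟩ := PFAux.normalize hmono hnonneg hv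
    refine ⟨by rw [hcardv]; exact hcardu, ?_, ?_⟩
    · intro hKm
      have hKu : Nat.card {i : Fin n // u i = 0} = K := by rw [← hKm, hcardv]
      have hKmeq : ∀ m : Fin n, (m : ℕ) < K → u m = 0 := by
        intro m hm
        exact (PFAux.zeros_card hmono hnonneg m).2 (by rw [hKu]; exact hm)
      apply Set.Subset.antisymm
      · intro c hc
        have hc' := PFAux.mem_ncone_iff.1 hc
        have h23 := PFAux.tests hmono hnonneg hv' hc'
        exact ⟨h23.1, h23.2⟩
      · rintro c ⟨h2, h3⟩
        exact PFAux.mem_ncone_iff.2 fun y hy =>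
          PFAux.cone_ge_shift hn hmono hnonneg hKn hv' hKmeq h2 h3 hy
    · intro hKm
      have hKm' : Nat.card {i : Fin n // u i = 0} < K := by rw [← hcardv]; exact hKm
      apply Set.Subset.antisymm
      · intro c hc
        have hc' := PFAux.mem_ncone_iff.1 hc
        have h23 := PFAux.tests hmono hnonneg hv' hc'
        have h1 := PFAux.test_zero hmono hnonneg hKn hv' hupos hKm' hc'
        exact ⟨h1, h23.1, h23.2⟩
      · rintro c ⟨h1, h2, h3⟩
        exact PFAux.mem_ncone_iff.2 fun y hy =>
          PFAux.cone_ge_full hmono hnonneg hKn hv' h1 h2 h3 hy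
end
end

section
/- The cones attached to the u-extreme points cover all of ℝ^n: for every c ∈ ℝ^n there exists a u-extreme point v, with zero set Z = {i ∈ [n] : v_i = 0}, such that c ∈ C(v), where C(v) = {c ∈ ℝ^n : c_j ≥ 0 for all j ∉ Z, and c_i ≤ c_j whenever v_i < v_j} if |Z| = m_0, and C(v) = {c ∈ ℝ^n : c_i ≤ 0 for all i ∈ Z, c_j ≥ 0 for all j ∉ Z, and c_i ≤ c_j whenever v_i < v_j} if |Z| > m_0. -/
noncomputable section

lemma lower_iff {n : ℕ} (s : Finset (Fin n))
    (h : ∀ i j : Fin n, i ≤ j → j ∈ s → i ∈ s) (i : Fin n) :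
    i ∈ s ↔ (i : ℕ) < s.card := by
  constructor
  · intro hi
    have hsub : Finset.Iic i ⊆ s := fun j hj => h j i (Finset.mem_Iic.mp hj) hi
    have := Finset.card_le_card hsub
    rw [Fin.card_Iic] at this
    omega
  · intro hi
    by_contra hns
    have hsub : s ⊆ Finset.Iio i := by
      intro j hj
      rw [Finset.mem_Iio]
      by_contra hji
      exact hns (h i j (le_of_not_gt hji) hj)
    have := Finset.card_le_card hsub
    rw [Fin.card_Iio] at this
    omega

lemma card_lt_subtype {n M : ℕ} (h : M ≤ n) :
    Nat.card {i : Fin n // (i : ℕ) < M} = M := by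
  have e : {i : Fin n // (i : ℕ) < M} ≃ Fin M :=
    { toFun := fun x => ⟨x.1, x.2⟩
      invFun := fun j => ⟨⟨j, lt_of_lt_of_le j.isLt h⟩, j.isLt⟩
      left_inv := fun x => by ext; rfl
      right_inv := fun j => rfl }
  rw [Nat.card_congr e, Nat.card_eq_fintype_card, Fintype.card_fin]

/-- The cones `C(v)` attached to the `u`-extreme points cover all of `ℝⁿ`:
for every `c ∈ ℝⁿ` there is a `u`-extreme point `v`, with zero set
`Z = {i : v i = 0}` (of cardinality at least `m₀`, the number of zero coordinates
of `u`), such that `c ∈ C(v)`, where `C(v)` is the stated cone according to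
whether `|Z| = m₀` or `|Z| > m₀`. -/
theorem extreme_cones_cover
    (n : ℕ) (hn : 1 ≤ n) (u : Fin n → ℝ)
    (hmono : Monotone u) (hnonneg : ∀ i, 0 ≤ u i) (hne : u ≠ 0)
    (c : Fin n → ℝ) :
    ∃ v : Fin n → ℝ, IsUExtreme n u v ∧
      ((Nat.card {i : Fin n // v i = 0} = Nat.card {i : Fin n // u i = 0} ∧
          c ∈ {c' : Fin n → ℝ | (∀ j, v j ≠ 0 → 0 ≤ c' j) ∧
            ∀ i j, v i < v j → c' i ≤ c' j}) ∨
       (Nat.card {i : Fin n // u i = 0} < Nat.card {i : Fin n // v i = 0} ∧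
          c ∈ {c' : Fin n → ℝ | (∀ i, v i = 0 → c' i ≤ 0) ∧
            (∀ j, v j ≠ 0 → 0 ≤ c' j) ∧ ∀ i j, v i < v j → c' i ≤ c' j})) := by
  classical
  set τ : Equiv.Perm (Fin n) := Tuple.sort c with hτ
  set g : Fin n → ℝ := c ∘ τ with hg
  have hgmono : Monotone g := Tuple.monotone_sort c
  set k : ℕ := (Finset.univ.filter (fun j : Fin n => g j < 0)).card with hkdef
  set m₀ : ℕ := (Finset.univ.filter (fun j : Fin n => u j = 0)).card with hmdef
  have hk : ∀ j : Fin n, g j < 0 ↔ (j : ℕ) < k := by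
    intro j
    have := lower_iff (Finset.univ.filter (fun j : Fin n => g j < 0))
      (fun i j hij hj => by
        simp only [Finset.mem_filter, Finset.mem_univ, true_and] at *
        exact lt_of_le_of_lt (hgmono hij) hj) j
    simpa using this
  have hm : ∀ j : Fin n, u j = 0 ↔ (j : ℕ) < m₀ := by
    intro j
    have := lower_iff (Finset.univ.filter (fun j : Fin n => u j = 0))
      (fun i j hij hj => by
        simp only [Finset.mem_filter, Finset.mem_univ, true_and] at *
        exact le_antisymm (hj ▸ hmono hij) (hnonneg i)) j
    simpa using this
  have hkn : k ≤ n := by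
    have := Finset.card_filter_le (Finset.univ : Finset (Fin n)) (fun j : Fin n => g j < 0)
    simpa using this
  have hmn : m₀ ≤ n := by
    have := Finset.card_filter_le (Finset.univ : Finset (Fin n)) (fun j : Fin n => u j = 0)
    simpa using this
  set v : Fin n → ℝ := fun i => if ((τ.symm i : Fin n) : ℕ) < k then 0 else u (τ.symm i) with hv
  have hci : ∀ i, c i = g (τ.symm i) := by
    intro i; simp [hg]
  -- characterization of zeros of v
  have hvz : ∀ i, v i = 0 ↔ ((τ.symm i : Fin n) : ℕ) < max k m₀ := by
    intro i
    rw [hv]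
    by_cases h : ((τ.symm i : Fin n) : ℕ) < k
    · simp [h, lt_of_lt_of_le h (le_max_left _ _)]
    · simp only [h, if_false]
      rw [hm]
      omega
  have hvnonneg : ∀ i, 0 ≤ v i := by
    intro i
    rw [hv]
    by_cases h : ((τ.symm i : Fin n) : ℕ) < k
    · simp [h]
    · simp [h, hnonneg]
  -- card of zero set of v
  have hcardv : Nat.card {i : Fin n // v i = 0} = max k m₀ := by
    have e : {i : Fin n // v i = 0} ≃ {j : Fin n // (j : ℕ) < max k m₀} :=
      (τ.symm).subtypeEquiv (fun i => hvz i)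
    rw [Nat.card_congr e, card_lt_subtype (by omega)]
  have hcardu : Nat.card {i : Fin n // u i = 0} = m₀ := by
    have e : {i : Fin n // u i = 0} ≃ {j : Fin n // (j : ℕ) < m₀} :=
      (Equiv.refl (Fin n)).subtypeEquiv (fun i => by simpa using hm i)
    rw [Nat.card_congr e, card_lt_subtype hmn]
  -- cone conditions
  have hpos : ∀ j, v j ≠ 0 → 0 ≤ c j := by
    intro j hj
    have hj2 := (hvz j).not.1 hj
    have hk' : ¬ ((τ.symm j : Fin n) : ℕ) < k := by omega
    rw [hci j]
    by_contra hcj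
    exact hk' ((hk _).1 (lt_of_not_ge hcj))
  have hmon : ∀ i j, v i < v j → c i ≤ c j := by
    intro i j hij
    have hji : v j ≠ 0 := by
      have := hvnonneg i; intro h0; rw [h0] at hij; linarith
    have hjb : ¬ ((τ.symm j : Fin n) : ℕ) < k := by
      have := (hvz j).not.1 hji; omega
    have hvj : v j = u (τ.symm j) := by rw [hv]; simp [hjb]
    have hab : (τ.symm i : Fin n) ≤ τ.symm j := by
      by_cases ha : ((τ.symm i : Fin n) : ℕ) < k
      · exact Fin.le_def.mpr (by omega)
      · have hvi : v i = u (τ.symm i) := by rw [hv]; simp [ha]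
        by_contra hba
        have := hmono (le_of_not_ge hba)
        rw [← hvi, ← hvj] at this
        linarith
    rw [hci i, hci j]
    exact hgmono hab
  refine ⟨v, ⟨k, hkn, τ.symm, fun i => rfl⟩, ?_⟩
  by_cases hkm : k ≤ m₀
  · left
    refine ⟨by rw [hcardv, hcardu, max_eq_right hkm], hpos, hmon⟩
  · right
    refine ⟨by rw [hcardv, hcardu]; omega, ?_, hpos, hmon⟩
    intro i hi
    have hi2 : ((τ.symm i : Fin n) : ℕ) < k := by
      have := (hvz i).1 hi; omega
    rename' hi2 => hi
    rw [hci i]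
    exact le_of_lt ((hk _).2 hi)
end
end

section
/- The parking function polytope has the inequality description PF(u) = {x ∈ ℝ^n : x_i ≥ 0 for every i ∈ [n], and Σ_{i∈I} x_i ≤ u_n + u_{n−1} + ⋯ + u_{n−|I|+1} for every nonempty subset I ⊆ [n]}. -/
noncomputable section

/-- The sum of the `k` largest-index coordinates of `u`, i.e.
`u n + u (n-1) + ⋯ + u (n-k+1)` (in 1-indexed notation). -/
def topSum (n : ℕ) (u : Fin n → ℝ) (k : ℕ) : ℝ :=
  ∑ i ∈ Finset.univ.filter (fun i : Fin n => n - k ≤ (i : ℕ)), u i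

/-- order embedding bound -/
lemma aux_orderEmb_le {k n : ℕ} (hk : k ≤ n) (e : Fin k ↪o Fin n) (i : Fin k) :
    (e i : ℕ) ≤ n - k + i := by
  have key : ∀ (d : ℕ) (i : Fin k) (h : i.val + d < k), (e i : ℕ) + d ≤ (e ⟨i.val + d, h⟩ : ℕ) := by
    intro d
    induction d with
    | zero => intro i h; simp
    | succ d ih =>
      intro i h
      have h1 : i.val + d < k := by omega
      have h2 := ih i h1
      have h3 : (e ⟨i.val + d, h1⟩ : Fin n) < e ⟨i.val + d + 1, by omega⟩ :=
        e.strictMono (by simp [Fin.lt_def])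
      have h4 : (e ⟨i.val + d, h1⟩ : ℕ) < (e ⟨i.val + d + 1, by omega⟩ : ℕ) := h3
      have h5 : (⟨i.val + (d + 1), h⟩ : Fin k) = ⟨i.val + d + 1, by omega⟩ := Fin.ext rfl
      rw [h5]
      omega
  have hik := i.isLt
  have h2 := key (k - 1 - i.val) i (by omega)
  have h3 : (e ⟨i.val + (k - 1 - i.val), by omega⟩ : ℕ) < n := (e _).isLt
  omega

/-- topSum as a range sum -/
lemma aux_topSum_eq {n : ℕ} (hn : 1 ≤ n) (u : Fin n → ℝ) {k : ℕ} (hk : k ≤ n)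
    (W : ℕ → ℝ) (hW : ∀ (j : ℕ) (h : j < n), W j = u (Fin.rev ⟨j, h⟩)) :
    topSum n u k = ∑ j ∈ Finset.range k, W j := by
  unfold topSum
  refine Finset.sum_nbij' (fun i : Fin n => n - 1 - (i : ℕ)) (fun j : ℕ => (⟨n - 1 - j, by omega⟩ : Fin n))
    ?_ ?_ ?_ ?_ ?_
  · intro a ha
    simp only [Finset.mem_filter, Finset.mem_univ, true_and] at ha
    have := a.isLt
    simp only [Finset.mem_range]
    omega
  · intro a ha
    simp only [Finset.mem_range] at ha
    simp only [Finset.mem_filter, Finset.mem_univ, true_and]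
    omega
  · intro a ha
    simp only [Finset.mem_filter, Finset.mem_univ, true_and] at ha
    have := a.isLt
    exact Fin.ext (by simp; omega)
  · intro a ha
    simp only [Finset.mem_range] at ha
    simp only
    omega
  · intro a ha
    simp only [Finset.mem_filter, Finset.mem_univ, true_and] at ha
    have h1 : n - 1 - (a : ℕ) < n := by have := a.isLt; omega
    rw [hW _ h1]
    congr 1
    exact Fin.ext (by simp [Fin.val_rev]; omega)

/-- sum over any subset is at most the corresponding top sum -/
lemma aux_sum_le_topSum {n : ℕ} (hn : 1 ≤ n) {u : Fin n → ℝ} (hmono : Monotone u)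
    (J : Finset (Fin n)) : ∑ j ∈ J, u j ≤ topSum n u J.card := by
  set k := J.card with hkdef
  have hk : k ≤ n := by
    simpa using Finset.card_le_univ J
  set e : Fin k ↪o Fin n := J.orderEmbOfFin rfl with he
  have hJ : J = Finset.univ.map ⟨e, e.injective⟩ := by
    ext j
    simp only [Finset.mem_map, Finset.mem_univ, true_and, Function.Embedding.coeFn_mk]
    constructor
    · intro hj
      have : j ∈ Set.range e := by rw [Finset.range_orderEmbOfFin]; exact hj
      exact this
    · rintro ⟨i, rfl⟩
      exact Finset.orderEmbOfFin_mem _ _ _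
  set W : ℕ → ℝ := fun j => if h : j < n then u ⟨n - 1 - j, by omega⟩ else 0 with hWdef
  have step1 : ∑ j ∈ J, u j = ∑ i : Fin k, u (e i) := by
    rw [hJ, Finset.sum_map]
    rfl
  have step2 : ∑ i : Fin k, u (e i) ≤ ∑ i : Fin k, W (k - 1 - (i : ℕ)) := by
    apply Finset.sum_le_sum
    intro i _
    have hik := i.isLt
    have h1 : k - 1 - (i : ℕ) < n := by omega
    rw [hWdef]
    simp only [dif_pos h1]
    apply hmono
    have := aux_orderEmb_le hk e i
    rw [Fin.le_def]
    simp only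
    omega
  have step3 : ∑ i : Fin k, W (k - 1 - (i : ℕ)) = ∑ j ∈ Finset.range k, W j := by
    rw [Fin.sum_univ_eq_sum_range (fun m => W (k - 1 - m)) k]
    exact Finset.sum_range_reflect W k
  rw [aux_topSum_eq hn u hk W (fun j h => by
    rw [hWdef]
    simp only [dif_pos h]
    congr 1
    exact Fin.ext (by simp [Fin.val_rev]; omega))]
  calc ∑ j ∈ J, u j = ∑ i : Fin k, u (e i) := step1
    _ ≤ _ := step2
    _ = _ := step3

/-- Abel summation estimate -/
lemma aux_abel (D e : ℕ → ℝ) (p : ℕ) (hD : ∀ i, i + 1 < p → D (i + 1) ≤ D i)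
    (hD0 : ∀ i, i < p → 0 ≤ D i)
    (hE : ∀ k, k ≤ p → ∑ j ∈ Finset.range k, e j ≤ 0) :
    ∑ j ∈ Finset.range p, D j * e j ≤ 0 := by
  rcases Nat.eq_zero_or_pos p with hp | hp
  · simp [hp]
  have habel := Finset.sum_range_by_parts D e p
  simp only [smul_eq_mul] at habel
  rw [habel]
  have h1 : D (p - 1) * ∑ i ∈ Finset.range p, e i ≤ 0 :=
    mul_nonpos_of_nonneg_of_nonpos (hD0 _ (by omega)) (hE p le_rfl)
  have h2 : 0 ≤ ∑ i ∈ Finset.range (p - 1), (D (i + 1) - D i) * ∑ j ∈ Finset.range (i + 1), e j := by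
    apply Finset.sum_nonneg
    intro i hi
    simp only [Finset.mem_range] at hi
    have h3 : D (i + 1) - D i ≤ 0 := by have := hD i (by omega); linarith
    have h4 : ∑ j ∈ Finset.range (i + 1), e j ≤ 0 := hE (i + 1) (by omega)
    nlinarith
  linarith
/-- greedy vertex -/
def vertAux (n : ℕ) (u : Fin n → ℝ) (τ : Equiv.Perm (Fin n)) (S : Finset (Fin n)) :
    Fin n → ℝ :=
  fun i => if τ.symm i ∈ S then u ((τ.symm i).rev) else 0

lemma vertAux_parking {n : ℕ} {u : Fin n → ℝ} (hmono : Monotone u)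
    (hnonneg : ∀ i, 0 ≤ u i) (τ : Equiv.Perm (Fin n)) (S : Finset (Fin n))
    (hS : ∀ j j' : Fin n, j' ≤ j → j ∈ S → j' ∈ S) :
    IsParkingFunction n u (vertAux n u τ S) := by
  constructor
  · intro i
    unfold vertAux
    split
    · exact hnonneg _
    · exact le_rfl
  · refine ⟨Fin.revPerm.trans τ, ?_, ?_⟩
    · intro i i' h
      simp only [Equiv.trans_apply, Fin.revPerm_apply, vertAux, Equiv.symm_apply_apply,
        Fin.rev_rev]
      by_cases h1 : Fin.rev i ∈ S
      · have h2 : Fin.rev i' ∈ S := hS _ _ (Fin.rev_le_rev.mpr h) h1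
        simp only [if_pos h1, if_pos h2]
        exact hmono h
      · simp only [if_neg h1]
        split
        · exact hnonneg _
        · exact le_rfl
    · intro i
      simp only [Equiv.trans_apply, Fin.revPerm_apply, vertAux, Equiv.symm_apply_apply,
        Fin.rev_rev]
      split
      · exact le_rfl
      · exact hnonneg _
lemma greedy {n : ℕ} (hn : 1 ≤ n) (u : Fin n → ℝ) (hmono : Monotone u)
    (hnonneg : ∀ i, 0 ≤ u i) (x : Fin n → ℝ) (hx0 : ∀ i, 0 ≤ x i)
    (hxI : ∀ I : Finset (Fin n), I.Nonempty → ∑ i ∈ I, x i ≤ topSum n u I.card)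
    (c : Fin n → ℝ) :
    ∃ (τ : Equiv.Perm (Fin n)) (S : Finset (Fin n)),
      (∀ j j' : Fin n, j' ≤ j → j ∈ S → j' ∈ S) ∧
      ∑ i, c i * x i ≤ ∑ i, c i * vertAux n u τ S i := by
  set τ := Tuple.sort (fun i => -c i) with hτ
  have hsort : Monotone ((fun i => -c i) ∘ τ) := Tuple.monotone_sort _
  have hanti : ∀ j j' : Fin n, j ≤ j' → c (τ j') ≤ c (τ j) := by
    intro j j' h
    have := hsort h
    simp only [Function.comp_apply] at this
    linarith
  set S : Finset (Fin n) := Finset.univ.filter (fun j => 0 < c (τ j)) with hSdef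
  have hSmem : ∀ j : Fin n, j ∈ S ↔ 0 < c (τ j) := by
    intro j; simp [hSdef]
  refine ⟨τ, S, ?_, ?_⟩
  · intro j j' h hj
    rw [hSmem] at *
    exact lt_of_lt_of_le hj (hanti j' j h)
  set d' : ℕ → ℝ := fun j => if h : j < n then c (τ ⟨j, h⟩) else 0 with hd'
  set y : ℕ → ℝ := fun j => if h : j < n then x (τ ⟨j, h⟩) else 0 with hy
  set W : ℕ → ℝ := fun j => if h : j < n then u (Fin.rev ⟨j, h⟩) else 0 with hW
  set D : ℕ → ℝ := fun j => max (d' j) 0 with hDdef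
  have hy0 : ∀ j, 0 ≤ y j := by
    intro j
    rw [hy]
    dsimp only
    split
    · exact hx0 _
    · exact le_rfl
  have stepA : ∑ i, c i * x i = ∑ j ∈ Finset.range n, d' j * y j := by
    rw [← Equiv.sum_comp τ (fun i => c i * x i), ← Fin.sum_univ_eq_sum_range (fun j => d' j * y j) n]
    apply Finset.sum_congr rfl
    intro j _
    simp only [hd', hy, dif_pos j.isLt, Fin.eta]
  have stepB : ∑ j ∈ Finset.range n, d' j * y j ≤ ∑ j ∈ Finset.range n, D j * y j := by
    apply Finset.sum_le_sum
    intro j _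
    exact mul_le_mul_of_nonneg_right (le_max_left _ _) (hy0 j)
  have stepC : ∑ j ∈ Finset.range n, D j * (y j - W j) ≤ 0 := by
    apply aux_abel
    · intro i hi
      have h1 : d' (i + 1) ≤ d' i := by
        rw [hd']
        simp only [dif_pos (show i < n by omega), dif_pos (show i + 1 < n from hi)]
        exact hanti ⟨i, by omega⟩ ⟨i + 1, hi⟩ (by simp [Fin.le_def])
      exact max_le_max h1 le_rfl
    · intro i _
      exact le_max_right _ _
    · intro k hk
      rcases Nat.eq_zero_or_pos k with hk0 | hk0
      · simp [hk0]
      rw [Finset.sum_sub_distrib]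
      set Jk : Finset (Fin n) := Finset.univ.map (Fin.castLEEmb hk) with hJk
      set Ik : Finset (Fin n) := Jk.image τ with hIk
      have hyk : ∑ j ∈ Finset.range k, y j = ∑ i ∈ Ik, x i := by
        rw [hIk, Finset.sum_image (fun a _ b _ h => τ.injective h), hJk, Finset.sum_map,
          ← Fin.sum_univ_eq_sum_range y k]
        apply Finset.sum_congr rfl
        intro i _
        have hin : (i : ℕ) < n := lt_of_lt_of_le i.isLt hk
        rw [hy]
        simp only [dif_pos hin]
        rfl
      have hcard : Ik.card = k := by
        rw [hIk, Finset.card_image_of_injective _ τ.injective, hJk, Finset.card_map,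
          Finset.card_univ, Fintype.card_fin]
      have hne : Ik.Nonempty := by
        refine ⟨τ (Fin.castLEEmb hk ⟨0, hk0⟩), ?_⟩
        rw [hIk]
        exact Finset.mem_image_of_mem _ (by rw [hJk]; exact Finset.mem_map_of_mem _ (Finset.mem_univ _))
      have hxle := hxI Ik hne
      rw [hcard] at hxle
      have hWk : ∑ j ∈ Finset.range k, W j = topSum n u k :=
        (aux_topSum_eq hn u hk W (fun j h => by rw [hW]; simp only [dif_pos h])).symm
      rw [hyk, hWk]
      linarith
  have stepD : ∑ j ∈ Finset.range n, D j * y j ≤ ∑ j ∈ Finset.range n, D j * W j := by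
    simp only [mul_sub] at stepC
    rw [Finset.sum_sub_distrib] at stepC
    linarith
  have stepE : ∑ j ∈ Finset.range n, D j * W j = ∑ i, c i * vertAux n u τ S i := by
    rw [← Equiv.sum_comp τ (fun i => c i * vertAux n u τ S i),
      ← Fin.sum_univ_eq_sum_range (fun j => D j * W j) n]
    apply Finset.sum_congr rfl
    intro j _
    have hv : vertAux n u τ S (τ j) = if j ∈ S then u (Fin.rev j) else 0 := by
      unfold vertAux
      rw [Equiv.symm_apply_apply]
    rw [hv]
    by_cases hj : 0 < c (τ j)
    · have hjS : j ∈ S := (hSmem j).mpr hj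
      rw [if_pos hjS, hDdef, hW]
      simp only [hd', dif_pos j.isLt, Fin.eta]
      rw [max_eq_left (le_of_lt hj)]
    · have hjS : j ∉ S := fun h => hj ((hSmem j).mp h)
      rw [if_neg hjS, mul_zero, hDdef]
      simp only [hd', dif_pos j.isLt, Fin.eta]
      rw [max_eq_right (not_lt.mp hj), zero_mul]
  calc ∑ i, c i * x i = ∑ j ∈ Finset.range n, d' j * y j := stepA
    _ ≤ ∑ j ∈ Finset.range n, D j * y j := stepB
    _ ≤ ∑ j ∈ Finset.range n, D j * W j := stepD
    _ = ∑ i, c i * vertAux n u τ S i := stepE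

/-- Inequality description of the parking function polytope:
`PF(u) = {x : x i ≥ 0 for all i, and ∑_{i ∈ I} x i ≤ u_n + ⋯ + u_{n-|I|+1}`
for every nonempty `I ⊆ [n]}`. -/
theorem parking_polytope_inequality_description
    (n : ℕ) (hn : 1 ≤ n) (u : Fin n → ℝ)
    (hmono : Monotone u) (hnonneg : ∀ i, 0 ≤ u i) (hne : u ≠ 0) :
    PF n u = {x : Fin n → ℝ | (∀ i, 0 ≤ x i) ∧
      ∀ I : Finset (Fin n), I.Nonempty → ∑ i ∈ I, x i ≤ topSum n u I.card} := by
  set R : Set (Fin n → ℝ) := {x : Fin n → ℝ | (∀ i, 0 ≤ x i) ∧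
      ∀ I : Finset (Fin n), I.Nonempty → ∑ i ∈ I, x i ≤ topSum n u I.card} with hR
  have hsubR : {a | IsParkingFunction n u a} ⊆ R := by
    rintro a ⟨ha0, σ, hbmono, hbu⟩
    refine ⟨ha0, ?_⟩
    intro I _
    classical
    set J := I.image σ.symm with hJ
    have hsum : ∑ j ∈ J, a (σ j) = ∑ i ∈ I, a i := by
      rw [hJ, Finset.sum_image (fun p _ q _ h => σ.symm.injective h)]
      apply Finset.sum_congr rfl
      intro i _
      rw [Equiv.apply_symm_apply]
    have hcard : J.card = I.card := Finset.card_image_of_injective _ σ.symm.injective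
    calc ∑ i ∈ I, a i = ∑ j ∈ J, a (σ j) := hsum.symm
      _ ≤ ∑ j ∈ J, u j := Finset.sum_le_sum (fun j _ => hbu j)
      _ ≤ topSum n u J.card := aux_sum_le_topSum hn hmono J
      _ = topSum n u I.card := by rw [hcard]
  have hconv : Convex ℝ R := by
    intro p hp q hq s t hs ht hst
    constructor
    · intro i
      have h1 : (s • p + t • q) i = s * p i + t * q i := rfl
      rw [h1]
      exact add_nonneg (mul_nonneg hs (hp.1 i)) (mul_nonneg ht (hq.1 i))
    · intro I hI
      have h1 : ∑ i ∈ I, (s • p + t • q) i = s * ∑ i ∈ I, p i + t * ∑ i ∈ I, q i := by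
        rw [Finset.mul_sum, Finset.mul_sum, ← Finset.sum_add_distrib]
        exact Finset.sum_congr rfl (fun i _ => rfl)
      rw [h1]
      have h2 : s * ∑ i ∈ I, p i ≤ s * topSum n u I.card :=
        mul_le_mul_of_nonneg_left (hp.2 I hI) hs
      have h3 : t * ∑ i ∈ I, q i ≤ t * topSum n u I.card :=
        mul_le_mul_of_nonneg_left (hq.2 I hI) ht
      have h4 : s * topSum n u I.card + t * topSum n u I.card = topSum n u I.card := by
        rw [← add_mul, hst, one_mul]
      linarith
  apply Set.Subset.antisymm
  · exact convexHull_min hsubR hconv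
  · intro x hx
    obtain ⟨hx0, hxI⟩ := hx
    classical
    set V : Set (Fin n → ℝ) :=
      (Set.range fun ts : Equiv.Perm (Fin n) × Finset (Fin n) => vertAux n u ts.1 ts.2) ∩
        {a | IsParkingFunction n u a} with hV
    have hVfin : V.Finite := Set.Finite.inter_of_left (Set.finite_range _) _
    have hQPF : convexHull ℝ V ⊆ PF n u := convexHull_mono Set.inter_subset_right
    suffices hxQ : x ∈ convexHull ℝ V from hQPF hxQ
    by_contra hxQ
    obtain ⟨f, sep, hfs, hsx⟩ :=
      geometric_hahn_banach_closed_point (convex_convexHull ℝ V) (hVfin.isClosed_convexHull (𝕜 := ℝ)) hxQ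
    set c : Fin n → ℝ := fun i => f (Pi.single i 1) with hc
    have hrepr : ∀ y : Fin n → ℝ, f y = ∑ i, c i * y i := by
      intro y
      have hy : y = ∑ i, y i • (Pi.single i 1 : Fin n → ℝ) := by
        funext j
        rw [Finset.sum_apply]
        simp [Pi.single_apply]
      conv_lhs => rw [hy]
      rw [map_sum]
      apply Finset.sum_congr rfl
      intro i _
      rw [map_smul]
      simp [hc, smul_eq_mul, mul_comm]
    obtain ⟨τ, S, hSdc, hineq⟩ := greedy hn u hmono hnonneg x hx0 hxI c
    have hpark := vertAux_parking hmono hnonneg τ S hSdc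
    have haV : vertAux n u τ S ∈ V := ⟨⟨(τ, S), rfl⟩, hpark⟩
    have h1 : f (vertAux n u τ S) < sep := hfs _ (subset_convexHull ℝ V haV)
    have h2 : f x ≤ f (vertAux n u τ S) := by
      rw [hrepr, hrepr]
      exact hineq
    linarith
end
end

section
/- For each i ∈ [n], the set {x ∈ PF(u) : x_i = 0} is a facet of PF(u). For a nonempty subset I ⊆ [n], the set F_I = {x ∈ PF(u) : Σ_{i∈I} x_i = u_n + u_{n−1} + ⋯ + u_{n−|I|+1}} is a facet of PF(u) if and only if: (1) if u = (d,…,d) for some d > 0, then |I| = 1; (2) if u = (0,…,0,d) for some d > 0, then |I| = n; (3) if u = (0,…,0,d,…,d) for some d > 0 with at least one zero and at least two entries equal to d, then |I| ∈ {1, n}; (4) if u has at least two distinct positive coordinate values and multiplicity vector m(u) = (m_0, m_1, …, m_ℓ), then |I| ∈ {1, n} or m_ℓ + 1 ≤ |I| ≤ n − m_0 − 1. -/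
noncomputable section

/-- `F` is an exposed face of `P`: the maximizing set of some linear functional. -/
def IsExposedFaceOf (n : ℕ) (P F : Set (Fin n → ℝ)) : Prop :=
  ∃ w : Fin n → ℝ, F = {x ∈ P | ∀ y ∈ P, ∑ i, w i * y i ≤ ∑ i, w i * x i}

/-- `F` is a facet of the `n`-dimensional polytope `P ⊆ ℝⁿ`: a nonempty exposed
face whose affine hull has dimension `n - 1`. -/
def IsFacetOf (n : ℕ) (P F : Set (Fin n → ℝ)) : Prop :=
  IsExposedFaceOf n P F ∧ F.Nonempty ∧
    Module.finrank ℝ (affineSpan ℝ F).direction = n - 1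


namespace PFP
open Finset


open Finset

def Tk (n k : ℕ) : Finset (Fin n) := Finset.univ.filter (fun i : Fin n => n - k ≤ (i : ℕ))

lemma mem_Tk {n k : ℕ} {i : Fin n} : i ∈ Tk n k ↔ n - k ≤ (i : ℕ) := by
  simp [Tk]

lemma card_filter_ge (n m : ℕ) :
    ((Finset.univ : Finset (Fin n)).filter fun i : Fin n => m ≤ (i : ℕ)).card = n - m := by
  rcases le_or_gt n m with h | h
  · rw [Nat.sub_eq_zero_of_le h, Finset.card_eq_zero, Finset.filter_eq_empty_iff]
    intro i _
    have := i.isLt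
    omega
  · have : ((Finset.univ : Finset (Fin n)).filter fun i : Fin n => m ≤ (i : ℕ)) = Finset.Ici (⟨m, h⟩ : Fin n) := by
      ext i
      simp [Fin.le_def]
    rw [this, Fin.card_Ici]

lemma card_Tk {n k : ℕ} : (Tk n k).card = n - (n - k) := card_filter_ge n (n - k)

lemma card_Tk_of_le {n k : ℕ} (h : k ≤ n) : (Tk n k).card = k := by
  rw [card_Tk]; omega

lemma topSum_eq (n : ℕ) (u : Fin n → ℝ) (k : ℕ) : topSum n u k = ∑ i ∈ Tk n k, u i := rfl

variable {n : ℕ} {u : Fin n → ℝ}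

lemma monotone_sum_le (b : Fin n → ℝ) (hb : Monotone b) (J : Finset (Fin n)) :
    ∑ j ∈ J, b j ≤ ∑ j ∈ Tk n J.card, b j := by
  set k := J.card with hk
  rcases Nat.eq_zero_or_pos k with h0 | hpos
  · have hJ : J = ∅ := Finset.card_eq_zero.mp h0
    have hT : Tk n k = ∅ := by
      ext i
      simp only [mem_Tk, Finset.notMem_empty, iff_false]
      have := i.isLt
      omega
    simp [hJ, hT]
  · have hkn : k ≤ n := by
      have := Finset.card_le_univ J
      simpa [Fintype.card_fin] using this
    have hnk : n - k < n := by omega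
    set β := b ⟨n - k, hnk⟩ with hβ
    have hcard : (J \ Tk n k).card = (Tk n k \ J).card := by
      have h1 := Finset.card_sdiff_add_card_inter J (Tk n k)
      have h2 := Finset.card_sdiff_add_card_inter (Tk n k) J
      rw [Finset.inter_comm] at h2
      have := card_Tk_of_le (n := n) hkn
      omega
    have hle1 : ∑ j ∈ J \ Tk n k, b j ≤ (J \ Tk n k).card • β := by
      apply Finset.sum_le_card_nsmul
      intro x hx
      have hx' : ¬ (n - k ≤ (x : ℕ)) := by
        have := (Finset.mem_sdiff.mp hx).2
        simpa [mem_Tk] using this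
      exact hb (by simp [Fin.le_def]; omega)
    have hle2 : (Tk n k \ J).card • β ≤ ∑ j ∈ Tk n k \ J, b j := by
      apply Finset.card_nsmul_le_sum
      intro x hx
      have hx' : n - k ≤ (x : ℕ) := mem_Tk.mp (Finset.mem_sdiff.mp hx).1
      exact hb (by simp [Fin.le_def]; omega)
    calc ∑ j ∈ J, b j = ∑ j ∈ J ∩ Tk n k, b j + ∑ j ∈ J \ Tk n k, b j :=
          (Finset.sum_inter_add_sum_sdiff J (Tk n k) b).symm
      _ ≤ ∑ j ∈ J ∩ Tk n k, b j + (Tk n k \ J).card • β := by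
          rw [← hcard]; exact add_le_add_right hle1 _
      _ ≤ ∑ j ∈ J ∩ Tk n k, b j + ∑ j ∈ Tk n k \ J, b j := add_le_add_right hle2 _
      _ = ∑ j ∈ Tk n k, b j := by
          rw [Finset.inter_comm]
          exact Finset.sum_inter_add_sum_sdiff (Tk n k) J b

lemma parking_sum_le (a : Fin n → ℝ) (ha : IsParkingFunction n u a)
    (I : Finset (Fin n)) : ∑ i ∈ I, a i ≤ topSum n u I.card := by
  obtain ⟨ha0, σ, hmon, hle⟩ := ha
  have h1 : ∑ i ∈ I, a i = ∑ j ∈ I.image σ.symm, a (σ j) := by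
    rw [Finset.sum_image (fun x _ y _ h => σ.symm.injective h)]
    exact Finset.sum_congr rfl fun i _ => by simp
  have hcard : (I.image σ.symm).card = I.card :=
    Finset.card_image_of_injective _ σ.symm.injective
  calc ∑ i ∈ I, a i = ∑ j ∈ I.image σ.symm, (fun i => a (σ i)) j := h1
    _ ≤ ∑ j ∈ Tk n (I.image σ.symm).card, (fun i => a (σ i)) j :=
        monotone_sum_le _ hmon _
    _ ≤ ∑ j ∈ Tk n I.card, u j := by
        rw [hcard]
        exact Finset.sum_le_sum fun j _ => hle j
    _ = topSum n u I.card := (topSum_eq n u I.card).symm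

lemma mem_PF_sum_le {x : Fin n → ℝ} (hx : x ∈ PF n u)
    (I : Finset (Fin n)) : ∑ i ∈ I, x i ≤ topSum n u I.card := by
  have : PF n u ⊆ {x : Fin n → ℝ | ∑ i ∈ I, x i ≤ topSum n u I.card} := by
    apply convexHull_min
    · intro a ha
      exact parking_sum_le a ha I
    · apply convex_halfSpace_le
      constructor
      · intro a b; simp [Finset.sum_add_distrib]
      · intro c a; simp [Finset.mul_sum]
  exact this hx

lemma mem_PF_nonneg {x : Fin n → ℝ} (hx : x ∈ PF n u) (i : Fin n) : 0 ≤ x i := by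
  have : PF n u ⊆ {x : Fin n → ℝ | 0 ≤ x i} := by
    apply convexHull_min
    · intro a ha; exact ha.1 i
    · apply convex_halfSpace_ge
      constructor
      · intro a b; simp
      · intro c a; simp
  exact this hx


open Finset

variable {n : ℕ}

lemma swap_mem_iff {I : Finset (Fin n)} {a b : Fin n} (h : a ∈ I ↔ b ∈ I) (t : Fin n) :
    Equiv.swap a b t ∈ I ↔ t ∈ I := by
  rcases eq_or_ne t a with rfl | hta
  · rw [Equiv.swap_apply_left]; exact h.symm
  rcases eq_or_ne t b with rfl | htb
  · rw [Equiv.swap_apply_right]; exact h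
  · rw [Equiv.swap_apply_of_ne_of_ne hta htb]

lemma exists_perm_mapsTo (I T : Finset (Fin n)) (h : I.card = T.card) :
    ∃ π : Equiv.Perm (Fin n), ∀ t, π t ∈ T ↔ t ∈ I := by
  classical
  have hcard1 : Fintype.card {x : Fin n // x ∈ I} = Fintype.card {x : Fin n // x ∈ T} := by
    simp [Fintype.card_coe, h]
  have hcard2 : Fintype.card {x : Fin n // ¬ x ∈ I} = Fintype.card {x : Fin n // ¬ x ∈ T} := by
    rw [Fintype.card_subtype_compl, Fintype.card_subtype_compl]
    simp [Fintype.card_coe, h]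
  let e1 := Fintype.equivOfCardEq hcard1
  let e2 := Fintype.equivOfCardEq hcard2
  refine ⟨(Equiv.sumCompl (· ∈ I)).symm.trans ((e1.sumCongr e2).trans
    (Equiv.sumCompl (· ∈ T))), fun t => ?_⟩
  by_cases ht : t ∈ I
  · simp only [Equiv.trans_apply, Equiv.sumCompl_symm_apply_of_pos ht,
      Equiv.sumCongr_apply, Sum.map_inl, Equiv.sumCompl_apply_inl]
    exact iff_of_true (e1 ⟨t, ht⟩).2 ht
  · simp only [Equiv.trans_apply, Equiv.sumCompl_symm_apply_of_neg ht,
      Equiv.sumCongr_apply, Sum.map_inr, Equiv.sumCompl_apply_inr]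
    exact iff_of_false (e2 ⟨t, ht⟩).2 ht

lemma exists_perm_pin1 {I T : Finset (Fin n)} (h : I.card = T.card) {i a : Fin n}
    (hia : (i ∈ I) ↔ (a ∈ T)) :
    ∃ π : Equiv.Perm (Fin n), (∀ t, π t ∈ T ↔ t ∈ I) ∧ π i = a := by
  obtain ⟨π0, hπ0⟩ := exists_perm_mapsTo I T h
  set c := π0.symm a with hc
  have hca : π0 c = a := by simp [hc]
  have hcI : c ∈ I ↔ i ∈ I := by rw [← hπ0 c, hca, hia]
  refine ⟨π0 * Equiv.swap i c, fun t => ?_, ?_⟩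
  · rw [Equiv.Perm.mul_apply, hπ0]
    exact swap_mem_iff hcI.symm t
  · rw [Equiv.Perm.mul_apply, Equiv.swap_apply_left, hca]

lemma exists_perm_pin2 {I T : Finset (Fin n)} (h : I.card = T.card) {i a i' b : Fin n}
    (hia : (i ∈ I) ↔ (a ∈ T)) (hib : (i' ∈ I) ↔ (b ∈ T)) (hii : i ≠ i') (hab : a ≠ b) :
    ∃ π : Equiv.Perm (Fin n), (∀ t, π t ∈ T ↔ t ∈ I) ∧ π i = a ∧ π i' = b := by
  obtain ⟨π1, hπ1, hπ1i⟩ := exists_perm_pin1 h hia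
  set c := π1.symm b with hc
  have hcb : π1 c = b := by simp [hc]
  have hcI : c ∈ I ↔ i' ∈ I := by rw [← hπ1 c, hcb, hib]
  refine ⟨π1 * Equiv.swap i' c, fun t => ?_, ?_, ?_⟩
  · rw [Equiv.Perm.mul_apply, hπ1]
    exact swap_mem_iff hcI.symm t
  · rw [Equiv.Perm.mul_apply]
    have hic : i ≠ c := by
      intro hic
      apply hab
      rw [← hπ1i, hic, hcb]
    rw [Equiv.swap_apply_of_ne_of_ne hii hic, hπ1i]
  · rw [Equiv.Perm.mul_apply, Equiv.swap_apply_left, hcb]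



variable {n : ℕ} {u : Fin n → ℝ}

def vt (u : Fin n → ℝ) (m : ℕ) : Fin n → ℝ := fun i => if m ≤ (i : ℕ) then u i else 0

lemma vt_monotone (hm : Monotone u) (h0 : ∀ i, 0 ≤ u i) (m : ℕ) : Monotone (vt u m) := by
  intro i j hij
  unfold vt
  have hij' : (i : ℕ) ≤ (j : ℕ) := hij
  by_cases hi : m ≤ (i : ℕ)
  · rw [if_pos hi, if_pos (le_trans hi hij')]
    exact hm hij
  · rw [if_neg hi]
    by_cases hj : m ≤ (j : ℕ)
    · rw [if_pos hj]; exact h0 j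
    · rw [if_neg hj]

lemma vt_le (h0 : ∀ i, 0 ≤ u i) (m : ℕ) (i : Fin n) : vt u m i ≤ u i := by
  unfold vt; split <;> simp [h0 i]

lemma vt_nonneg (h0 : ∀ i, 0 ≤ u i) (m : ℕ) (i : Fin n) : 0 ≤ vt u m i := by
  unfold vt; split <;> simp [h0 i]

lemma vt_eq_of_ge {m : ℕ} {i : Fin n} (h : m ≤ (i : ℕ)) : vt u m i = u i := if_pos h

lemma vt_eq_zero {m : ℕ} {i : Fin n} (h : ¬ m ≤ (i : ℕ)) : vt u m i = 0 := if_neg h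

lemma perm_parking {v : Fin n → ℝ} (hm : Monotone v) (h0 : ∀ i, 0 ≤ v i)
    (hle : ∀ i, v i ≤ u i) (π : Equiv.Perm (Fin n)) : IsParkingFunction n u (v ∘ π) := by
  refine ⟨fun i => h0 _, π.symm, ?_, ?_⟩
  · have : (fun i => (v ∘ π) (π.symm i)) = v := funext fun i => by simp
    rw [this]; exact hm
  · intro i
    simpa using hle i

lemma perm_mem_PF {v : Fin n → ℝ} (hm : Monotone v) (h0 : ∀ i, 0 ≤ v i)
    (hle : ∀ i, v i ≤ u i) (π : Equiv.Perm (Fin n)) : v ∘ π ∈ PF n u :=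
  subset_convexHull ℝ _ (perm_parking hm h0 hle π)

lemma image_eq_Tk {I : Finset (Fin n)} {k : ℕ} (hk : k ≤ n) (hcard : I.card = k)
    (π : Equiv.Perm (Fin n)) (hπ : ∀ t, π t ∈ Tk n k ↔ t ∈ I) : I.image π = Tk n k := by
  have hsub : I.image π ⊆ Tk n k := by
    intro j hj
    obtain ⟨i, hi, rfl⟩ := Finset.mem_image.mp hj
    exact (hπ i).mpr hi
  apply Finset.eq_of_subset_of_card_le hsub
  rw [Finset.card_image_of_injective _ π.injective, hcard]
  have hTc : (Tk n k).card = n - (n - k) := card_Tk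
  omega

lemma sum_on_I {I : Finset (Fin n)} {k : ℕ} (hk : k ≤ n) (hcard : I.card = k)
    (π : Equiv.Perm (Fin n)) (hπ : ∀ t, π t ∈ Tk n k ↔ t ∈ I)
    (v : Fin n → ℝ) (hvT : ∀ i ∈ Tk n k, v i = u i) :
    ∑ i ∈ I, (v ∘ π) i = topSum n u k := by
  have h1 : ∑ i ∈ I, (v ∘ π) i = ∑ j ∈ I.image π, v j := by
    rw [Finset.sum_image (fun x _ y _ h => π.injective h)]
    rfl
  rw [h1, image_eq_Tk hk hcard π hπ, topSum_eq]
  exact Finset.sum_congr rfl hvT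

section Finrank
open Module

lemma linearIndependent_aux (i0 : Fin n) (g : Fin n → (Fin n → ℝ))
    (hgd : ∀ i, i ≠ i0 → g i i ≠ 0) (hg0 : ∀ i t, i ≠ i0 → t ≠ i → t ≠ i0 → g i t = 0) :
    LinearIndependent ℝ (fun i : {i : Fin n // i ≠ i0} => g i) := by
  rw [Fintype.linearIndependent_iff]
  intro f hf j
  have hj : ∑ i : {i : Fin n // i ≠ i0}, f i * g (i : Fin n) (j : Fin n) = 0 := by
    have := congrFun hf (j : Fin n)
    simpa [Finset.sum_apply] using this
  rw [Finset.sum_eq_single j] at hj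
  · rcases mul_eq_zero.mp hj with h | h
    · exact h
    · exact absurd h (hgd j j.2)
  · intro i _ hij
    have hne : (j : Fin n) ≠ (i : Fin n) := fun h => hij (Subtype.ext h.symm)
    rw [hg0 i j i.2 hne j.2, mul_zero]
  · intro h
    exact absurd (Finset.mem_univ j) h

lemma finrank_ge_of_li {F : Set (Fin n → ℝ)} (i0 : Fin n) (g : Fin n → (Fin n → ℝ))
    (hmem : ∀ i, i ≠ i0 → ∃ p, p ∈ F ∧ ∃ q, q ∈ F ∧ p - q = g i)
    (hgd : ∀ i, i ≠ i0 → g i i ≠ 0) (hg0 : ∀ i t, i ≠ i0 → t ≠ i → t ≠ i0 → g i t = 0) :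
    n - 1 ≤ Module.finrank ℝ (affineSpan ℝ F).direction := by
  have hspan : Submodule.span ℝ (Set.range (fun i : {i : Fin n // i ≠ i0} => g i))
      ≤ (affineSpan ℝ F).direction := by
    rw [Submodule.span_le]
    rintro _ ⟨i, rfl⟩
    obtain ⟨p, hp, q, hq, hpq⟩ := hmem i i.2
    rw [direction_affineSpan]
    have := vsub_mem_vectorSpan ℝ hp hq
    rwa [vsub_eq_sub, hpq] at this
  have hli := linearIndependent_aux i0 g hgd hg0
  have hcard : Fintype.card {i : Fin n // i ≠ i0} = n - 1 := by
    rw [Fintype.card_subtype_compl, Fintype.card_subtype_eq, Fintype.card_fin]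
  calc n - 1 = Module.finrank ℝ (Submodule.span ℝ
        (Set.range (fun i : {i : Fin n // i ≠ i0} => g i))) := by
        rw [finrank_span_eq_card hli, hcard]
    _ ≤ Module.finrank ℝ (affineSpan ℝ F).direction := Submodule.finrank_mono hspan

lemma direction_le_ker {F : Set (Fin n → ℝ)} {M : Type*} [AddCommGroup M] [Module ℝ M]
    (L : (Fin n → ℝ) →ₗ[ℝ] M) (r : M) (hF : ∀ x ∈ F, L x = r) :
    (affineSpan ℝ F).direction ≤ LinearMap.ker L := by
  rw [direction_affineSpan, vectorSpan_def, Submodule.span_le]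
  rintro v ⟨x, hx, y, hy, rfl⟩
  simp only [SetLike.mem_coe, LinearMap.mem_ker, vsub_eq_sub]
  rw [map_sub, hF x hx, hF y hy, sub_self]

lemma finrank_ker_surj (L : (Fin n → ℝ) →ₗ[ℝ] ℝ) (h : Function.Surjective L) :
    Module.finrank ℝ (LinearMap.ker L) = n - 1 := by
  have h1 := LinearMap.finrank_range_add_finrank_ker L
  rw [LinearMap.range_eq_top.mpr h, finrank_top, Module.finrank_self,
    Module.finrank_fintype_fun_eq_card, Fintype.card_fin] at h1
  omega

lemma finrank_ker_surj2 (L : (Fin n → ℝ) →ₗ[ℝ] ℝ × ℝ) (h : Function.Surjective L) :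
    Module.finrank ℝ (LinearMap.ker L) = n - 2 := by
  have h1 := LinearMap.finrank_range_add_finrank_ker L
  rw [LinearMap.range_eq_top.mpr h, finrank_top, Module.finrank_prod, Module.finrank_self,
    Module.finrank_fintype_fun_eq_card, Fintype.card_fin] at h1
  omega

end Finrank

open Finset

variable {n : ℕ} {u : Fin n → ℝ}

def projL (n : ℕ) (i : Fin n) : (Fin n → ℝ) →ₗ[ℝ] ℝ := LinearMap.proj i

def sumL (n : ℕ) (I : Finset (Fin n)) : (Fin n → ℝ) →ₗ[ℝ] ℝ where
  toFun := fun x => ∑ i ∈ I, x i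
  map_add' := fun a b => by simp [Finset.sum_add_distrib]
  map_smul' := fun c a => by simp [Finset.mul_sum]

lemma projL_apply (i : Fin n) (x : Fin n → ℝ) : projL n i x = x i := rfl

lemma sumL_apply (I : Finset (Fin n)) (x : Fin n → ℝ) : sumL n I x = ∑ i ∈ I, x i := rfl

lemma sum_single {I : Finset (Fin n)} {b : Fin n} (hb : b ∈ I) (c : ℝ) :
    ∑ i ∈ I, (Pi.single b c : Fin n → ℝ) i = c := by
  have h0 : ∀ t ∈ I, t ≠ b → (Pi.single b c : Fin n → ℝ) t = 0 :=
    fun t _ ht => Pi.single_eq_of_ne (M := fun _ : Fin n => ℝ) ht c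
  rw [Finset.sum_eq_single_of_mem b hb h0, Pi.single_eq_same]

lemma projL_surj (i : Fin n) : Function.Surjective (projL n i) := fun r =>
  ⟨(Pi.single i r : Fin n → ℝ), by simp [projL_apply]⟩

lemma sumL_surj (I : Finset (Fin n)) (hI : I.Nonempty) : Function.Surjective (sumL n I) := by
  obtain ⟨b, hb⟩ := hI
  exact fun r => ⟨(Pi.single b r : Fin n → ℝ), by rw [sumL_apply, sum_single hb]⟩

lemma pair_proj_surj {a b : Fin n} (hab : a ≠ b) :
    Function.Surjective ((projL n a).prod (projL n b)) := by
  rintro ⟨r, s⟩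
  refine ⟨(Pi.single a r : Fin n → ℝ) + (Pi.single b s : Fin n → ℝ), ?_⟩
  have h1 : ((Pi.single a r : Fin n → ℝ) + (Pi.single b s : Fin n → ℝ)) a = r := by
    simp [Pi.single_eq_of_ne hab]
  have h2 : ((Pi.single a r : Fin n → ℝ) + (Pi.single b s : Fin n → ℝ)) b = s := by
    simp [Pi.single_eq_of_ne (Ne.symm hab)]
  simp [LinearMap.prod_apply, projL_apply, h1, h2]

lemma proj_sum_surj (hn2 : 2 ≤ n) (a : Fin n) :
    Function.Surjective ((projL n a).prod (sumL n Finset.univ)) := by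
  have hb : ∃ b : Fin n, b ≠ a := by
    by_cases h : (a : ℕ) = 0
    · exact ⟨⟨1, by omega⟩, fun hc => by
        have := congrArg Fin.val hc
        simp at this
        omega⟩
    · exact ⟨⟨0, by omega⟩, fun hc => by
        have := congrArg Fin.val hc
        simp at this
        omega⟩
  obtain ⟨b, hba⟩ := hb
  rintro ⟨r, s⟩
  refine ⟨(Pi.single a r : Fin n → ℝ) + (Pi.single b (s - r) : Fin n → ℝ), ?_⟩
  have h1 : ((Pi.single a r : Fin n → ℝ) + (Pi.single b (s - r) : Fin n → ℝ)) a = r := by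
    simp [Pi.single_eq_of_ne (Ne.symm hba)]
  have h2 : sumL n Finset.univ ((Pi.single a r : Fin n → ℝ) + (Pi.single b (s - r) : Fin n → ℝ)) = s := by
    rw [sumL_apply]
    rw [show (fun i => ((Pi.single a r : Fin n → ℝ) + (Pi.single b (s - r) : Fin n → ℝ)) i) = fun i => (Pi.single a r : Fin n → ℝ) i + (Pi.single b (s - r) : Fin n → ℝ) i from rfl]
    rw [Finset.sum_add_distrib, sum_single (Finset.mem_univ a), sum_single (Finset.mem_univ b)]
    ring
  simp [LinearMap.prod_apply, projL_apply, h1, h2]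

lemma fin_le_last (hn : 1 ≤ n) (i : Fin n) : i ≤ (⟨n - 1, Nat.sub_lt hn Nat.one_pos⟩ : Fin n) := by
  have := i.isLt
  exact Fin.le_def.mpr (by simp; omega)

lemma topSum_one (hn : 1 ≤ n) : topSum n u 1 = u ⟨n - 1, Nat.sub_lt hn Nat.one_pos⟩ := by
  rw [topSum_eq]
  have h : Tk n 1 = {(⟨n - 1, by omega⟩ : Fin n)} := by
    ext i
    rw [mem_Tk, Finset.mem_singleton]
    have := i.isLt
    constructor
    · intro h
      exact Fin.ext (by simp; omega)
    · rintro rfl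
      simp
  rw [h, Finset.sum_singleton]

lemma Tk_univ : Tk n n = Finset.univ := by
  ext i
  simp [mem_Tk]

lemma exposed_and_nonempty (hmono : Monotone u) (hnonneg : ∀ i, 0 ≤ u i)
    (I : Finset (Fin n)) (hI : I.Nonempty) :
    IsExposedFaceOf n (PF n u) {x ∈ PF n u | ∑ i ∈ I, x i = topSum n u I.card} ∧
    ({x ∈ PF n u | ∑ i ∈ I, x i = topSum n u I.card}).Nonempty := by
  have hkn : I.card ≤ n := by
    calc I.card ≤ (Finset.univ : Finset (Fin n)).card := Finset.card_le_card (Finset.subset_univ I)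
      _ = n := by simp
  obtain ⟨π, hπ⟩ := exists_perm_mapsTo I (Tk n I.card) (by rw [card_Tk_of_le hkn])
  set xstar := (vt u (n - I.card)) ∘ π with hxdef
  have hxPF : xstar ∈ PF n u :=
    perm_mem_PF (vt_monotone hmono hnonneg _) (vt_nonneg hnonneg _) (vt_le hnonneg _) π
  have hxsum : ∑ i ∈ I, xstar i = topSum n u I.card :=
    sum_on_I hkn rfl π hπ _ (fun i hi => vt_eq_of_ge (mem_Tk.mp hi))
  have hw : ∀ z : Fin n → ℝ,
      ∑ i, (fun i => if i ∈ I then (1 : ℝ) else 0) i * z i = ∑ i ∈ I, z i := by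
    intro z
    have h1 : ∀ i : Fin n, (if i ∈ I then (1 : ℝ) else 0) * z i = if i ∈ I then z i else 0 :=
      fun i => by split <;> simp
    rw [Finset.sum_congr rfl (fun i _ => h1 i), Finset.sum_ite_mem, Finset.univ_inter]
  constructor
  · refine ⟨fun i => if i ∈ I then 1 else 0, ?_⟩
    ext x
    constructor
    · rintro ⟨hxp, hxs⟩
      refine ⟨hxp, fun y hy => ?_⟩
      rw [hw y, hw x, hxs]
      exact mem_PF_sum_le hy I
    · rintro ⟨hxp, hopt⟩
      refine ⟨hxp, le_antisymm (mem_PF_sum_le hxp I) ?_⟩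
      have h2 := hopt xstar hxPF
      rw [hw xstar, hw x, hxsum] at h2
      exact h2
  · exact ⟨xstar, hxPF, hxsum⟩

lemma dim_le (I : Finset (Fin n)) (hI : I.Nonempty) :
    Module.finrank ℝ
      (affineSpan ℝ {x ∈ PF n u | ∑ i ∈ I, x i = topSum n u I.card}).direction ≤ n - 1 := by
  have hd := direction_le_ker (F := {x ∈ PF n u | ∑ i ∈ I, x i = topSum n u I.card})
    (sumL n I) (topSum n u I.card) (fun x hx => hx.2)
  calc Module.finrank ℝ (affineSpan ℝ _).direction
      ≤ Module.finrank ℝ (LinearMap.ker (sumL n I)) := Submodule.finrank_mono hd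
    _ = n - 1 := finrank_ker_surj _ (sumL_surj I hI)


variable {n : ℕ} {u : Fin n → ℝ}

lemma not_facet_top (hmono : Monotone u) (hn : 1 ≤ n)
    (I : Finset (Fin n)) (hk2 : 2 ≤ I.card)
    (htop : u ⟨n - I.card, by omega⟩ = u ⟨n - 1, Nat.sub_lt hn Nat.one_pos⟩) :
    Module.finrank ℝ
      (affineSpan ℝ {x ∈ PF n u | ∑ i ∈ I, x i = topSum n u I.card}).direction ≤ n - 2 := by
  have hkn : I.card ≤ n := le_trans (Finset.card_le_card (Finset.subset_univ I)) (by simp)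
  have hT : ∀ i ∈ Tk n I.card, u i = u ⟨n - 1, by omega⟩ := by
    intro i hi
    have h1 : u i ≤ u ⟨n - 1, by omega⟩ := hmono (fin_le_last hn i)
    have h2 : u ⟨n - 1, by omega⟩ ≤ u i := by
      rw [← htop]
      refine hmono (Fin.le_def.mpr ?_)
      exact mem_Tk.mp hi
    linarith
  have htopsum : topSum n u I.card = I.card • u ⟨n - 1, by omega⟩ := by
    rw [topSum_eq, Finset.sum_congr rfl hT, Finset.sum_const, card_Tk_of_le hkn]
  obtain ⟨a, ha, b, hb, hab⟩ := Finset.one_lt_card.mp hk2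
  have hcoord : ∀ x ∈ {x ∈ PF n u | ∑ i ∈ I, x i = topSum n u I.card},
      ∀ i ∈ I, x i = u ⟨n - 1, by omega⟩ := by
    intro x hx
    have hle : ∀ i ∈ I, x i ≤ u ⟨n - 1, by omega⟩ := by
      intro i hi
      have h1 := mem_PF_sum_le hx.1 {i}
      rwa [Finset.sum_singleton, Finset.card_singleton, topSum_one hn] at h1
    have hsum : ∑ i ∈ I, x i = ∑ _i ∈ I, u ⟨n - 1, by omega⟩ := by
      rw [hx.2, htopsum, Finset.sum_const]
    exact (Finset.sum_eq_sum_iff_of_le hle).mp hsum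
  have hd := direction_le_ker (F := {x ∈ PF n u | ∑ i ∈ I, x i = topSum n u I.card})
    ((projL n a).prod (projL n b)) (u ⟨n - 1, by omega⟩, u ⟨n - 1, by omega⟩)
    (fun x hx => by
      show (x a, x b) = _
      rw [hcoord x hx a ha, hcoord x hx b hb])
  calc Module.finrank ℝ (affineSpan ℝ _).direction
      ≤ Module.finrank ℝ (LinearMap.ker ((projL n a).prod (projL n b))) :=
        Submodule.finrank_mono hd
    _ = n - 2 := finrank_ker_surj2 _ (pair_proj_surj hab)

lemma not_facet_bot (hnonneg : ∀ i, 0 ≤ u i) (I : Finset (Fin n)) (hk1 : 1 ≤ I.card)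
    (hkn1 : I.card ≤ n - 1) (hz : ∀ i : Fin n, (i : ℕ) < n - I.card → u i = 0) :
    Module.finrank ℝ
      (affineSpan ℝ {x ∈ PF n u | ∑ i ∈ I, x i = topSum n u I.card}).direction ≤ n - 2 := by
  have hn2 : 2 ≤ n := by omega
  have htopeq : topSum n u I.card = topSum n u n := by
    rw [topSum_eq, topSum_eq, Tk_univ]
    apply Finset.sum_subset (Finset.subset_univ _)
    intro x _ hxT
    have hlt : ¬ n - I.card ≤ (x : ℕ) := fun h => hxT (mem_Tk.mpr h)
    exact hz x (by omega)
  obtain ⟨j0, hj0⟩ : ∃ j0 : Fin n, j0 ∉ I := by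
    by_contra h
    push_neg at h
    have he : I = Finset.univ := Finset.eq_univ_iff_forall.mpr h
    rw [he, Finset.card_univ, Fintype.card_fin] at hkn1
    omega
  have hprop : ∀ x ∈ {x ∈ PF n u | ∑ i ∈ I, x i = topSum n u I.card},
      x j0 = 0 ∧ ∑ i, x i = topSum n u n := by
    intro x hx
    have h1 : ∑ i, x i ≤ topSum n u n := by
      have := mem_PF_sum_le hx.1 Finset.univ
      rwa [Finset.card_univ, Fintype.card_fin] at this
    have h2 : topSum n u n ≤ ∑ i, x i := by
      rw [← htopeq, ← hx.2]
      exact Finset.sum_le_sum_of_subset_of_nonneg (Finset.subset_univ I)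
        (fun i _ _ => mem_PF_nonneg hx.1 i)
    have h3 : ∑ i, x i = topSum n u n := le_antisymm h1 h2
    have h4 : ∑ i ∈ Finset.univ \ I, x i = 0 := by
      have h5 := Finset.sum_sdiff (f := x) (Finset.subset_univ I)
      have h6 := hx.2
      rw [htopeq] at h6
      linarith [h5, h3, h6]
    have h5 : x j0 = 0 := by
      have hmem : j0 ∈ Finset.univ \ I := Finset.mem_sdiff.mpr ⟨Finset.mem_univ _, hj0⟩
      have hz' : ∀ i ∈ Finset.univ \ I, 0 ≤ x i := fun i _ => mem_PF_nonneg hx.1 i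
      exact (Finset.sum_eq_zero_iff_of_nonneg hz').mp h4 j0 hmem
    exact ⟨h5, h3⟩
  have hd := direction_le_ker (F := {x ∈ PF n u | ∑ i ∈ I, x i = topSum n u I.card})
    ((projL n j0).prod (sumL n Finset.univ)) (0, topSum n u n)
    (fun x hx => by
      show (x j0, ∑ i, x i) = _
      rw [(hprop x hx).1, (hprop x hx).2])
  calc Module.finrank ℝ (affineSpan ℝ _).direction
      ≤ Module.finrank ℝ (LinearMap.ker ((projL n j0).prod (sumL n Finset.univ))) :=
        Submodule.finrank_mono hd
    _ = n - 2 := finrank_ker_surj2 _ (proj_sum_surj hn2 j0)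

lemma zero_mem_PF (hnonneg : ∀ i, 0 ≤ u i) : (0 : Fin n → ℝ) ∈ PF n u := by
  apply subset_convexHull ℝ _
  refine ⟨fun i => le_refl 0, 1, ?_, fun i => hnonneg i⟩
  exact monotone_const

lemma dim_ge_singleton (hmono : Monotone u) (hnonneg : ∀ i, 0 ≤ u i) (hn2 : 2 ≤ n)
    (i0 : Fin n) (hpos : 0 < u ⟨n - 2, by omega⟩) :
    n - 1 ≤ Module.finrank ℝ (affineSpan ℝ {x ∈ PF n u |
      ∑ i ∈ ({i0} : Finset (Fin n)), x i = topSum n u ({i0} : Finset (Fin n)).card}).direction := by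
  have hn1 : 1 ≤ n := by omega
  apply finrank_ge_of_li i0 (fun j t => if t = j then u ⟨n - 2, by omega⟩ else 0)
  · intro j hj
    have hcards : ({i0} : Finset (Fin n)).card = (Tk n 1).card := by
      rw [card_Tk_of_le hn1, Finset.card_singleton]
    obtain ⟨π, hπ, hπ1, hπ2⟩ := exists_perm_pin2 hcards
      (i := i0) (a := ⟨n - 1, by omega⟩) (i' := j) (b := ⟨n - 2, by omega⟩)
      (iff_of_true (Finset.mem_singleton_self i0) (mem_Tk.mpr (by show n - 1 ≤ n - 1; omega)))
      (iff_of_false (by simp [Finset.mem_singleton]; exact hj)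
        (by rw [mem_Tk]; show ¬ n - 1 ≤ n - 2; omega))
      (Ne.symm hj)
      (by intro h; have := congrArg Fin.val h; simp at this; omega)
    have hπ' : ∀ t, π t ∈ Tk n ({i0} : Finset (Fin n)).card ↔ t ∈ ({i0} : Finset (Fin n)) := by
      rw [Finset.card_singleton]; exact hπ
    refine ⟨vt u (n - 2) ∘ π,
      ⟨perm_mem_PF (vt_monotone hmono hnonneg _) (vt_nonneg hnonneg _) (vt_le hnonneg _) π, ?_⟩,
      vt u (n - 1) ∘ π,
      ⟨perm_mem_PF (vt_monotone hmono hnonneg _) (vt_nonneg hnonneg _) (vt_le hnonneg _) π, ?_⟩,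
      ?_⟩
    · rw [Finset.card_singleton]
      exact sum_on_I hn1 (Finset.card_singleton i0) π hπ _
        (fun i hi => vt_eq_of_ge (by have := mem_Tk.mp hi; omega))
    · rw [Finset.card_singleton]
      exact sum_on_I hn1 (Finset.card_singleton i0) π hπ _
        (fun i hi => vt_eq_of_ge (mem_Tk.mp hi))
    · funext t
      simp only [Pi.sub_apply, Function.comp_apply]
      by_cases ht : t = j
      · subst ht
        rw [hπ2, if_pos rfl]
        rw [vt_eq_of_ge (by show n - 2 ≤ n - 2; omega),
          vt_eq_zero (by show ¬ n - 1 ≤ n - 2; omega), sub_zero]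
      · rw [if_neg ht]
        have hne : π t ≠ ⟨n - 2, by omega⟩ := fun h => ht (π.injective (h.trans hπ2.symm))
        by_cases hge : n - 1 ≤ ((π t) : ℕ)
        · rw [vt_eq_of_ge (by omega), vt_eq_of_ge hge, sub_self]
        · have hv : ((π t) : ℕ) ≠ n - 2 := fun h => hne (Fin.ext h)
          rw [vt_eq_zero (by omega), vt_eq_zero hge, sub_self]
  · intro i _
    rw [if_pos rfl]
    exact ne_of_gt hpos
  · intro i t _ hti _
    rw [if_neg hti]

lemma exists_fin_val (m : ℕ) (h : m < n) : ∃ j : Fin n, (j : ℕ) = m := ⟨⟨m, h⟩, rfl⟩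

lemma dim_ge_univ (hmono : Monotone u) (hnonneg : ∀ i, 0 ≤ u i) (hn2 : 2 ≤ n)
    (hlt : u ⟨0, by omega⟩ < u ⟨n - 1, by omega⟩) :
    n - 1 ≤ Module.finrank ℝ (affineSpan ℝ {x ∈ PF n u |
      ∑ i ∈ (Finset.univ : Finset (Fin n)), x i
        = topSum n u (Finset.univ : Finset (Fin n)).card}).direction := by
  have hn1 : 1 ≤ n := by omega
  obtain ⟨l0, hl0⟩ := exists_fin_val (n := n) (n - 1) (by omega)
  obtain ⟨z0, hz0⟩ := exists_fin_val (n := n) 0 (by omega)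
  have hlt' : u z0 < u l0 := by
    have e1 : (⟨0, by omega⟩ : Fin n) = z0 := Fin.ext (by show 0 = (z0 : ℕ); omega)
    have e2 : (⟨n - 1, by omega⟩ : Fin n) = l0 := Fin.ext (by show n - 1 = (l0 : ℕ); omega)
    rwa [e1, e2] at hlt
  have hucard : (Finset.univ : Finset (Fin n)).card = n := by simp
  apply finrank_ge_of_li l0
    (fun i t => if t = i then u l0 - u z0 else if t = l0 then -(u l0 - u z0) else 0)
  · intro i hi
    obtain ⟨π, hπ, hπ1, hπ2⟩ := exists_perm_pin2 (I := (Finset.univ : Finset (Fin n)))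
      (T := Tk n n) (by rw [Tk_univ])
      (i := i) (a := l0) (i' := l0) (b := z0)
      (iff_of_true (Finset.mem_univ _) (by rw [Tk_univ]; exact Finset.mem_univ _))
      (iff_of_true (Finset.mem_univ _) (by rw [Tk_univ]; exact Finset.mem_univ _))
      hi
      (by intro h; have := congrArg Fin.val h; omega)
    have hπ'u : ∀ t, (π * Equiv.swap i l0) t ∈ Tk n n ↔
        t ∈ (Finset.univ : Finset (Fin n)) := fun t =>
      iff_of_true (by rw [Tk_univ]; exact Finset.mem_univ _) (Finset.mem_univ _)
    refine ⟨u ∘ π,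
      ⟨perm_mem_PF hmono hnonneg (fun i => le_refl (u i)) π, ?_⟩,
      u ∘ ⇑(π * Equiv.swap i l0),
      ⟨perm_mem_PF hmono hnonneg (fun i => le_refl (u i)) _, ?_⟩,
      ?_⟩
    · have hts : topSum n u (Finset.univ : Finset (Fin n)).card = topSum n u n := by
        rw [hucard]
      rw [hts]
      exact sum_on_I (le_refl n) hucard π hπ u (fun i _ => rfl)
    · have hts : topSum n u (Finset.univ : Finset (Fin n)).card = topSum n u n := by
        rw [hucard]
      rw [hts]
      exact sum_on_I (le_refl n) hucard _ hπ'u u (fun i _ => rfl)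
    · funext t
      simp only [Pi.sub_apply, Function.comp_apply, Equiv.Perm.mul_apply]
      by_cases ht1 : t = i
      · subst ht1
        rw [Equiv.swap_apply_left, hπ1, hπ2, if_pos rfl]
      · by_cases ht2 : t = l0
        · subst ht2
          rw [Equiv.swap_apply_right, hπ1, hπ2, if_neg ht1, if_pos rfl]
          ring
        · rw [Equiv.swap_apply_of_ne_of_ne ht1 ht2, sub_self, if_neg ht1, if_neg ht2]
  · intro i _
    rw [if_pos rfl]
    exact ne_of_gt (sub_pos.mpr hlt')
  · intro i t _ hti hti0
    rw [if_neg hti, if_neg hti0]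

lemma dim_ge_mid (hmono : Monotone u) (hnonneg : ∀ i, 0 ≤ u i)
    (I : Finset (Fin n)) {i0 : Fin n} (hi0 : i0 ∈ I)
    (hk2 : 2 ≤ I.card) (hkn1 : I.card ≤ n - 1)
    (hlt : u ⟨n - I.card, by
        have h : I.card ≤ n := by simpa using Finset.card_le_univ I
        have h2 : 0 < I.card := Finset.card_pos.mpr ⟨i0, hi0⟩
        omega⟩ < u ⟨n - 1, by
        have h : I.card ≤ n := by simpa using Finset.card_le_univ I
        have h2 : 0 < I.card := Finset.card_pos.mpr ⟨i0, hi0⟩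
        omega⟩)
    (hpos : 0 < u ⟨n - I.card - 1, by
        have h : I.card ≤ n := by simpa using Finset.card_le_univ I
        have h2 : 0 < I.card := Finset.card_pos.mpr ⟨i0, hi0⟩
        omega⟩) :
    n - 1 ≤ Module.finrank ℝ (affineSpan ℝ {x ∈ PF n u |
      ∑ i ∈ I, x i = topSum n u I.card}).direction := by
  have hkn : I.card ≤ n :=
    le_trans (Finset.card_le_card (Finset.subset_univ I)) (by simp)
  have hn2 : 2 ≤ n := by omega
  obtain ⟨l0, hl0⟩ := exists_fin_val (n := n) (n - 1) (by omega)
  obtain ⟨nk, hnk⟩ := exists_fin_val (n := n) (n - I.card) (by omega)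
  obtain ⟨nk1, hnk1⟩ := exists_fin_val (n := n) (n - I.card - 1) (by omega)
  have hlt' : u nk < u l0 := by
    have e1 : (⟨n - I.card, by
        have h : I.card ≤ n := by simpa using Finset.card_le_univ I
        have h2 : 0 < I.card := Finset.card_pos.mpr ⟨i0, hi0⟩
        omega⟩ : Fin n) = nk := Fin.ext (by show n - I.card = (nk : ℕ); omega)
    have e2 : (⟨n - 1, by
        have h : I.card ≤ n := by simpa using Finset.card_le_univ I
        have h2 : 0 < I.card := Finset.card_pos.mpr ⟨i0, hi0⟩
        omega⟩ : Fin n) = l0 := Fin.ext (by show n - 1 = (l0 : ℕ); omega)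
    rwa [e1, e2] at hlt
  have hpos' : 0 < u nk1 := by
    have e1 : (⟨n - I.card - 1, by
        have h : I.card ≤ n := by simpa using Finset.card_le_univ I
        have h2 : 0 < I.card := Finset.card_pos.mpr ⟨i0, hi0⟩
        omega⟩ : Fin n) = nk1 := Fin.ext (by show n - I.card - 1 = (nk1 : ℕ); omega)
    rwa [e1] at hpos
  have hcards : I.card = (Tk n I.card).card := (card_Tk_of_le hkn).symm
  apply finrank_ge_of_li i0 (fun i t =>
    if i ∈ I then
      (if t = i then u l0 - u nk
       else if t = i0 then -(u l0 - u nk) else 0)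
    else (if t = i then u nk1 else 0))
  · intro i hi
    by_cases hiI : i ∈ I
    · obtain ⟨π, hπ, hπ1, hπ2⟩ := exists_perm_pin2 hcards
        (i := i) (a := l0) (i' := i0) (b := nk)
        (iff_of_true hiI (mem_Tk.mpr (by omega)))
        (iff_of_true hi0 (mem_Tk.mpr (by omega)))
        hi
        (by intro h; have := congrArg Fin.val h; omega)
      have hπ' : ∀ t, (π * Equiv.swap i i0) t ∈ Tk n I.card ↔ t ∈ I := by
        intro t
        rw [Equiv.Perm.mul_apply, hπ]
        exact swap_mem_iff (iff_of_true hiI hi0) t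
      refine ⟨vt u (n - I.card) ∘ π,
        ⟨perm_mem_PF (vt_monotone hmono hnonneg _) (vt_nonneg hnonneg _) (vt_le hnonneg _) π, ?_⟩,
        vt u (n - I.card) ∘ ⇑(π * Equiv.swap i i0),
        ⟨perm_mem_PF (vt_monotone hmono hnonneg _) (vt_nonneg hnonneg _) (vt_le hnonneg _) _, ?_⟩,
        ?_⟩
      · exact sum_on_I hkn rfl π hπ _ (fun t ht => vt_eq_of_ge (mem_Tk.mp ht))
      · exact sum_on_I hkn rfl _ hπ' _ (fun t ht => vt_eq_of_ge (mem_Tk.mp ht))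
      · funext t
        simp only [Pi.sub_apply, Function.comp_apply, Equiv.Perm.mul_apply]
        rw [if_pos hiI]
        by_cases ht1 : t = i
        · subst ht1
          rw [Equiv.swap_apply_left, hπ1, hπ2, if_pos rfl,
            vt_eq_of_ge (i := l0) (by omega), vt_eq_of_ge (i := nk) (by omega)]
        · by_cases ht2 : t = i0
          · subst ht2
            rw [Equiv.swap_apply_right, hπ1, hπ2, if_neg ht1, if_pos rfl,
              vt_eq_of_ge (i := l0) (by omega), vt_eq_of_ge (i := nk) (by omega)]
            ring
          · rw [Equiv.swap_apply_of_ne_of_ne ht1 ht2, sub_self, if_neg ht1, if_neg ht2]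
    · obtain ⟨π, hπ, hπ1⟩ := exists_perm_pin1 hcards
        (i := i) (a := nk1)
        (iff_of_false hiI (by rw [mem_Tk]; omega))
      refine ⟨vt u (n - I.card - 1) ∘ π,
        ⟨perm_mem_PF (vt_monotone hmono hnonneg _) (vt_nonneg hnonneg _) (vt_le hnonneg _) π, ?_⟩,
        vt u (n - I.card) ∘ π,
        ⟨perm_mem_PF (vt_monotone hmono hnonneg _) (vt_nonneg hnonneg _) (vt_le hnonneg _) π, ?_⟩,
        ?_⟩
      · exact sum_on_I hkn rfl π hπ _
          (fun t ht => vt_eq_of_ge (by have := mem_Tk.mp ht; omega))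
      · exact sum_on_I hkn rfl π hπ _ (fun t ht => vt_eq_of_ge (mem_Tk.mp ht))
      · funext t
        simp only [Pi.sub_apply, Function.comp_apply]
        rw [if_neg hiI]
        by_cases ht1 : t = i
        · subst ht1
          rw [hπ1, if_pos rfl, vt_eq_of_ge (i := nk1) (by omega),
            vt_eq_zero (i := nk1) (by omega), sub_zero]
        · rw [if_neg ht1]
          have hne : π t ≠ nk1 := fun h => ht1 (π.injective (h.trans hπ1.symm))
          by_cases hge : n - I.card ≤ ((π t) : ℕ)
          · rw [vt_eq_of_ge (by omega), vt_eq_of_ge hge, sub_self]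
          · have hv : ((π t) : ℕ) ≠ n - I.card - 1 := fun h => hne (Fin.ext (by omega))
            rw [vt_eq_zero (by omega), vt_eq_zero hge, sub_self]
  · intro i _
    by_cases hiI : i ∈ I
    · rw [if_pos hiI, if_pos rfl]
      exact ne_of_gt (sub_pos.mpr hlt')
    · rw [if_neg hiI, if_pos rfl]
      exact ne_of_gt hpos'
  · intro i t _ hti hti0
    by_cases hiI : i ∈ I
    · rw [if_pos hiI, if_neg hti, if_neg hti0]
    · rw [if_neg hiI, if_neg hti]

lemma isFacet_FI (hmono : Monotone u) (hnonneg : ∀ i, 0 ≤ u i) (I : Finset (Fin n))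
    (hI : I.Nonempty)
    (hge : n - 1 ≤ Module.finrank ℝ
      (affineSpan ℝ {x ∈ PF n u | ∑ i ∈ I, x i = topSum n u I.card}).direction) :
    IsFacetOf n (PF n u) {x ∈ PF n u | ∑ i ∈ I, x i = topSum n u I.card} := by
  obtain ⟨hexp, hne⟩ := exposed_and_nonempty hmono hnonneg I hI
  exact ⟨hexp, hne, le_antisymm (dim_le I hI) hge⟩

lemma u_last_pos (hmono : Monotone u) (hnonneg : ∀ i, 0 ≤ u i) (hn : 1 ≤ n) (hne : u ≠ 0) :
    0 < u ⟨n - 1, Nat.sub_lt hn Nat.one_pos⟩ := by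
  have h1 : ∃ i, u i ≠ 0 := by
    by_contra h
    push_neg at h
    exact hne (funext h)
  obtain ⟨i, hi⟩ := h1
  have h2 : 0 < u i := lt_of_le_of_ne (hnonneg i) (Ne.symm hi)
  exact lt_of_lt_of_le h2 (hmono (fin_le_last hn i))

lemma natCard_eq (p : Fin n → Prop) [DecidablePred p] :
    Nat.card {i : Fin n // p i} = (Finset.univ.filter p).card := by
  rw [Nat.card_eq_fintype_card, Fintype.card_subtype]

lemma card_filter_lt (n m : ℕ) (h : m ≤ n) :
    ((Finset.univ : Finset (Fin n)).filter fun i : Fin n => (i : ℕ) < m).card = m := by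
  classical
  have h1 := Finset.card_filter_add_card_filter_not
    (s := (Finset.univ : Finset (Fin n))) (p := fun i : Fin n => m ≤ (i : ℕ))
  have h2 := card_filter_ge n m
  have h3 : (Finset.univ.filter fun i : Fin n => ¬ m ≤ (i : ℕ))
      = Finset.univ.filter fun i : Fin n => (i : ℕ) < m := by
    apply Finset.filter_congr
    intro i _
    simp [Nat.not_le]
  rw [h3, h2] at h1
  have h4 : (Finset.univ : Finset (Fin n)).card = n := by simp
  omega

lemma facetA (hmono : Monotone u) (hnonneg : ∀ i, 0 ≤ u i) (hn : 1 ≤ n)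
    (hmax : 0 < u ⟨n - 1, Nat.sub_lt hn Nat.one_pos⟩) (i : Fin n) :
    IsFacetOf n (PF n u) {x ∈ PF n u | x i = 0} := by
  obtain ⟨l0, hl0⟩ := exists_fin_val (n := n) (n - 1) (by omega)
  have hmax' : 0 < u l0 := by
    have e : (⟨n - 1, by omega⟩ : Fin n) = l0 := Fin.ext (by show n - 1 = (l0 : ℕ); omega)
    rwa [e] at hmax
  have h0PF := zero_mem_PF (u := u) hnonneg
  have hw : ∀ z : Fin n → ℝ,
      ∑ j, (fun j => if j = i then (-1 : ℝ) else 0) j * z j = - z i := by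
    intro z
    rw [Finset.sum_eq_single_of_mem i (Finset.mem_univ i)
      (fun b _ hb => by
        show (if b = i then (-1 : ℝ) else 0) * z b = 0
        rw [if_neg hb, zero_mul])]
    show (if i = i then (-1 : ℝ) else 0) * z i = - z i
    rw [if_pos rfl]
    ring
  refine ⟨⟨fun j => if j = i then -1 else 0, ?_⟩, ⟨0, h0PF, rfl⟩, ?_⟩
  · ext x
    constructor
    · rintro ⟨hxp, hxi⟩
      refine ⟨hxp, fun y hy => ?_⟩
      rw [hw y, hw x, hxi, neg_zero]
      exact neg_nonpos.mpr (mem_PF_nonneg hy i)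
    · rintro ⟨hxp, hopt⟩
      have h1 := hopt 0 h0PF
      rw [hw 0, hw x] at h1
      simp only [Pi.zero_apply, neg_zero] at h1
      have h2 : x i ≤ 0 := by linarith
      exact ⟨hxp, le_antisymm h2 (mem_PF_nonneg hxp i)⟩
  · apply le_antisymm
    · have hd := direction_le_ker (F := {x ∈ PF n u | x i = 0}) (projL n i) 0
        (fun x hx => hx.2)
      calc Module.finrank ℝ (affineSpan ℝ _).direction
          ≤ Module.finrank ℝ (LinearMap.ker (projL n i)) := Submodule.finrank_mono hd
        _ = n - 1 := finrank_ker_surj _ (projL_surj i)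
    · apply finrank_ge_of_li i (fun j t => if t = j then u l0 else 0)
      · intro j hj
        obtain ⟨π, hπ, hπ1⟩ := exists_perm_pin1 (I := (Finset.univ : Finset (Fin n)))
          (T := (Finset.univ : Finset (Fin n))) rfl (i := j) (a := l0)
          (iff_of_true (Finset.mem_univ _) (Finset.mem_univ _))
        refine ⟨vt u (n - 1) ∘ π, ⟨perm_mem_PF (vt_monotone hmono hnonneg _)
            (vt_nonneg hnonneg _) (vt_le hnonneg _) π, ?_⟩, 0, ⟨h0PF, rfl⟩, ?_⟩
        · show vt u (n - 1) (π i) = 0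
          have hne2 : π i ≠ l0 := fun h => hj (π.injective (hπ1.trans h.symm))
          have hv : ((π i) : ℕ) ≠ n - 1 := fun h => hne2 (Fin.ext (by omega))
          exact vt_eq_zero (by have := (π i).isLt; omega)
        · rw [sub_zero]
          funext t
          simp only [Function.comp_apply]
          by_cases ht : t = j
          · subst ht
            rw [hπ1, if_pos rfl, vt_eq_of_ge (by omega)]
          · rw [if_neg ht]
            have hne2 : π t ≠ l0 := fun h => ht (π.injective (h.trans hπ1.symm))
            have hv : ((π t) : ℕ) ≠ n - 1 := fun h => hne2 (Fin.ext (by omega))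
            exact vt_eq_zero (by have := (π t).isLt; omega)
      · intro j _
        rw [if_pos rfl]
        exact ne_of_gt hmax'
      · intro j t _ htj _
        rw [if_neg htj]

end PFP

set_option maxHeartbeats 1600000

/-- Characterization of the facets of `PF(u)`: each `{x ∈ PF(u) : x i = 0}` is a
facet, and for a nonempty `I ⊆ [n]` the set
`F_I = {x ∈ PF(u) : ∑_{i∈I} x i = u_n + ⋯ + u_{n-|I|+1}}` is a facet iff the
cardinality conditions (depending on the multiplicity vector of `u`) hold. -/
theorem parking_polytope_facets
    (n : ℕ) (hn : 1 ≤ n) (u : Fin n → ℝ)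
    (hmono : Monotone u) (hnonneg : ∀ i, 0 ≤ u i) (hne : u ≠ 0) :
    (∀ i : Fin n, IsFacetOf n (PF n u) {x ∈ PF n u | x i = 0}) ∧
    ∀ I : Finset (Fin n), I.Nonempty →
      -- case (1): u = (d, …, d) with d > 0
      ((∃ d : ℝ, 0 < d ∧ ∀ i, u i = d) →
        (IsFacetOf n (PF n u) {x ∈ PF n u | ∑ i ∈ I, x i = topSum n u I.card} ↔
          I.card = 1)) ∧
      -- case (2): u = (0, …, 0, d) with d > 0
      ((∃ d : ℝ, 0 < d ∧ (∀ i : Fin n, (i : ℕ) < n - 1 → u i = 0) ∧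
          u ⟨n - 1, by omega⟩ = d) →
        (IsFacetOf n (PF n u) {x ∈ PF n u | ∑ i ∈ I, x i = topSum n u I.card} ↔
          I.card = n)) ∧
      -- case (3): u = (0, …, 0, d, …, d) with at least one 0 and at least two d's
      ((∃ d : ℝ, 0 < d ∧ (∀ i, u i = 0 ∨ u i = d) ∧ (∃ i, u i = 0) ∧
          2 ≤ Nat.card {i : Fin n // u i = d}) →
        (IsFacetOf n (PF n u) {x ∈ PF n u | ∑ i ∈ I, x i = topSum n u I.card} ↔
          I.card = 1 ∨ I.card = n)) ∧
      -- case (4): u has at least two distinct positive values; here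
      -- m₀ is the number of zeros of u and m_ℓ the number of coordinates equal
      -- to the largest value u_n.
      ((∃ i j, 0 < u i ∧ 0 < u j ∧ u i ≠ u j) →
        (IsFacetOf n (PF n u) {x ∈ PF n u | ∑ i ∈ I, x i = topSum n u I.card} ↔
          I.card = 1 ∨ I.card = n ∨
            (Nat.card {i : Fin n // u i = u ⟨n - 1, by omega⟩} + 1 ≤ I.card ∧
              I.card ≤ n - Nat.card {i : Fin n // u i = 0} - 1))) := by
  classical
  have hmaxpos : 0 < u ⟨n - 1, by omega⟩ := PFP.u_last_pos hmono hnonneg hn hne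
  have huniv_ne : (Finset.univ : Finset (Fin n)).Nonempty := ⟨⟨0, by omega⟩, Finset.mem_univ _⟩
  constructor
  · intro i
    exact PFP.facetA hmono hnonneg hn hmaxpos i
  · intro I hI
    have hk1 : 1 ≤ I.card := hI.card_pos
    have hkn : I.card ≤ n := by simpa using Finset.card_le_univ I
    refine ⟨?_, ?_, ?_, ?_⟩
    · -- case 1
      rintro ⟨d, hd, hud⟩
      constructor
      · intro hf
        by_contra hne1
        have hk2 : 2 ≤ I.card := by omega
        have hdim := PFP.not_facet_top hmono hn I hk2 (by rw [hud, hud])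
        rw [hf.2.2] at hdim
        omega
      · intro h1
        obtain ⟨i0, rfl⟩ := Finset.card_eq_one.mp h1
        apply PFP.isFacet_FI hmono hnonneg _ (Finset.singleton_nonempty i0)
        rcases le_or_gt 2 n with hn2 | hn1
        · exact PFP.dim_ge_singleton hmono hnonneg hn2 i0 (by rw [hud]; exact hd)
        · rw [show n - 1 = 0 by omega]
          exact Nat.zero_le _
    · -- case 2
      rintro ⟨d, hd, hz, hlast⟩
      constructor
      · intro hf
        by_contra hne2
        have hkn1 : I.card ≤ n - 1 := by omega
        have hdim := PFP.not_facet_bot hnonneg I hk1 hkn1 (fun i hi => hz i (by omega))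
        rw [hf.2.2] at hdim
        omega
      · intro hcard
        have hIuniv : I = Finset.univ := by
          apply (Finset.card_eq_iff_eq_univ I).mp
          rw [hcard, Fintype.card_fin]
        subst hIuniv
        apply PFP.isFacet_FI hmono hnonneg _ huniv_ne
        rcases le_or_gt 2 n with hn2 | hn1
        · apply PFP.dim_ge_univ hmono hnonneg hn2
          have h0 : u (⟨0, by omega⟩ : Fin n) = 0 := hz _ (by show (0 : ℕ) < n - 1; omega)
          have h2 : u (⟨n - 1, by omega⟩ : Fin n) = d := hlast
          rw [h0, h2]
          exact hd
        · rw [show n - 1 = 0 by omega]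
          exact Nat.zero_le _
    · -- case 3
      rintro ⟨d, hd, h01, ⟨iz, hiz⟩, hc2⟩
      have hS : 2 ≤ (Finset.univ.filter (fun i : Fin n => u i = d)).card := by
        rw [← PFP.natCard_eq]
        exact hc2
      have hn2 : 2 ≤ n := by
        have h5 := Finset.card_le_univ (Finset.univ.filter (fun i : Fin n => u i = d))
        rw [Fintype.card_fin] at h5
        omega
      obtain ⟨a, haS, b, hbS, hab⟩ := Finset.one_lt_card.mp hS
      have had : u a = d := (Finset.mem_filter.mp haS).2
      have hbd : u b = d := (Finset.mem_filter.mp hbS).2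
      have hsmall : ∃ c : Fin n, u c = d ∧ (c : ℕ) ≤ n - 2 := by
        have hane : (a : ℕ) ≠ (b : ℕ) := fun hh => hab (Fin.ext hh)
        have hia := a.isLt
        have hib := b.isLt
        rcases le_total (a : ℕ) (b : ℕ) with h | h
        · exact ⟨a, had, by omega⟩
        · exact ⟨b, hbd, by omega⟩
      obtain ⟨c, hcd, hcle⟩ := hsmall
      have hd2 : u (⟨n - 2, by omega⟩ : Fin n) = d := by
        have hle1 : d ≤ u (⟨n - 2, by omega⟩ : Fin n) := by
          rw [← hcd]
          exact hmono (Fin.le_def.mpr (by show (c : ℕ) ≤ n - 2; omega))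
        rcases h01 (⟨n - 2, by omega⟩ : Fin n) with h | h
        · rw [h] at hle1; linarith
        · exact h
      have hd1 : u (⟨n - 1, by omega⟩ : Fin n) = d := by
        have hle1 : d ≤ u (⟨n - 1, by omega⟩ : Fin n) := by
          rw [← hd2]
          exact hmono (Fin.le_def.mpr (by show n - 2 ≤ n - 1; omega))
        rcases h01 (⟨n - 1, by omega⟩ : Fin n) with h | h
        · rw [h] at hle1; linarith
        · exact h
      constructor
      · intro hf
        by_contra hne3
        push_neg at hne3
        obtain ⟨hne31, hne32⟩ := hne3
        have hk2 : 2 ≤ I.card := by omega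
        have hkn1 : I.card ≤ n - 1 := by omega
        rcases h01 (⟨n - I.card, by omega⟩ : Fin n) with hnk | hnk
        · have hdim := PFP.not_facet_bot hnonneg I hk1 hkn1 (fun i hi => by
            have hile : u i ≤ u (⟨n - I.card, by omega⟩ : Fin n) :=
              hmono (Fin.le_def.mpr (by show (i : ℕ) ≤ n - I.card; omega))
            have hi0 := hnonneg i
            rw [hnk] at hile
            linarith)
          rw [hf.2.2] at hdim
          omega
        · have hdim := PFP.not_facet_top hmono hn I hk2 (by rw [hnk, hd1])
          rw [hf.2.2] at hdim
          omega
      · rintro (h1 | hcard)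
        · obtain ⟨i0, rfl⟩ := Finset.card_eq_one.mp h1
          apply PFP.isFacet_FI hmono hnonneg _ (Finset.singleton_nonempty i0)
          exact PFP.dim_ge_singleton hmono hnonneg hn2 i0 (by rw [hd2]; exact hd)
        · have hIuniv : I = Finset.univ := by
            apply (Finset.card_eq_iff_eq_univ I).mp
            rw [hcard, Fintype.card_fin]
          subst hIuniv
          apply PFP.isFacet_FI hmono hnonneg _ huniv_ne
          apply PFP.dim_ge_univ hmono hnonneg hn2
          have h0 : u (⟨0, by omega⟩ : Fin n) = 0 := by
            have h5 : u (⟨0, by omega⟩ : Fin n) ≤ u iz :=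
              hmono (Fin.le_def.mpr (by show (0 : ℕ) ≤ (iz : ℕ); omega))
            have h6 := hnonneg (⟨0, by omega⟩ : Fin n)
            rw [hiz] at h5
            linarith
          rw [h0, hd1]
          exact hd
    · -- case 4
      rintro ⟨a, b, hua, hub, huab⟩
      have habne : a ≠ b := fun h => huab (by rw [h])
      have hn2 : 2 ≤ n := by
        have hia := a.isLt
        have hib := b.isLt
        by_contra hcon
        exact habne (Fin.ext (by omega))
      have hd2pos : 0 < u (⟨n - 2, by omega⟩ : Fin n) := by
        have hc : ∃ c : Fin n, 0 < u c ∧ (c : ℕ) ≤ n - 2 := by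
          have hane : (a : ℕ) ≠ (b : ℕ) := fun hh => habne (Fin.ext hh)
          have hia := a.isLt
          have hib := b.isLt
          rcases le_total (a : ℕ) (b : ℕ) with h | h
          · exact ⟨a, hua, by omega⟩
          · exact ⟨b, hub, by omega⟩
        obtain ⟨c, hc1, hc2'⟩ := hc
        exact lt_of_lt_of_le hc1 (hmono (Fin.le_def.mpr (by show (c : ℕ) ≤ n - 2; omega)))
      have h0lt : u (⟨0, by omega⟩ : Fin n) < u (⟨n - 1, by omega⟩ : Fin n) := by
        rcases lt_or_ge (u (⟨0, by omega⟩ : Fin n)) (u (⟨n - 1, by omega⟩ : Fin n)) with h | h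
        · exact h
        · exfalso
          have hall : ∀ i : Fin n, u i = u (⟨0, by omega⟩ : Fin n) := by
            intro i
            have hle1 : u (⟨0, by omega⟩ : Fin n) ≤ u i :=
              hmono (Fin.le_def.mpr (by show (0 : ℕ) ≤ (i : ℕ); omega))
            have hle2 : u i ≤ u (⟨n - 1, by omega⟩ : Fin n) := hmono (PFP.fin_le_last hn i)
            linarith
          exact huab (by rw [hall a, hall b])
      have hMeq : Nat.card {i : Fin n // u i = u ⟨n - 1, by omega⟩}
          = (Finset.univ.filter (fun i : Fin n => u i = u (⟨n - 1, by omega⟩ : Fin n))).card :=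
        PFP.natCard_eq _
      have hZeq : Nat.card {i : Fin n // u i = 0}
          = (Finset.univ.filter (fun i : Fin n => u i = 0)).card := PFP.natCard_eq _
      rw [hMeq, hZeq]
      have hM1 : 1 ≤ (Finset.univ.filter
          (fun i : Fin n => u i = u (⟨n - 1, by omega⟩ : Fin n))).card := by
        apply Finset.card_pos.mpr
        exact ⟨⟨n - 1, by omega⟩, Finset.mem_filter.mpr ⟨Finset.mem_univ _, rfl⟩⟩
      constructor
      · intro hf
        by_contra hne4
        push_neg at hne4
        obtain ⟨hne41, hne42, hne43⟩ := hne4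
        have hk2 : 2 ≤ I.card := by omega
        have hkn1 : I.card ≤ n - 1 := by omega
        rcases le_or_gt I.card (Finset.univ.filter
            (fun i : Fin n => u i = u (⟨n - 1, by omega⟩ : Fin n))).card with hMk | hMk
        · have htop : u (⟨n - I.card, by omega⟩ : Fin n) = u (⟨n - 1, by omega⟩ : Fin n) := by
            by_contra hneq
            have hlt2 : u (⟨n - I.card, by omega⟩ : Fin n) < u (⟨n - 1, by omega⟩ : Fin n) :=
              lt_of_le_of_ne (hmono (Fin.le_def.mpr (by show n - I.card ≤ n - 1; omega))) hneq
            have hsub : (Finset.univ.filter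
                (fun i : Fin n => u i = u (⟨n - 1, by omega⟩ : Fin n)))
                ⊆ Finset.univ.filter (fun i : Fin n => n - I.card + 1 ≤ (i : ℕ)) := by
              intro i hi
              have hiv := (Finset.mem_filter.mp hi).2
              refine Finset.mem_filter.mpr ⟨Finset.mem_univ _, ?_⟩
              by_contra hcon
              have hle3 : u i ≤ u (⟨n - I.card, by omega⟩ : Fin n) :=
                hmono (Fin.le_def.mpr (by show (i : ℕ) ≤ n - I.card; omega))
              rw [hiv] at hle3
              linarith
            have hcc := Finset.card_le_card hsub
            rw [PFP.card_filter_ge] at hcc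
            omega
          have hdim := PFP.not_facet_top hmono hn I hk2 htop
          rw [hf.2.2] at hdim
          omega
        · have hZk : n - (Finset.univ.filter (fun i : Fin n => u i = 0)).card ≤ I.card := by
            have h6 := hne43 (by omega)
            omega
          have hzall : ∀ i : Fin n, (i : ℕ) < n - I.card → u i = 0 := by
            have hz1 : u (⟨n - I.card - 1, by omega⟩ : Fin n) = 0 := by
              by_contra hcon
              have hposc : 0 < u (⟨n - I.card - 1, by omega⟩ : Fin n) :=
                lt_of_le_of_ne (hnonneg _) (Ne.symm hcon)
              have hsub : (Finset.univ.filter (fun i : Fin n => u i = 0))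
                  ⊆ Finset.univ.filter (fun i : Fin n => (i : ℕ) < n - I.card - 1) := by
                intro i hi
                have hiv := (Finset.mem_filter.mp hi).2
                refine Finset.mem_filter.mpr ⟨Finset.mem_univ _, ?_⟩
                by_contra hcon2
                have hle3 : u (⟨n - I.card - 1, by omega⟩ : Fin n) ≤ u i :=
                  hmono (Fin.le_def.mpr (by show n - I.card - 1 ≤ (i : ℕ); omega))
                rw [hiv] at hle3
                linarith
              have hcc := Finset.card_le_card hsub
              rw [PFP.card_filter_lt n (n - I.card - 1) (by omega)] at hcc
              omega
            intro i hi
            have h4 : u i ≤ u (⟨n - I.card - 1, by omega⟩ : Fin n) :=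
              hmono (Fin.le_def.mpr (by show (i : ℕ) ≤ n - I.card - 1; omega))
            have h5 := hnonneg i
            rw [hz1] at h4
            linarith
          have hdim := PFP.not_facet_bot hnonneg I hk1 hkn1 hzall
          rw [hf.2.2] at hdim
          omega
      · rintro (h1 | hcard | ⟨hm1, hm2⟩)
        · obtain ⟨i0, rfl⟩ := Finset.card_eq_one.mp h1
          apply PFP.isFacet_FI hmono hnonneg _ (Finset.singleton_nonempty i0)
          exact PFP.dim_ge_singleton hmono hnonneg hn2 i0 hd2pos
        · have hIuniv : I = Finset.univ := by
            apply (Finset.card_eq_iff_eq_univ I).mp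
            rw [hcard, Fintype.card_fin]
          subst hIuniv
          apply PFP.isFacet_FI hmono hnonneg _ huniv_ne
          exact PFP.dim_ge_univ hmono hnonneg hn2 h0lt
        · have hk2 : 2 ≤ I.card := by omega
          have hkn1 : I.card ≤ n - 1 := by omega
          obtain ⟨i0, hi0⟩ := hI
          apply PFP.isFacet_FI hmono hnonneg _ ⟨i0, hi0⟩
          apply PFP.dim_ge_mid hmono hnonneg I hi0 hk2 hkn1
          · have hlt2 : u (⟨n - I.card, by omega⟩ : Fin n) < u (⟨n - 1, by omega⟩ : Fin n) := by
              have hle2 : u (⟨n - I.card, by omega⟩ : Fin n) ≤ u (⟨n - 1, by omega⟩ : Fin n) :=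
                hmono (Fin.le_def.mpr (by show n - I.card ≤ n - 1; omega))
              rcases lt_or_eq_of_le hle2 with h | h
              · exact h
              · exfalso
                have hsub : Finset.univ.filter (fun i : Fin n => n - I.card ≤ (i : ℕ))
                    ⊆ Finset.univ.filter
                      (fun i : Fin n => u i = u (⟨n - 1, by omega⟩ : Fin n)) := by
                  intro i hi
                  have hiv := (Finset.mem_filter.mp hi).2
                  refine Finset.mem_filter.mpr ⟨Finset.mem_univ _, ?_⟩
                  have hle3 : u (⟨n - I.card, by omega⟩ : Fin n) ≤ u i :=
                    hmono (Fin.le_def.mpr (by show n - I.card ≤ (i : ℕ); omega))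
                  have hle4 : u i ≤ u (⟨n - 1, by omega⟩ : Fin n) := hmono (PFP.fin_le_last hn i)
                  linarith
                have hcc := Finset.card_le_card hsub
                rw [PFP.card_filter_ge] at hcc
                omega
            exact hlt2
          · have hpos2 : 0 < u (⟨n - I.card - 1, by omega⟩ : Fin n) := by
              rcases lt_or_eq_of_le (hnonneg (⟨n - I.card - 1, by omega⟩ : Fin n)) with h | h
              · exact h
              · exfalso
                have hsub : Finset.univ.filter (fun i : Fin n => (i : ℕ) < n - I.card)
                    ⊆ Finset.univ.filter (fun i : Fin n => u i = 0) := by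
                  intro i hi
                  have hiv := (Finset.mem_filter.mp hi).2
                  refine Finset.mem_filter.mpr ⟨Finset.mem_univ _, ?_⟩
                  have hle3 : u i ≤ u (⟨n - I.card - 1, by omega⟩ : Fin n) :=
                    hmono (Fin.le_def.mpr (by show (i : ℕ) ≤ n - I.card - 1; omega))
                  have h5 := hnonneg i
                  linarith
                have hcc := Finset.card_le_card hsub
                rw [PFP.card_filter_lt n (n - I.card) (by omega)] at hcc
                omega
            exact hpos2
end
end

section
/- The parking function polytope decomposes as a Minkowski sum of dilated parking function polytopes of 0/1-vectors: PF(u) = u_1 · PF(1_n) + Σ_{k=1}^{n−1} (u_{k+1} − u_k) · PF(1_{n−k}), where + denotes Minkowski sum of sets and λ·A = {λ a : a ∈ A}. -/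
noncomputable section

open Pointwise

/-- The vector `1_k ∈ ℝⁿ` whose last `k` coordinates equal `1` and whose first
`n - k` coordinates equal `0`. -/
def onevec (n k : ℕ) : Fin n → ℝ := fun i => if n - k ≤ (i : ℕ) then 1 else 0

/-- The coordinates of `u`, extended by `0` outside the index range
(so `Uext n u k = u_{k+1}` in 1-indexed notation, for `k < n`). -/
def Uext (n : ℕ) (u : Fin n → ℝ) : ℕ → ℝ := fun k => if h : k < n then u ⟨k, h⟩ else 0

/-- Helper: a finset with card > i contains an element ≥ i. -/
lemma exists_ge_of_card {n : ℕ} (T : Finset (Fin n)) (i : Fin n) (h : (i : ℕ) < T.card) :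
    ∃ ℓ ∈ T, i ≤ ℓ := by
  by_contra hc
  push_neg at hc
  have h1 : T.image Fin.val ⊆ Finset.range i := by
    intro j hj
    simp only [Finset.mem_image] at hj
    obtain ⟨ℓ, hℓ, rfl⟩ := hj
    exact Finset.mem_range.2 (hc ℓ hℓ)
  have h2 : (T.image Fin.val).card = T.card :=
    Finset.card_image_of_injective _ Fin.val_injective
  have := Finset.card_le_card h1
  rw [h2, Finset.card_range] at this
  omega

/-- Sorting a vector that is dominated (after a permutation) by a monotone u. -/
lemma sorted_le {n : ℕ} (u a : Fin n → ℝ) (hu : Monotone u) (σ : Equiv.Perm (Fin n))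
    (hle : ∀ i, a (σ i) ≤ u i) : ∀ i, a (Tuple.sort a i) ≤ u i := by
  intro i
  set τ := Tuple.sort a with hτ
  -- find ℓ ≥ i with σ.symm (τ ℓ) ≤ i
  have key : ∃ ℓ : Fin n, i ≤ ℓ ∧ σ.symm (τ ℓ) ≤ i := by
    by_contra hc
    push_neg at hc
    have hmap : ∀ ℓ ∈ Finset.univ.filter (fun ℓ : Fin n => i ≤ ℓ),
        σ.symm (τ ℓ) ∈ Finset.univ.filter (fun ℓ : Fin n => i < ℓ) := by
      intro ℓ hℓ
      simp only [Finset.mem_filter, Finset.mem_univ, true_and] at hℓ ⊢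
      exact hc ℓ hℓ
    have hinj : Set.InjOn (fun ℓ => σ.symm (τ ℓ))
        ↑(Finset.univ.filter (fun ℓ : Fin n => i ≤ ℓ)) := by
      intro x _ y _ hxy
      simpa using hxy
    have hcard := Finset.card_le_card_of_injOn _ hmap hinj
    have hss : Finset.univ.filter (fun ℓ : Fin n => i < ℓ) ⊂
        Finset.univ.filter (fun ℓ : Fin n => i ≤ ℓ) := by
      refine Finset.ssubset_iff_of_subset ?_ |>.2 ⟨i, ?_, ?_⟩
      · intro x hx
        simp only [Finset.mem_filter, Finset.mem_univ, true_and] at hx ⊢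
        exact le_of_lt hx
      · simp
      · simp
    have := Finset.card_lt_card hss
    omega
  obtain ⟨ℓ, hiℓ, hℓi⟩ := key
  calc a (τ i) ≤ a (τ ℓ) := Tuple.monotone_sort a hiℓ
    _ = a (σ (σ.symm (τ ℓ))) := by rw [Equiv.apply_symm_apply]
    _ ≤ u (σ.symm (τ ℓ)) := hle _
    _ ≤ u i := hu hℓi

lemma isParking_of_perm_le {n : ℕ} (u a : Fin n → ℝ) (hu : Monotone u)
    (ha : ∀ i, 0 ≤ a i) (σ : Equiv.Perm (Fin n)) (h : ∀ i, a (σ i) ≤ u i) :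
    IsParkingFunction n u a :=
  ⟨ha, Tuple.sort a, Tuple.monotone_sort a, sorted_le u a hu σ h⟩

/-- A vector in [0,1]ⁿ with at least n - m zeros is a `onevec n m`-parking function. -/
lemma isParking_onevec {n : ℕ} (m : ℕ) (v : Fin n → ℝ)
    (h0 : ∀ j, 0 ≤ v j) (h1 : ∀ j, v j ≤ 1) (Z : Finset (Fin n))
    (hZ : ∀ j ∈ Z, v j = 0) (hcard : n - m ≤ Z.card) :
    IsParkingFunction n (onevec n m) v := by
  refine ⟨h0, Tuple.sort v, Tuple.monotone_sort v, fun i => ?_⟩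
  unfold onevec
  by_cases hi : n - m ≤ (i : ℕ)
  · rw [if_pos hi]; exact h1 _
  · rw [if_neg hi]
    push_neg at hi
    have hic : (i : ℕ) < Z.card := lt_of_lt_of_le hi hcard
    have : ∃ ℓ ∈ Z.image (Tuple.sort v).symm, i ≤ ℓ := by
      refine exists_ge_of_card _ _ ?_
      rwa [Finset.card_image_of_injective _ (Tuple.sort v).symm.injective]
    obtain ⟨ℓ, hℓ, hiℓ⟩ := this
    simp only [Finset.mem_image] at hℓ
    obtain ⟨j, hj, rfl⟩ := hℓ
    calc v (Tuple.sort v i) ≤ v (Tuple.sort v ((Tuple.sort v).symm j)) :=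
          Tuple.monotone_sort v hiℓ
      _ = v j := by rw [Equiv.apply_symm_apply]
      _ = 0 := hZ j hj
variable {E : Type*} [AddCommGroup E] [Module ℝ E]

lemma mem_setSum {s : Finset ℕ} {G : ℕ → Set E} {g : ℕ → E}
    (h : ∀ k ∈ s, g k ∈ G k) : (∑ k ∈ s, g k) ∈ (∑ k ∈ s, G k) := by
  classical
  induction s using Finset.induction_on with
  | empty => simp [Set.mem_zero]
  | insert a s' hns ih =>
    rw [Finset.sum_insert hns, Finset.sum_insert hns]
    exact Set.add_mem_add (h a (Finset.mem_insert_self _ _))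
      (ih fun k hk => h k (Finset.mem_insert_of_mem hk))

lemma setSum_mem {s : Finset ℕ} {G : ℕ → Set E} {x : E}
    (h : x ∈ ∑ k ∈ s, G k) :
    ∃ g : ℕ → E, (∀ k ∈ s, g k ∈ G k) ∧ x = ∑ k ∈ s, g k := by
  classical
  induction s using Finset.induction_on generalizing x with
  | empty =>
    refine ⟨0, by simp, ?_⟩
    simpa [Set.mem_zero] using h
  | insert a s' hns ih =>
    rw [Finset.sum_insert hns] at h
    obtain ⟨y, hy, z, hz, rfl⟩ := Set.mem_add.1 h
    obtain ⟨g, hg, rfl⟩ := ih hz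
    refine ⟨Function.update g a y, ?_, ?_⟩
    · intro k hk
      rcases Finset.mem_insert.1 hk with rfl | hk'
      · simp [hy]
      · rw [Function.update_of_ne (by rintro rfl; exact hns hk')]
        exact hg k hk'
    · rw [Finset.sum_insert hns, Function.update_self]
      congr 1
      exact Finset.sum_congr rfl fun k hk =>
        (Function.update_of_ne (by rintro rfl; exact hns hk) _ _).symm

lemma convex_setSum {s : Finset ℕ} {G : ℕ → Set E} (h : ∀ k ∈ s, Convex ℝ (G k)) :
    Convex ℝ (∑ k ∈ s, G k) := by
  classical
  induction s using Finset.induction_on with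
  | empty =>
    rw [Finset.sum_empty]
    have : (0 : Set E) = {0} := rfl
    rw [this]; exact convex_singleton 0
  | insert a s' hns ih =>
    rw [Finset.sum_insert hns]
    exact (h a (Finset.mem_insert_self _ _)).add (ih fun k hk => h k (Finset.mem_insert_of_mem hk))

lemma f_eq_sum {n : ℕ} (f : (Fin n → ℝ) →L[ℝ] ℝ) (z : Fin n → ℝ) :
    f z = ∑ j, z j * f (Pi.single j 1) := by
  conv_lhs => rw [← Finset.univ_sum_single z]
  rw [map_sum]
  refine Finset.sum_congr rfl fun j _ => ?_
  have : Pi.single j (z j) = z j • (Pi.single j (1:ℝ) : Fin n → ℝ) := by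
    rw [← Pi.single_smul, smul_eq_mul, mul_one]
  rw [this, map_smul, smul_eq_mul]

/-- sum of s over a set of card ≤ m is at most sum of s over top indices, s monotone nonneg -/
lemma sum_le_top {n m : ℕ} (hm1 : 1 ≤ m) (hmn : m ≤ n) (s : Fin n → ℝ)
    (hs : Monotone s) (hs0 : ∀ i, 0 ≤ s i) (J : Finset (Fin n)) (hJ : J.card ≤ m) :
    ∑ i ∈ J, s i ≤ ∑ i ∈ Finset.univ.filter (fun i : Fin n => n - m ≤ (i : ℕ)), s i := by
  set Top := Finset.univ.filter (fun i : Fin n => n - m ≤ (i : ℕ)) with hTop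
  have hpivot : n - m < n := by omega
  set B : ℝ := s ⟨n - m, hpivot⟩ with hB
  have hTopcard : m ≤ Top.card := by
    have : ∀ l ∈ (Finset.univ : Finset (Fin m)), (⟨n - m + (l : ℕ), by omega⟩ : Fin n) ∈ Top := by
      intro l _
      simp only [hTop, Finset.mem_filter, Finset.mem_univ, true_and]
      omega
    have hinj : Set.InjOn (fun l : Fin m => (⟨n - m + (l : ℕ), by omega⟩ : Fin n))
        ↑(Finset.univ : Finset (Fin m)) := by
      intro x _ y _ hxy
      have : n - m + (x : ℕ) = n - m + (y : ℕ) := congrArg Fin.val hxy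
      exact Fin.val_injective (by omega)
    have := Finset.card_le_card_of_injOn _ this hinj
    simpa using this
  -- split
  have hsplit1 : ∑ i ∈ J, s i = ∑ i ∈ J ∩ Top, s i + ∑ i ∈ J \ Top, s i := by
    rw [← Finset.sum_inter_add_sum_sdiff]
  have hsplit2 : ∑ i ∈ Top, s i = ∑ i ∈ Top ∩ J, s i + ∑ i ∈ Top \ J, s i := by
    rw [← Finset.sum_inter_add_sum_sdiff]
  rw [hsplit1, hsplit2, Finset.inter_comm]
  have hcards : (J \ Top).card ≤ (Top \ J).card := by
    have h1 : (J \ Top).card = J.card - (J ∩ Top).card := Finset.card_sdiff_add_card_inter J Top ▸ by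
      have := Finset.card_sdiff_add_card_inter J Top
      omega
    have h2 : (Top \ J).card = Top.card - (Top ∩ J).card := by
      have := Finset.card_sdiff_add_card_inter Top J
      omega
    have h3 : (J ∩ Top).card = (Top ∩ J).card := by rw [Finset.inter_comm]
    have h4 : (J ∩ Top).card ≤ J.card := Finset.card_le_card (Finset.inter_subset_left)
    omega
  have hd : ∑ i ∈ J \ Top, s i ≤ (J \ Top).card • B := by
    refine Finset.sum_le_card_nsmul _ _ _ fun i hi => ?_
    have : ¬ (n - m ≤ (i : ℕ)) := by
      have := (Finset.mem_sdiff.1 hi).2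
      simpa [hTop] using this
    refine hs ?_
    rw [Fin.le_def]
    simp only []
    omega
  have ht : (Top \ J).card • B ≤ ∑ i ∈ Top \ J, s i := by
    refine Finset.card_nsmul_le_sum _ _ _ fun i hi => ?_
    have : n - m ≤ (i : ℕ) := by
      have := (Finset.mem_sdiff.1 hi).1
      simpa [hTop] using this
    refine hs ?_
    rw [Fin.le_def]
    simpa using this
  have hB0 : 0 ≤ B := hs0 _
  have : (J \ Top).card • B ≤ (Top \ J).card • B := by
    rw [nsmul_eq_mul, nsmul_eq_mul]
    exact mul_le_mul_of_nonneg_right (by exact_mod_cast hcards) hB0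
  linarith

lemma onevec_le_one {n m : ℕ} (i : Fin n) : onevec n m i ≤ 1 := by
  unfold onevec; split <;> norm_num

lemma onevec_nonneg {n m : ℕ} (i : Fin n) : 0 ≤ onevec n m i := by
  unfold onevec; split <;> norm_num

lemma parking_bound {n m : ℕ} (hm1 : 1 ≤ m) (hmn : m ≤ n) (w : Fin n → ℝ)
    (ρ : Equiv.Perm (Fin n)) (hρ : Monotone (fun i => w (ρ i)))
    (a : Fin n → ℝ) (ha : IsParkingFunction n (onevec n m) a) :
    ∑ j, w j * a j ≤ ∑ i, max (w (ρ i)) 0 * onevec n m i := by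
  obtain ⟨ha0, σ, hσm, hσle⟩ := ha
  have hub : ∀ j, a j ≤ 1 := by
    intro j
    have := hσle (σ.symm j)
    rw [Equiv.apply_symm_apply] at this
    exact this.trans (onevec_le_one _)
  set s : Fin n → ℝ := fun i => max (w (ρ i)) 0 with hsdef
  have hs0 : ∀ i, 0 ≤ s i := fun i => le_max_right _ _
  have hsmono : Monotone s := fun i j h => max_le_max (hρ h) le_rfl
  have step1 : ∑ j, w j * a j ≤ ∑ j, max (w j) 0 * a j :=
    Finset.sum_le_sum fun j _ => mul_le_mul_of_nonneg_right (le_max_left _ _) (ha0 j)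
  have step2 : ∑ j, max (w j) 0 * a j = ∑ i, s i * a (ρ i) :=
    (Equiv.sum_comp ρ (fun j => max (w j) 0 * a j)).symm
  set J : Finset (Fin n) := Finset.univ.filter (fun i => a (ρ i) ≠ 0) with hJdef
  have step3 : ∑ i, s i * a (ρ i) = ∑ i ∈ J, s i * a (ρ i) := by
    rw [hJdef]
    refine (Finset.sum_filter_of_ne ?_).symm
    intro i _ h
    intro h0
    exact h (by rw [h0, mul_zero])
  have step4 : ∑ i ∈ J, s i * a (ρ i) ≤ ∑ i ∈ J, s i := by
    refine Finset.sum_le_sum fun i _ => ?_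
    calc s i * a (ρ i) ≤ s i * 1 := mul_le_mul_of_nonneg_left (hub _) (hs0 i)
      _ = s i := mul_one _
  have hJcard : J.card ≤ m := by
    set Top' : Finset (Fin n) := Finset.univ.filter (fun q : Fin n => n - m ≤ (q : ℕ)) with hT
    have hmap : ∀ i ∈ J, σ.symm (ρ i) ∈ Top' := by
      intro i hi
      simp only [hJdef, Finset.mem_filter, Finset.mem_univ, true_and] at hi
      simp only [hT, Finset.mem_filter, Finset.mem_univ, true_and]
      by_contra hq
      push_neg at hq
      have h1 : a (σ (σ.symm (ρ i))) ≤ 0 := by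
        have := hσle (σ.symm (ρ i))
        unfold onevec at this
        rwa [if_neg (by omega)] at this
      rw [Equiv.apply_symm_apply] at h1
      exact hi (le_antisymm h1 (ha0 _))
    have hinj : Set.InjOn (fun i => σ.symm (ρ i)) ↑J := fun x _ y _ hxy => by simpa using hxy
    have h1 := Finset.card_le_card_of_injOn _ hmap hinj
    have h2 : Top'.card ≤ m := by
      have hsub : Top'.image Fin.val ⊆ Finset.Ico (n - m) n := by
        intro j hj
        simp only [Finset.mem_image, hT, Finset.mem_filter, Finset.mem_univ, true_and] at hj
        obtain ⟨q, hq, rfl⟩ := hj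
        simp only [Finset.mem_Ico]
        exact ⟨hq, q.isLt⟩
      have := Finset.card_le_card hsub
      rwa [Finset.card_image_of_injective _ Fin.val_injective, Nat.card_Ico,
        Nat.sub_sub_self hmn] at this
    omega
  have step5 := sum_le_top hm1 hmn s hsmono hs0 J hJcard
  have step6 : ∑ i ∈ Finset.univ.filter (fun i : Fin n => n - m ≤ (i : ℕ)), s i
      = ∑ i, s i * onevec n m i := by
    have he : ∀ i : Fin n, s i * onevec n m i = if n - m ≤ (i : ℕ) then s i else 0 := by
      intro i
      unfold onevec
      split
      · rw [mul_one]
      · rw [mul_zero]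
    simp only [he]
    exact Finset.sum_filter _ _
  linarith [step1, step2.le, step3.le, step4, step5, step6.le]

lemma decomp_pointwise {n : ℕ} (u : Fin n → ℝ) (i : Fin n) :
    Uext n u 0 * onevec n n i +
      ∑ k ∈ Finset.range (n - 1), (Uext n u (k + 1) - Uext n u k) * onevec n (n - (k + 1)) i
      = u i := by
  have h1 : onevec n n i = 1 := by
    unfold onevec; rw [if_pos (by omega)]
  have h2 : ∑ k ∈ Finset.range (n - 1),
      (Uext n u (k + 1) - Uext n u k) * onevec n (n - (k + 1)) i
      = ∑ k ∈ Finset.range (n - 1),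
        (if k < (i : ℕ) then (Uext n u (k + 1) - Uext n u k) else 0) := by
    refine Finset.sum_congr rfl fun k hk => ?_
    have hk' := Finset.mem_range.1 hk
    unfold onevec
    have : n - (n - (k + 1)) = k + 1 := by omega
    rw [this]
    by_cases h : k < (i : ℕ)
    · rw [if_pos (by omega), if_pos h, mul_one]
    · rw [if_neg (by omega), if_neg h, mul_zero]
  rw [h1, h2, mul_one, Finset.sum_ite, Finset.sum_const, smul_zero, add_zero]
  have h3 : Finset.filter (fun k => k < (i : ℕ)) (Finset.range (n - 1)) =
      Finset.range (i : ℕ) := by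
    ext j
    simp only [Finset.mem_filter, Finset.mem_range]
    have := i.isLt
    omega
  rw [h3, Finset.sum_range_sub (Uext n u) (i : ℕ)]
  have h4 : Uext n u (i : ℕ) = u i := by
    unfold Uext
    rw [dif_pos i.isLt]
  rw [h4]
  ring

lemma isClosed_PF {n : ℕ} (u : Fin n → ℝ) (hu : Monotone u) (hnn : ∀ i, 0 ≤ u i) :
    IsClosed (PF n u) := by
  classical
  set S := {a | IsParkingFunction n u a} with hS
  set V : Set (Fin n → ℝ) := Set.pi Set.univ (fun _ => insert (0:ℝ) (Set.range u)) with hV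
  have hVfin : V.Finite := Set.Finite.pi (fun _ => (Set.finite_range u).insert 0)
  have hSsub : S ⊆ convexHull ℝ (V ∩ S) := by
    intro a ha
    obtain ⟨ha0, σ, hm, hle⟩ := ha
    have hmem : ∀ j, a j ∈ convexHull ℝ ({0, u (σ.symm j)} : Set ℝ) := by
      intro j
      rw [convexHull_pair, segment_eq_Icc (hnn _)]
      refine ⟨ha0 j, ?_⟩
      have := hle (σ.symm j)
      rwa [Equiv.apply_symm_apply] at this
    have hpi : a ∈ convexHull ℝ (Set.pi Set.univ (fun j => ({0, u (σ.symm j)} : Set ℝ))) :=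
      mem_convexHull_pi (fun j _ => hmem j)
    refine convexHull_mono ?_ hpi
    intro v hv
    have hv' : ∀ j, v j = 0 ∨ v j = u (σ.symm j) := by
      intro j
      have := hv j (Set.mem_univ j)
      simpa using this
    refine ⟨?_, ?_⟩
    · intro j _
      rcases hv' j with h | h
      · rw [h]; exact Set.mem_insert _ _
      · rw [h]; exact Set.mem_insert_of_mem _ ⟨_, rfl⟩
    · refine isParking_of_perm_le u v hu ?_ σ ?_
      · intro j
        rcases hv' j with h | h
        · rw [h]
        · rw [h]; exact hnn _
      · intro i
        rcases hv' (σ i) with h | h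
        · rw [h]; exact hnn _
        · rw [h, Equiv.symm_apply_apply]
  have heq : convexHull ℝ S = convexHull ℝ (V ∩ S) :=
    le_antisymm (convexHull_min hSsub (convex_convexHull ℝ _))
      (convexHull_mono Set.inter_subset_right)
  have : PF n u = convexHull ℝ (V ∩ S) := heq
  rw [this]
  exact (hVfin.inter_of_left S).isClosed_convexHull ℝ

/-- Minkowski sum decomposition:
`PF(u) = u₁ · PF(1_n) + ∑_{k=1}^{n-1} (u_{k+1} - u_k) · PF(1_{n-k})`. -/
theorem parking_polytope_minkowski_decomposition
    (n : ℕ) (hn : 1 ≤ n) (u : Fin n → ℝ)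
    (hmono : Monotone u) (hnonneg : ∀ i, 0 ≤ u i) (hne : u ≠ 0) :
    PF n u = Uext n u 0 • PF n (onevec n n) +
      ∑ k ∈ Finset.range (n - 1),
        (Uext n u (k + 1) - Uext n u k) • PF n (onevec n (n - (k + 1))) := by
  classical
  have hUval : ∀ k (h : k < n), Uext n u k = u ⟨k, h⟩ := fun k h => dif_pos h
  have hc0 : 0 ≤ Uext n u 0 := by rw [hUval 0 (by omega)]; exact hnonneg _
  have hck : ∀ k, k < n - 1 → 0 ≤ Uext n u (k + 1) - Uext n u k := by
    intro k hk
    rw [hUval (k+1) (by omega), hUval k (by omega), sub_nonneg]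
    exact hmono (by simp [Fin.le_def])
  apply Set.Subset.antisymm
  · -- PF n u ⊆ B
    have hBconv : Convex ℝ (Uext n u 0 • PF n (onevec n n) +
        ∑ k ∈ Finset.range (n - 1),
          (Uext n u (k + 1) - Uext n u k) • PF n (onevec n (n - (k + 1)))) := by
      refine Convex.add ((convex_convexHull ℝ _).smul _) (convex_setSum fun k _ => ?_)
      exact (convex_convexHull ℝ _).smul _
    refine convexHull_min ?_ hBconv
    intro a ha
    obtain ⟨ha0, σ, hm, hle⟩ := ha
    have haub : ∀ j, a j ≤ Uext n u (n - 1) := by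
      intro j
      rw [hUval (n-1) (by omega)]
      calc a j = a (σ (σ.symm j)) := by rw [Equiv.apply_symm_apply]
        _ ≤ u (σ.symm j) := hle _
        _ ≤ u ⟨n - 1, by omega⟩ := hmono (by rw [Fin.le_def]; simp; omega)
    set F : ℕ → (Fin n → ℝ) := fun k => fun j => min (a j) (Uext n u k) with hF
    have key : a = F 0 + ∑ k ∈ Finset.range (n - 1), (F (k + 1) - F k) := by
      funext j
      simp only [Pi.add_apply, Finset.sum_apply, Pi.sub_apply, hF]
      rw [Finset.sum_range_sub (fun k => min (a j) (Uext n u k)) (n-1)]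
      have : min (a j) (Uext n u (n-1)) = a j := min_eq_left (haub j)
      rw [this]; ring
    rw [key]
    refine Set.add_mem_add ?_ (mem_setSum fun k hk => ?_)
    · -- F 0 ∈ Uext n u 0 • PF n (onevec n n)
      by_cases h0 : Uext n u 0 = 0
      · have hF0 : F 0 = Uext n u 0 • (0 : Fin n → ℝ) := by
          funext j
          simp only [hF, h0, Pi.smul_apply, Pi.zero_apply, smul_eq_mul, mul_zero]
          exact min_eq_right (ha0 j)
        rw [hF0]
        refine Set.smul_mem_smul_set (subset_convexHull ℝ _ ?_)
        exact isParking_onevec n (0 : Fin n → ℝ) (fun _ => le_refl 0) (fun _ => zero_le_one)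
          ∅ (fun j h => absurd h (Finset.notMem_empty j)) (by simp)
      · have hpos : 0 < Uext n u 0 := lt_of_le_of_ne hc0 (Ne.symm h0)
        set b : Fin n → ℝ := fun j => min (a j) (Uext n u 0) / Uext n u 0 with hb
        have hF0 : F 0 = Uext n u 0 • b := by
          funext j
          simp only [hF, hb, Pi.smul_apply, smul_eq_mul]
          rw [mul_div_cancel₀ _ h0]
        rw [hF0]
        refine Set.smul_mem_smul_set (subset_convexHull ℝ _ ?_)
        refine isParking_onevec n b (fun j => ?_) (fun j => ?_) ∅
          (fun j h => absurd h (Finset.notMem_empty j)) (by simp)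
        · exact div_nonneg (le_min (ha0 j) hc0) hc0
        · rw [div_le_one hpos]; exact min_le_right _ _
    · -- F (k+1) - F k ∈ c k • PF n (onevec n (n - (k+1)))
      have hkr := Finset.mem_range.1 hk
      have hcknn := hck k hkr
      have hUle : Uext n u k ≤ Uext n u (k + 1) := by linarith
      by_cases hc0' : Uext n u (k + 1) - Uext n u k = 0
      · have hUeq : Uext n u (k + 1) = Uext n u k := by linarith
        have hFk : F (k + 1) - F k = (Uext n u (k + 1) - Uext n u k) • (0 : Fin n → ℝ) := by
          funext j
          simp only [hF, Pi.sub_apply, Pi.smul_apply, Pi.zero_apply, smul_zero, hUeq]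
          ring
        rw [hFk]
        refine Set.smul_mem_smul_set (subset_convexHull ℝ _ ?_)
        refine isParking_onevec (n - (k + 1)) (0 : Fin n → ℝ) (fun _ => le_refl 0)
          (fun _ => zero_le_one) Finset.univ (fun _ _ => rfl) ?_
        rw [Finset.card_univ, Fintype.card_fin]
        omega
      · have hpos : 0 < Uext n u (k + 1) - Uext n u k := lt_of_le_of_ne hcknn (Ne.symm hc0')
        set c := Uext n u (k + 1) - Uext n u k with hc
        set b : Fin n → ℝ :=
          fun j => (min (a j) (Uext n u (k + 1)) - min (a j) (Uext n u k)) / c with hb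
        have hFk : F (k + 1) - F k = c • b := by
          funext j
          simp only [hF, hb, Pi.sub_apply, Pi.smul_apply, smul_eq_mul]
          rw [mul_div_cancel₀ _ hc0']
        rw [hFk]
        refine Set.smul_mem_smul_set (subset_convexHull ℝ _ ?_)
        have hnum0 : ∀ j, 0 ≤ min (a j) (Uext n u (k + 1)) - min (a j) (Uext n u k) := by
          intro j
          rw [sub_nonneg]
          exact min_le_min le_rfl hUle
        have hnumc : ∀ j, min (a j) (Uext n u (k + 1)) - min (a j) (Uext n u k) ≤ c := by
          intro j
          rcases le_total (a j) (Uext n u k) with h | h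
          · rw [min_eq_left h, min_eq_left (h.trans hUle)]
            simp only [hc, sub_self]
            linarith
          · rw [min_eq_right h]
            have := min_le_right (a j) (Uext n u (k + 1))
            simp only [hc]
            linarith
        refine isParking_onevec (n - (k + 1)) b
          (fun j => div_nonneg (hnum0 j) hcknn)
          (fun j => by rw [div_le_one hpos]; exact hnumc j)
          ((Finset.univ.filter (fun i : Fin n => (i : ℕ) < k + 1)).image σ) ?_ ?_
        · intro j hj
          simp only [Finset.mem_image, Finset.mem_filter, Finset.mem_univ, true_and] at hj
          obtain ⟨i, hi, rfl⟩ := hj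
          have hai : a (σ i) ≤ Uext n u k := by
            rw [hUval k (by omega)]
            exact (hle i).trans (hmono (by rw [Fin.le_def]; simp; omega))
          simp only [hb]
          rw [min_eq_left (hai.trans hUle), min_eq_left hai, sub_self, zero_div]
        · rw [Finset.card_image_of_injective _ σ.injective]
          have hinj : Set.InjOn (fun l : Fin (k + 1) => (⟨(l : ℕ), by omega⟩ : Fin n))
              ↑(Finset.univ : Finset (Fin (k + 1))) := by
            intro x _ y _ hxy
            simp only [Fin.mk.injEq] at hxy
            exact Fin.val_injective hxy
          have hmap : ∀ l ∈ (Finset.univ : Finset (Fin (k + 1))),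
              (⟨(l : ℕ), by omega⟩ : Fin n) ∈
                Finset.univ.filter (fun i : Fin n => (i : ℕ) < k + 1) := by
            intro l _
            simp only [Finset.mem_filter, Finset.mem_univ, true_and]
            exact l.isLt
          have := Finset.card_le_card_of_injOn _ hmap hinj
          simp only [Finset.card_univ, Fintype.card_fin] at this
          omega
  · -- B ⊆ PF n u
    intro x hx
    by_contra hxP
    have hconv : Convex ℝ (PF n u) := by unfold PF; exact convex_convexHull ℝ _
    obtain ⟨f, cb, hfA, hcx⟩ :=
      geometric_hahn_banach_closed_point hconv (isClosed_PF u hmono hnonneg) hxP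
    set w : Fin n → ℝ := fun j => f (Pi.single j 1) with hw
    set ρ := Tuple.sort w with hρ
    have hρm : Monotone fun i => w (ρ i) := Tuple.monotone_sort w
    set s : Fin n → ℝ := fun i => max (w (ρ i)) 0 with hsdef
    set y : Fin n → ℝ := fun j => if 0 < w j then u (ρ.symm j) else 0 with hy
    have hyp : IsParkingFunction n u y := by
      refine isParking_of_perm_le u y hmono (fun j => ?_) ρ (fun i => ?_)
      · rw [hy]; dsimp only; split
        · exact hnonneg _
        · exact le_refl 0
      · rw [hy]; dsimp only; split
        · rw [Equiv.symm_apply_apply]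
        · exact hnonneg _
    have hfy : f y = ∑ i, s i * u i := by
      have h1 : f y = ∑ j, y j * w j := f_eq_sum f y
      have h2 : ∑ j, y j * w j = ∑ i, y (ρ i) * w (ρ i) :=
        (Equiv.sum_comp ρ (fun j => y j * w j)).symm
      rw [h1, h2]
      refine Finset.sum_congr rfl fun i _ => ?_
      by_cases hpos : 0 < w (ρ i)
      · have hyi : y (ρ i) = u i := by
          rw [hy]; dsimp only; rw [if_pos hpos, Equiv.symm_apply_apply]
        rw [hyi, hsdef]; dsimp only; rw [max_eq_left hpos.le]; ring
      · have hyi : y (ρ i) = 0 := by rw [hy]; dsimp only; rw [if_neg hpos]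
        rw [hyi, hsdef]; dsimp only; rw [max_eq_right (not_lt.1 hpos)]; ring
    have hMbound : ∀ (m : ℕ), 1 ≤ m → m ≤ n →
        ∀ p ∈ PF n (onevec n m), f p ≤ ∑ i, s i * onevec n m i := by
      intro m hm1 hmn p hp
      have hhalf : Convex ℝ {z : Fin n → ℝ | f z ≤ ∑ i, s i * onevec n m i} :=
        convex_halfSpace_le (IsLinearMap.mk f.map_add f.map_smul) _
      have hsub : PF n (onevec n m) ⊆ {z | f z ≤ ∑ i, s i * onevec n m i} := by
        refine convexHull_min ?_ hhalf
        intro a ha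
        have hb := parking_bound hm1 hmn w ρ hρm a ha
        simp only [Set.mem_setOf_eq]
        have h1 : f a = ∑ j, a j * w j := f_eq_sum f a
        have h2 : ∑ j, a j * w j = ∑ j, w j * a j :=
          Finset.sum_congr rfl (fun j _ => mul_comm _ _)
        rw [h1, h2]
        exact hb
      exact hsub hp
    obtain ⟨x0, hx0, z, hz, rfl⟩ := Set.mem_add.1 hx
    obtain ⟨g, hg, rfl⟩ := setSum_mem hz
    obtain ⟨p0, hp0, hx0e⟩ := Set.mem_smul_set.1 hx0
    have hgk : ∀ k ∈ Finset.range (n - 1), ∃ p ∈ PF n (onevec n (n - (k + 1))),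
        (Uext n u (k + 1) - Uext n u k) • p = g k :=
      fun k hk => Set.mem_smul_set.1 (hg k hk)
    have hfx : f (x0 + ∑ k ∈ Finset.range (n - 1), g k) ≤ ∑ i, s i * u i := by
      rw [map_add, map_sum]
      have h0 : f x0 ≤ Uext n u 0 * (∑ i, s i * onevec n n i) := by
        rw [← hx0e, map_smul, smul_eq_mul]
        exact mul_le_mul_of_nonneg_left (hMbound n hn le_rfl p0 hp0) hc0
      have hterm : ∀ k ∈ Finset.range (n - 1), f (g k) ≤
          (Uext n u (k + 1) - Uext n u k) * (∑ i, s i * onevec n (n - (k + 1)) i) := by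
        intro k hk
        obtain ⟨p, hp, hpe⟩ := hgk k hk
        rw [← hpe, map_smul, smul_eq_mul]
        have hkr := Finset.mem_range.1 hk
        exact mul_le_mul_of_nonneg_left
          (hMbound (n - (k + 1)) (by omega) (by omega) p hp) (hck k hkr)
      have hsum := Finset.sum_le_sum hterm
      have htotal : Uext n u 0 * (∑ i, s i * onevec n n i) +
          ∑ k ∈ Finset.range (n - 1), (Uext n u (k + 1) - Uext n u k) *
            (∑ i, s i * onevec n (n - (k + 1)) i)
          = ∑ i, s i * u i := by
        simp_rw [Finset.mul_sum]
        rw [Finset.sum_comm]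
        rw [← Finset.sum_add_distrib]
        refine Finset.sum_congr rfl fun i _ => ?_
        rw [← decomp_pointwise u i, mul_add, Finset.mul_sum]
        congr 1
        · ring
        · exact Finset.sum_congr rfl fun k _ => by ring
      linarith [add_le_add h0 hsum]
    have hylt : f y < cb := hfA y (subset_convexHull ℝ _ hyp)
    rw [hfy] at hylt
    linarith [hcx, hfx, hylt]
end
end
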